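/- arXiv:2002.10109 — 5 statements merged into one kernel-verified Lean document; each statement's English description precedes it below -/
import Mathlib

section
/- (Vizing's Adjacency Lemma, part (a)) Let G be a Δ-critical graph and let u and v be adjacent vertices of G with d(v) = k. If k < Δ, then u is adjacent to at least Δ − k + 1 vertices of degree Δ. -/
open SimpleGraph Finset

variable {V : Type*}

/-- `G` has a `K₅` minor: five pairwise disjoint nonempty connected branch sets,
pairwise joined by an edge of `G`. -/
def SimpleGraph.HasK5Minor (G : SimpleGraph V) : Prop :=
  ∃ S : Fin 5 → Set V,
    (∀ i, (S i).Nonempty) ∧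
    (∀ i, (G.induce (S i)).Connected) ∧
    (∀ i j, i ≠ j → Disjoint (S i) (S j)) ∧
    (∀ i j, i ≠ j → ∃ u ∈ S i, ∃ v ∈ S j, G.Adj u v)

/-- The chromatic index of `G`, as the chromatic number of its line graph. -/
noncomputable def SimpleGraph.chromaticIndex (G : SimpleGraph V) : ℕ∞ :=
  G.lineGraph.chromaticNumber

/-- `G` is a `Δ`-critical graph (`Δ = G.maxDegree`): it is connected and class 2,
and deleting any edge decreases the chromatic index. -/
def SimpleGraph.IsDeltaCritical [Fintype V] (G : SimpleGraph V) [DecidableRel G.Adj] : Prop :=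
  G.Connected ∧ G.chromaticIndex = (G.maxDegree : ℕ∞) + 1 ∧
    ∀ e ∈ G.edgeSet, (G.deleteEdges {e}).chromaticIndex < G.chromaticIndex

/-- The neighborhood `N(X)` of a set of vertices `X`. -/
def SimpleGraph.setNbhd (G : SimpleGraph V) (X : Set V) : Set V :=
  {v | v ∉ X ∧ ∃ u ∈ X, G.Adj u v}

namespace VALproof

open scoped Classical

variable (G : SimpleGraph V)

/-- Partial proper edge coloring: all edges outside `D` get colors `< n`, and adjacent
colored edges get distinct colors. -/
def PC (n : ℕ) (D : Set (Sym2 V)) (c : Sym2 V → ℕ) : Prop :=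
  (∀ e ∈ G.edgeSet, e ∉ D → c e < n) ∧
  ∀ ⦃a b b' : V⦄, G.Adj a b → G.Adj a b' → b ≠ b' → s(a,b) ∉ D → s(a,b') ∉ D →
    c s(a,b) ≠ c s(a,b')

/-- Color `γ` is missing at `x`. -/
def Miss (D : Set (Sym2 V)) (c : Sym2 V → ℕ) (x : V) (γ : ℕ) : Prop :=
  ∀ y, G.Adj x y → s(x,y) ∉ D → c s(x,y) ≠ γ

variable (u v : V)

/-- The Kempe (α,γ)-subgraph (excluding the uncolored edge `uv`). -/
def KG (c : Sym2 V → ℕ) (α γ : ℕ) : SimpleGraph V where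
  Adj x y := G.Adj x y ∧ s(x,y) ∉ ({s(u,v)} : Set (Sym2 V)) ∧ (c s(x,y) = α ∨ c s(x,y) = γ)
  symm := by
    refine ⟨fun x y h => ?_⟩
    have e : s(y,x) = s(x,y) := Sym2.eq_swap
    refine ⟨h.1.symm, ?_, ?_⟩
    · rw [e]; exact h.2.1
    · rw [e]; exact h.2.2
  loopless := ⟨fun x h => G.loopless.irrefl x h.1⟩

/-- Kempe swap of colors α,γ on the component of `b₀`. -/
noncomputable def ksw (c : Sym2 V → ℕ) (α γ : ℕ) (b₀ : V) : Sym2 V → ℕ :=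
  fun e =>
    if (∃ x y, e = s(x,y) ∧ (KG G u v c α γ).Adj x y ∧ (KG G u v c α γ).Reachable b₀ x)
    then (if c e = α then γ else α) else c e

/-- Fan paths at `u` starting from `v`. -/
inductive FP (c : Sym2 V → ℕ) : List V → V → Prop
  | base : FP c [v] v
  | step {P : List V} {x z : V} {γ : ℕ} : FP c P x → Miss G {s(u,v)} c x γ →
      G.Adj u z → c s(u,z) = γ → z ∉ P → FP c (P ++ [z]) z


section Lemmas

variable {G : SimpleGraph V} {u v : V}

lemma edge_ne_of_ne {x w a b : V} (hxa : x ≠ a) (hxb : x ≠ b) : s(x,w) ≠ s(a,b) := by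
  intro h
  rcases Sym2.eq_iff.mp h with ⟨h1, h2⟩ | ⟨h1, h2⟩
  exacts [hxa h1, hxb h1]

lemma FP_mem_adj {c P x} (h : FP G u v c P x) (huv : G.Adj u v) :
    ∀ y ∈ P, G.Adj u y := by
  induction h with
  | base => intro y hy; rw [List.mem_singleton] at hy; rwa [hy]
  | step hfp hmiss hadj hc hz ih =>
    intro y hy
    rcases List.mem_append.mp hy with hy | hy
    · exact ih y hy
    · rw [List.mem_singleton] at hy; rwa [hy]

lemma FP_v_mem {c P x} (h : FP G u v c P x) : v ∈ P := by
  induction h with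
  | base => exact List.mem_singleton_self v
  | step hfp hmiss hadj hc hz ih => exact List.mem_append.mpr (Or.inl ih)

lemma FP_end_mem {c P x} (h : FP G u v c P x) : x ∈ P := by
  cases h with
  | base => exact List.mem_singleton_self v
  | step hfp hmiss hadj hc hz =>
    exact List.mem_append.mpr (Or.inr (List.mem_singleton_self _))

lemma FP_prefix {c P x} (h : FP G u v c P x) : ∀ y ∈ P, ∃ Q, FP G u v c Q y := by
  induction h with
  | base =>
    intro y hy; rw [List.mem_singleton] at hy; exact ⟨[v], by rw [hy]; exact FP.base⟩
  | step hfp hmiss hadj hc hz ih =>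
    intro y hy
    rcases List.mem_append.mp hy with hy | hy
    · exact ih y hy
    · rw [List.mem_singleton] at hy; subst hy
      exact ⟨_, FP.step hfp hmiss hadj hc hz⟩

lemma FP_transfer {c c' : Sym2 V → ℕ} {P x} (h : FP G u v c P x)
    (hM : ∀ y ∈ P, ∀ δ, Miss G {s(u,v)} c y δ → Miss G {s(u,v)} c' y δ)
    (hE : ∀ w ∈ P, c' s(u,w) = c s(u,w)) : FP G u v c' P x := by
  induction h with
  | base => exact FP.base
  | @step P x z γ hfp hmiss hadj hc hz ih =>
    have hsub : ∀ y ∈ P, y ∈ P ++ [z] := fun y hy => List.mem_append.mpr (Or.inl hy)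
    refine FP.step (ih (fun y hy δ => hM y (hsub y hy) δ) (fun w hw => hE w (hsub w hw)))
      (hM x (hsub x (FP_end_mem hfp)) γ hmiss) hadj ?_ hz
    rw [hE z (List.mem_append.mpr (Or.inr (List.mem_singleton_self z)))]
    exact hc

lemma Miss_of_eq_on {D : Set (Sym2 V)} {c c' : Sym2 V → ℕ} {x : V} {γ : ℕ}
    (h : ∀ w, G.Adj x w → s(x,w) ∉ D → c' s(x,w) = c s(x,w)) (hm : Miss G D c x γ) :
    Miss G D c' x γ := fun y hy hD => by rw [h y hy hD]; exact hm y hy hD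

lemma PC_update {n : ℕ} {D : Set (Sym2 V)} {c : Sym2 V → ℕ} {x y : V} {γ : ℕ}
    (hpc : PC G n D c) (hxy : G.Adj x y) (hγ : γ < n)
    (hmx : Miss G D c x γ) (hmy : Miss G D c y γ) :
    PC G n (D \ {s(x,y)}) (Function.update c (s(x,y)) γ) := by
  constructor
  · intro e he heD
    by_cases h : e = s(x,y)
    · subst h; rw [Function.update_self]; exact hγ
    · rw [Function.update_of_ne h]
      exact hpc.1 e he (fun hD => heD ⟨hD, h⟩)
  · intro a b b' hab hab' hne h1D h2D
    have hee : s(a,b) ≠ s(a,b') := fun h => hne (Sym2.congr_right.mp h)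
    by_cases h1 : s(a,b) = s(x,y) <;> by_cases h2 : s(a,b') = s(x,y)
    · exact absurd (h1.trans h2.symm) hee
    · rw [h1, Function.update_self, Function.update_of_ne h2]
      have h2D' : s(a,b') ∉ D := fun hD => h2D ⟨hD, h2⟩
      rcases Sym2.eq_iff.mp h1 with ⟨ha, hb⟩ | ⟨ha, hb⟩
      · subst ha; exact fun h => hmx b' hab' h2D' h.symm
      · subst ha; exact fun h => hmy b' hab' h2D' h.symm
    · rw [h2, Function.update_self, Function.update_of_ne h1]
      have h1D' : s(a,b) ∉ D := fun hD => h1D ⟨hD, h1⟩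
      rcases Sym2.eq_iff.mp h2 with ⟨ha, hb⟩ | ⟨ha, hb⟩
      · subst ha; exact hmx b hab h1D'
      · subst ha; exact hmy b hab h1D'
    · rw [Function.update_of_ne h1, Function.update_of_ne h2]
      exact hpc.2 hab hab' hne (fun hD => h1D ⟨hD, h1⟩) (fun hD => h2D ⟨hD, h2⟩)


lemma L_main {n : ℕ} (huv : G.Adj u v) (Hnc : ∀ c, ¬ PC G n ∅ c) :
    ∀ (t : ℕ) (c : Sym2 V → ℕ), PC G n {s(u,v)} c → ∀ {P : List V} {x : V} {γ : ℕ},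
      FP G u v c P x → P.length ≤ t → γ < n →
      Miss G {s(u,v)} c x γ → Miss G {s(u,v)} c u γ → False := by
  intro t
  induction t with
  | zero =>
    intro c hpc P x γ hfp hlen _ _ _
    have : v ∈ P := FP_v_mem hfp
    have : P ≠ [] := List.ne_nil_of_mem this
    exact this (List.length_eq_zero_iff.mp (Nat.le_zero.mp hlen))
  | succ t ih =>
    intro c hpc P x γ hfp hlen hγ hmx hmu
    cases hfp with
    | base =>
      have h' := PC_update hpc huv hγ hmu hmx
      rw [Set.diff_self] at h'
      exact Hnc _ h'
    | @step P' x' x β hfp' hmiss hadj hcz hz =>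
      have hvP : v ∈ P' := FP_v_mem hfp'
      have hzv : x ≠ v := fun h => hz (h ▸ hvP)
      have hsne : s(u,x) ≠ s(u,v) := fun h => hzv (Sym2.congr_right.mp h)
      have hszD : s(u,x) ∉ ({s(u,v)} : Set (Sym2 V)) := by
        rw [Set.mem_singleton_iff]; exact hsne
      have hlen' : P'.length ≤ t := by
        rw [List.length_append, List.length_singleton] at hlen; omega
      by_cases hbγ : β = γ
      · exact ih c hpc hfp' hlen' hγ (hbγ ▸ hmiss) hmu
      · set c₁ := Function.update c (s(u,x)) γ with hc₁
        have hpc₁ : PC G n {s(u,v)} c₁ := by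
          have h' := PC_update hpc hadj hγ hmu hmx
          rwa [Set.diff_singleton_eq_self (by rw [Set.mem_singleton_iff]; exact hsne)] at h'
        have hE : ∀ w ∈ P', c₁ s(u,w) = c s(u,w) := by
          intro w hw
          have : w ≠ x := fun h => hz (h ▸ hw)
          exact Function.update_of_ne (fun h => this (Sym2.congr_right.mp h)) _ _
        have hM : ∀ y ∈ P', ∀ δ, Miss G {s(u,v)} c y δ → Miss G {s(u,v)} c₁ y δ := by
          intro y hy δ hmy
          have hyu : y ≠ u := fun h => G.ne_of_adj (FP_mem_adj hfp' huv y hy) h.symm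
          have hyz : y ≠ x := fun h => hz (h ▸ hy)
          exact Miss_of_eq_on
            (fun w hw hD => Function.update_of_ne (edge_ne_of_ne hyu hyz) _ _) hmy
        have hfp₁ : FP G u v c₁ P' x' := FP_transfer hfp' hM hE
        have hβn : β < n := hcz ▸ hpc.1 _ (G.mem_edgeSet.mpr hadj) hszD
        have hmu₁ : Miss G {s(u,v)} c₁ u β := by
          intro w hw hD
          by_cases hwz : w = x
          · subst hwz
            rw [hc₁, Function.update_self]
            exact fun h => hbγ (h.symm ▸ rfl)
          · rw [hc₁, Function.update_of_ne (fun h => hwz (Sym2.congr_right.mp h))]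
            rw [← hcz]
            exact hpc.2 hw hadj hwz hD hszD
        exact ih c₁ hpc₁ hfp₁ hlen' hβn (hM x' (FP_end_mem hfp') β hmiss) hmu₁


section Swap

variable {c : Sym2 V → ℕ} {α γ : ℕ} {b₀ : V}

/-- the swap condition on an edge implies its endpoints are reachable from `b₀`. -/
lemma swap_cond_reach {x w : V}
    (h : ∃ a b, s(x,w) = s(a,b) ∧ (KG G u v c α γ).Adj a b ∧ (KG G u v c α γ).Reachable b₀ a) :
    (KG G u v c α γ).Reachable b₀ x := by
  obtain ⟨a, b, he, hadj, hr⟩ := h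
  rcases Sym2.eq_iff.mp he with ⟨h1, h2⟩ | ⟨h1, h2⟩
  · exact h1 ▸ hr
  · rw [h1]; exact hr.trans hadj.reachable

lemma ksw_eq_of_not_reach {x w : V} (hx : ¬ (KG G u v c α γ).Reachable b₀ x) :
    ksw G u v c α γ b₀ s(x,w) = c s(x,w) := by
  rw [ksw, if_neg]
  exact fun h => hx (swap_cond_reach h)

lemma swap_cond_color {e : Sym2 V}
    (h : ∃ a b, e = s(a,b) ∧ (KG G u v c α γ).Adj a b ∧ (KG G u v c α γ).Reachable b₀ a) :
    c e = α ∨ c e = γ := by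
  obtain ⟨a, b, he, hadj, hr⟩ := h
  rw [he]; exact hadj.2.2

lemma ksw_PC {n : ℕ} (hpc : PC G n {s(u,v)} c) (hα : α < n) (hγ : γ < n) (hne : α ≠ γ) :
    PC G n {s(u,v)} (ksw G u v c α γ b₀) := by
  constructor
  · intro e he heD
    by_cases h : ∃ a b, e = s(a,b) ∧ (KG G u v c α γ).Adj a b ∧ (KG G u v c α γ).Reachable b₀ a
    · rw [ksw, if_pos h]
      split <;> assumption
    · rw [ksw, if_neg h]; exact hpc.1 e he heD
  · intro a b b' hab hab' hne' h1D h2D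
    have hcc := hpc.2 hab hab' hne' h1D h2D
    by_cases C1 : ∃ x y, s(a,b) = s(x,y) ∧ (KG G u v c α γ).Adj x y ∧
        (KG G u v c α γ).Reachable b₀ x
    · have hra : (KG G u v c α γ).Reachable b₀ a := swap_cond_reach C1
      have hm1 := swap_cond_color C1
      by_cases C2 : ∃ x y, s(a,b') = s(x,y) ∧ (KG G u v c α γ).Adj x y ∧
          (KG G u v c α γ).Reachable b₀ x
      · have hm2 := swap_cond_color C2
        simp only [ksw]; rw [if_pos C1, if_pos C2]
        rcases hm1 with h1 | h1 <;> rcases hm2 with h2 | h2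
        · exact absurd (h1.trans h2.symm) hcc
        · rw [if_pos h1, if_neg (by rw [h2]; exact hne.symm)]
          exact hne.symm
        · rw [if_neg (by rw [h1]; exact hne.symm), if_pos h2]
          exact hne
        · exact absurd (h1.trans h2.symm) hcc
      · have hm2 : c s(a,b') ≠ α ∧ c s(a,b') ≠ γ := by
          constructor <;> intro hcol <;> exact C2 ⟨a, b', rfl, ⟨hab', h2D, by
            first | exact Or.inl hcol | exact Or.inr hcol⟩, hra⟩
        simp only [ksw]; rw [if_pos C1, if_neg C2]
        by_cases h1 : c s(a,b) = α
        · rw [if_pos h1]; exact fun h => hm2.2 h.symm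
        · rw [if_neg h1]; exact fun h => hm2.1 h.symm
    · by_cases C2 : ∃ x y, s(a,b') = s(x,y) ∧ (KG G u v c α γ).Adj x y ∧
          (KG G u v c α γ).Reachable b₀ x
      · have hra : (KG G u v c α γ).Reachable b₀ a := swap_cond_reach C2
        have hm1 : c s(a,b) ≠ α ∧ c s(a,b) ≠ γ := by
          constructor <;> intro hcol <;> exact C1 ⟨a, b, rfl, ⟨hab, h1D, by
            first | exact Or.inl hcol | exact Or.inr hcol⟩, hra⟩
        simp only [ksw]; rw [if_neg C1, if_pos C2]
        by_cases h2 : c s(a,b') = α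
        · rw [if_pos h2]; exact fun h => hm1.2 h
        · rw [if_neg h2]; exact fun h => hm1.1 h
      · simp only [ksw]; rw [if_neg C1, if_neg C2]; exact hcc

lemma ksw_Miss_of_not_reach {x : V} {δ : ℕ} (hx : ¬ (KG G u v c α γ).Reachable b₀ x)
    (hm : Miss G {s(u,v)} c x δ) : Miss G {s(u,v)} (ksw G u v c α γ b₀) x δ :=
  Miss_of_eq_on (fun w _ _ => ksw_eq_of_not_reach hx) hm

lemma ksw_Miss_swap {x : V} (hx : (KG G u v c α γ).Reachable b₀ x)
    (hm : Miss G {s(u,v)} c x γ) (hne : α ≠ γ) :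
    Miss G {s(u,v)} (ksw G u v c α γ b₀) x α := by
  intro w hw hD
  by_cases C : ∃ a b, s(x,w) = s(a,b) ∧ (KG G u v c α γ).Adj a b ∧
      (KG G u v c α γ).Reachable b₀ a
  · rw [ksw, if_pos C]
    have := swap_cond_color C
    rcases this with h | h
    · rw [if_pos h]; exact hne.symm
    · exact absurd h (hm w hw hD)
  · rw [ksw, if_neg C]
    intro hcol
    exact C ⟨x, w, rfl, ⟨hw, hD, Or.inl hcol⟩, hx⟩

lemma ksw_Miss_of_ne {x : V} {δ : ℕ} (hδα : δ ≠ α) (hδγ : δ ≠ γ)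
    (hm : Miss G {s(u,v)} c x δ) : Miss G {s(u,v)} (ksw G u v c α γ b₀) x δ := by
  intro w hw hD
  by_cases C : ∃ a b, s(x,w) = s(a,b) ∧ (KG G u v c α γ).Adj a b ∧
      (KG G u v c α γ).Reachable b₀ a
  · rw [ksw, if_pos C]
    split
    · exact hδγ.symm
    · exact hδα.symm
  · rw [ksw, if_neg C]; exact hm w hw hD

lemma KG_adj {x y : V} : (KG G u v c α γ).Adj x y ↔
    G.Adj x y ∧ s(x,y) ∉ ({s(u,v)} : Set (Sym2 V)) ∧ (c s(x,y) = α ∨ c s(x,y) = γ) :=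
  Iff.rfl

variable [Fintype V]

lemma KG_deg_le_two {n : ℕ} (hpc : PC G n {s(u,v)} c) (x : V) :
    (KG G u v c α γ).degree x ≤ 2 := by
  rw [← SimpleGraph.card_neighborFinset_eq_degree]
  have h : ((KG G u v c α γ).neighborFinset x).card ≤ ({α, γ} : Finset ℕ).card := by
    apply Finset.card_le_card_of_injOn (fun w => c s(x,w))
    · intro w hw
      rw [Finset.mem_coe, SimpleGraph.mem_neighborFinset, KG_adj] at hw
      rcases hw.2.2 with h | h <;> simp [h]
    · intro w hw w' hw' he
      rw [Finset.mem_coe, SimpleGraph.mem_neighborFinset, KG_adj] at hw hw'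
      by_contra hne
      exact hpc.2 hw.1 hw'.1 hne hw.2.1 hw'.2.1 he
  refine h.trans ((Finset.card_insert_le _ _).trans (by simp))

lemma KG_deg_le_one_missα {n : ℕ} (hpc : PC G n {s(u,v)} c) {x : V}
    (hm : Miss G {s(u,v)} c x α) : (KG G u v c α γ).degree x ≤ 1 := by
  rw [← SimpleGraph.card_neighborFinset_eq_degree]
  have h : ((KG G u v c α γ).neighborFinset x).card ≤ ({γ} : Finset ℕ).card := by
    apply Finset.card_le_card_of_injOn (fun w => c s(x,w))
    · intro w hw
      rw [Finset.mem_coe, SimpleGraph.mem_neighborFinset, KG_adj] at hw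
      rcases hw.2.2 with h | h
      · exact absurd h (hm w hw.1 hw.2.1)
      · simp [h]
    · intro w hw w' hw' he
      rw [Finset.mem_coe, SimpleGraph.mem_neighborFinset, KG_adj] at hw hw'
      by_contra hne
      exact hpc.2 hw.1 hw'.1 hne hw.2.1 hw'.2.1 he
  simpa using h

lemma KG_deg_le_one_missγ {n : ℕ} (hpc : PC G n {s(u,v)} c) {x : V}
    (hm : Miss G {s(u,v)} c x γ) : (KG G u v c α γ).degree x ≤ 1 := by
  rw [← SimpleGraph.card_neighborFinset_eq_degree]
  have h : ((KG G u v c α γ).neighborFinset x).card ≤ ({α} : Finset ℕ).card := by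
    apply Finset.card_le_card_of_injOn (fun w => c s(x,w))
    · intro w hw
      rw [Finset.mem_coe, SimpleGraph.mem_neighborFinset, KG_adj] at hw
      rcases hw.2.2 with h | h
      · simp [h]
      · exact absurd h (hm w hw.1 hw.2.1)
    · intro w hw w' hw' he
      rw [Finset.mem_coe, SimpleGraph.mem_neighborFinset, KG_adj] at hw hw'
      by_contra hne
      exact hpc.2 hw.1 hw'.1 hne hw.2.1 hw'.2.1 he
  simpa using h

end Swap


section Paths

variable {H : SimpleGraph V} [Fintype V]

lemma two_le_degree {x a b : V} (hab : a ≠ b) (ha : H.Adj x a) (hb : H.Adj x b) :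
    2 ≤ H.degree x := by
  rw [← SimpleGraph.card_neighborFinset_eq_degree]
  exact Finset.one_lt_card.mpr
    ⟨a, (SimpleGraph.mem_neighborFinset _ _ _).mpr ha,
     b, (SimpleGraph.mem_neighborFinset _ _ _).mpr hb, hab⟩

lemma three_le_degree {x a b d : V} (hab : a ≠ b) (had : a ≠ d) (hbd : b ≠ d)
    (ha : H.Adj x a) (hb : H.Adj x b) (hd : H.Adj x d) : 3 ≤ H.degree x := by
  rw [← SimpleGraph.card_neighborFinset_eq_degree]
  exact Finset.two_lt_card.mpr
    ⟨a, (SimpleGraph.mem_neighborFinset _ _ _).mpr ha,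
     b, (SimpleGraph.mem_neighborFinset _ _ _).mpr hb,
     d, (SimpleGraph.mem_neighborFinset _ _ _).mpr hd, hab, had, hbd⟩

lemma walk_closure_aux :
    ∀ {w t : V} (p : H.Walk w t), (∀ z, H.degree z ≤ 2) → H.degree t ≤ 1 →
      p.IsPath → ∀ B, H.Adj w B → B ∉ p.support →
      ∀ x y, x ∈ p.support → H.Adj x y → y ∈ p.support ∨ y = B := by
  intro w t p
  induction p with
  | nil =>
    intro hdeg hdt _ B hB hBs x y hx hxy
    rw [SimpleGraph.Walk.support_nil, List.mem_singleton] at hx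
    subst hx
    right
    have h1 : y ∈ H.neighborFinset x := (SimpleGraph.mem_neighborFinset _ _ _).mpr hxy
    have h2 : B ∈ H.neighborFinset x := (SimpleGraph.mem_neighborFinset _ _ _).mpr hB
    exact Finset.card_le_one.mp hdt y h1 B h2
  | @cons w w₁ t hadj p ih =>
    intro hdeg hdt hp B hB hBs x y hx hxy
    rw [SimpleGraph.Walk.support_cons, List.mem_cons] at hx
    have hp' := (SimpleGraph.Walk.cons_isPath_iff _ _).mp hp
    have hw₁ : w₁ ∈ (SimpleGraph.Walk.cons hadj p).support := by
      rw [SimpleGraph.Walk.support_cons]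
      exact List.mem_cons_of_mem _ p.start_mem_support
    rcases hx with hx | hx
    · subst hx
      by_cases hyB : y = B
      · exact Or.inr hyB
      by_cases hyw₁ : y = w₁
      · exact Or.inl (hyw₁ ▸ hw₁)
      · exfalso
        have hBw₁ : B ≠ w₁ := fun h => hBs (h ▸ hw₁)
        have h3 := three_le_degree hyB hyw₁ hBw₁ hxy hB hadj
        have h2 := hdeg x
        omega
    · have hBp : B ∉ p.support := fun h => hBs (by
        rw [SimpleGraph.Walk.support_cons]; exact List.mem_cons_of_mem _ h)
      rcases ih hdeg hdt hp'.1 w hadj.symm hp'.2 x y hx hxy with h | h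
      · exact Or.inl (by rw [SimpleGraph.Walk.support_cons]; exact List.mem_cons_of_mem _ h)
      · exact Or.inl (by rw [h, SimpleGraph.Walk.support_cons]; exact List.mem_cons_self)

lemma walk_closure {a t : V} (hat : a ≠ t) (p : H.Walk a t) (hp : p.IsPath)
    (hdeg : ∀ z, H.degree z ≤ 2) (hdt : H.degree t ≤ 1) (hda : H.degree a ≤ 1) :
    ∀ x y, x ∈ p.support → H.Adj x y → y ∈ p.support := by
  cases p with
  | nil => exact absurd rfl hat
  | @cons a w₁ t hadj p' =>
    intro x y hx hxy
    have hp' := (SimpleGraph.Walk.cons_isPath_iff _ _).mp hp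
    have hw₁ : w₁ ∈ (SimpleGraph.Walk.cons hadj p').support := by
      rw [SimpleGraph.Walk.support_cons]
      exact List.mem_cons_of_mem _ p'.start_mem_support
    rw [SimpleGraph.Walk.support_cons, List.mem_cons] at hx
    rcases hx with hx | hx
    · subst hx
      have h1 : y ∈ H.neighborFinset x := (SimpleGraph.mem_neighborFinset _ _ _).mpr hxy
      have h2 : w₁ ∈ H.neighborFinset x := (SimpleGraph.mem_neighborFinset _ _ _).mpr hadj
      have := Finset.card_le_one.mp hda y h1 w₁ h2
      exact this ▸ hw₁
    · rcases walk_closure_aux p' hdeg hdt hp'.1 a hadj.symm hp'.2 x y hx hxy with h | h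
      · exact (by rw [SimpleGraph.Walk.support_cons]; exact List.mem_cons_of_mem _ h)
      · exact (by rw [h, SimpleGraph.Walk.support_cons]; exact List.mem_cons_self)

lemma walk_internal :
    ∀ {a t : V} (p : H.Walk a t), p.IsPath → ∀ x, x ∈ p.support → x ≠ a → x ≠ t →
      ∃ y z, y ≠ z ∧ H.Adj x y ∧ H.Adj x z := by
  intro a t p
  induction p with
  | nil =>
    intro _ x hx hxa _
    rw [SimpleGraph.Walk.support_nil, List.mem_singleton] at hx
    exact absurd hx hxa
  | @cons a w₁ t hadj p ih =>
    intro hp x hx hxa hxt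
    rw [SimpleGraph.Walk.support_cons, List.mem_cons] at hx
    have hp' := (SimpleGraph.Walk.cons_isPath_iff _ _).mp hp
    rcases hx with hx | hx
    · exact absurd hx hxa
    · by_cases hxw₁ : x = w₁
      · subst hxw₁
        cases p with
        | nil => exact absurd rfl hxt
        | @cons _ w₂ _ hadj₂ p₂ =>
          refine ⟨a, w₂, ?_, hadj.symm, hadj₂⟩
          intro h
          apply hp'.2
          rw [h, SimpleGraph.Walk.support_cons]
          exact List.mem_cons_of_mem _ p₂.start_mem_support
      · exact ih hp'.1 x hx hxw₁ hxt

lemma three_leaf {a b t : V} (hdeg : ∀ z, H.degree z ≤ 2)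
    (hda : H.degree a ≤ 1) (hdb : H.degree b ≤ 1) (hdt : H.degree t ≤ 1)
    (hab : a ≠ b) (hat : a ≠ t) (hbt : b ≠ t)
    (h1 : H.Reachable a t) (h2 : H.Reachable b t) : False := by
  obtain ⟨q⟩ := h1
  let p : H.Path a t := q.toPath
  have hcl : ∀ x, H.Reachable t x → x ∈ p.1.support := by
    intro x hx
    rw [SimpleGraph.reachable_iff_reflTransGen] at hx
    induction hx with
    | refl => exact p.1.end_mem_support
    | tail hstep hadj ihh => exact walk_closure hat p.1 p.2 hdeg hdt hda _ _ ihh hadj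
  have hbm : b ∈ p.1.support := hcl b h2.symm
  obtain ⟨y, z, hyz, hy, hz⟩ := walk_internal p.1 p.2 b hbm hab.symm hbt
  have := two_le_degree hyz hy hz
  omega

end Paths


lemma T_swap {n : ℕ} (huv : G.Adj u v) (Hnc : ∀ c, ¬ PC G n ∅ c) (c : Sym2 V → ℕ)
    (hpc : PC G n {s(u,v)} c) {α γ : ℕ} (hα : α < n) (hγ : γ < n) (hαγ : α ≠ γ)
    (hmuα : Miss G {s(u,v)} c u α) {b : V} {Q : List V} (hQ : FP G u v c Q b)
    (hmb : Miss G {s(u,v)} c b γ) (hnr : ¬ (KG G u v c α γ).Reachable b u) : False := by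
  set c₁ := ksw G u v c α γ b with hc₁
  have hpc₁ : PC G n {s(u,v)} c₁ := ksw_PC hpc hα hγ hαγ
  have hmu₁ : Miss G {s(u,v)} c₁ u α := ksw_Miss_of_not_reach hnr hmuα
  have htrans : ∀ {Q' : List V} {y : V}, FP G u v c Q' y → FP G u v c₁ Q' y := by
    intro Q' y h
    induction h with
    | base => exact FP.base
    | @step P x z β hfp hmiss hadj hcz hz ih =>
      have hcz₁ : c₁ s(u,z) = β := by
        rw [hc₁, ksw_eq_of_not_reach hnr]; exact hcz
      refine FP.step ih ?_ hadj hcz₁ hz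
      by_cases hr : (KG G u v c α γ).Reachable b x
      · by_cases hβα : β = α
        · exact (L_main huv Hnc P.length c hpc hfp le_rfl hα (hβα ▸ hmiss) hmuα).elim
        · by_cases hβγ : β = γ
          · exact (L_main huv Hnc P.length c₁ hpc₁ ih le_rfl hα
              (ksw_Miss_swap hr (hβγ ▸ hmiss) hαγ) hmu₁).elim
          · exact ksw_Miss_of_ne hβα hβγ hmiss
      · exact ksw_Miss_of_not_reach hr hmiss
  have hQ₁ := htrans hQ
  have hmb₁ : Miss G {s(u,v)} c₁ b α := ksw_Miss_swap (SimpleGraph.Reachable.refl b) hmb hαγ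
  exact L_main huv Hnc Q.length c₁ hpc₁ hQ₁ le_rfl hα hmb₁ hmu₁

variable [Fintype V] [DecidableRel G.Adj]

lemma exists_missing_u {n : ℕ} (huv : G.Adj u v) {c : Sym2 V → ℕ}
    (hdu : G.degree u ≤ n) :
    ∃ α, α < n ∧ Miss G {s(u,v)} c u α := by
  classical
  set S := Finset.image (fun w => c s(u,w)) ((G.neighborFinset u).erase v) with hS
  have hcard : S.card ≤ G.degree u - 1 := by
    refine (Finset.card_image_le).trans ?_
    rw [Finset.card_erase_of_mem ((G.mem_neighborFinset _ _).mpr huv)]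
    rw [SimpleGraph.card_neighborFinset_eq_degree]
  have hdpos : 1 ≤ G.degree u := by
    have : v ∈ G.neighborFinset u := (G.mem_neighborFinset _ _).mpr huv
    have := Finset.card_pos.mpr ⟨v, this⟩
    rwa [SimpleGraph.card_neighborFinset_eq_degree] at this
  have hlt : S.card < n := by omega
  have : (Finset.range n \ S).Nonempty := by
    rw [← Finset.card_pos]
    have := Finset.le_card_sdiff S (Finset.range n)
    rw [Finset.card_range] at this
    omega
  obtain ⟨α, hα⟩ := this
  rw [Finset.mem_sdiff, Finset.mem_range] at hα
  refine ⟨α, hα.1, ?_⟩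
  intro y hy hD
  intro hcol
  apply hα.2
  rw [hS]
  refine Finset.mem_image.mpr ⟨y, ?_, hcol⟩
  refine Finset.mem_erase.mpr ⟨?_, (G.mem_neighborFinset _ _).mpr hy⟩
  intro h
  exact hD (by rw [h]; exact Set.mem_singleton _)

lemma T_main {n : ℕ} (huv : G.Adj u v) (Hnc : ∀ c, ¬ PC G n ∅ c) {c : Sym2 V → ℕ}
    (hpc : PC G n {s(u,v)} c) (hdu : G.degree u ≤ n) {a b : V} {γ : ℕ}
    {P Q : List V} (hPa : FP G u v c P a) (hQb : FP G u v c Q b) (hab : a ≠ b)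
    (hγ : γ < n) (hma : Miss G {s(u,v)} c a γ) (hmb : Miss G {s(u,v)} c b γ) : False := by
  obtain ⟨α, hα, hmuα⟩ := exists_missing_u (c := c) huv hdu
  have hαγ : α ≠ γ := fun h => L_main huv Hnc P.length c hpc hPa le_rfl hγ hma (h ▸ hmuα)
  have hau : a ≠ u := fun h =>
    G.ne_of_adj (FP_mem_adj hPa huv a (FP_end_mem hPa)) h.symm
  have hbu : b ≠ u := fun h =>
    G.ne_of_adj (FP_mem_adj hQb huv b (FP_end_mem hQb)) h.symm
  have hdeg2 := KG_deg_le_two (α := α) (γ := γ) hpc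
  have hdega := KG_deg_le_one_missγ (α := α) hpc hma
  have hdegb := KG_deg_le_one_missγ (α := α) hpc hmb
  have hdegu := KG_deg_le_one_missα (γ := γ) hpc hmuα
  by_cases hra : (KG G u v c α γ).Reachable a u
  · by_cases hrb : (KG G u v c α γ).Reachable b u
    · exact three_leaf hdeg2 hdega hdegb hdegu hab hau hbu hra hrb
    · exact T_swap huv Hnc c hpc hα hγ hαγ hmuα hQb hmb hrb
  · exact T_swap huv Hnc c hpc hα hγ hαγ hmuα hPa hma hra


lemma Mset_card_ge (c : Sym2 V → ℕ) (n : ℕ) (x : V) :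
    n - ((G.neighborFinset x).filter (fun w => s(x,w) ≠ s(u,v))).card ≤
      ((Finset.range n).filter (fun δ => Miss G {s(u,v)} c x δ)).card := by
  classical
  set t := (G.neighborFinset x).filter (fun w => s(x,w) ≠ s(u,v)) with ht
  have hsub : Finset.range n \ (t.image fun w => c s(x,w)) ⊆
      (Finset.range n).filter (fun δ => Miss G {s(u,v)} c x δ) := by
    intro δ hδ
    rw [Finset.mem_sdiff, Finset.mem_range] at hδ
    rw [Finset.mem_filter, Finset.mem_range]
    refine ⟨hδ.1, ?_⟩
    intro y hy hD hcol
    apply hδ.2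
    refine Finset.mem_image.mpr ⟨y, ?_, hcol⟩
    rw [ht, Finset.mem_filter]
    exact ⟨(G.mem_neighborFinset _ _).mpr hy, fun hEq => hD (by rw [hEq]; exact rfl)⟩
  calc n - t.card ≤ n - (t.image fun w => c s(x,w)).card :=
        Nat.sub_le_sub_left Finset.card_image_le n
    _ ≤ (Finset.range n \ (t.image fun w => c s(x,w))).card := by
        have := Finset.le_card_sdiff (t.image fun w => c s(x,w)) (Finset.range n)
        rwa [Finset.card_range] at this
    _ ≤ _ := Finset.card_le_card hsub

lemma filter_card_v (huv : G.Adj u v) [DecidableEq V] :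
    ((G.neighborFinset v).filter (fun w => s(v,w) ≠ s(u,v))).card = G.degree v - 1 := by
  have : ((G.neighborFinset v).filter (fun w => s(v,w) ≠ s(u,v))) =
      (G.neighborFinset v).erase u := by
    ext w
    rw [Finset.mem_filter, Finset.mem_erase]
    constructor
    · rintro ⟨h1, h2⟩
      exact ⟨fun h => h2 (by rw [h, Sym2.eq_swap]), h1⟩
    · rintro ⟨h1, h2⟩
      refine ⟨h2, fun h => h1 ?_⟩
      exact Sym2.congr_right.mp (h.trans Sym2.eq_swap)
  rw [this, Finset.card_erase_of_mem ((G.mem_neighborFinset _ _).mpr huv.symm),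
    SimpleGraph.card_neighborFinset_eq_degree]

lemma filter_card_other {x : V} (hxu : x ≠ u) (hxv : x ≠ v) :
    ((G.neighborFinset x).filter (fun w => s(x,w) ≠ s(u,v))).card = G.degree x := by
  have : ((G.neighborFinset x).filter (fun w => s(x,w) ≠ s(u,v))) = G.neighborFinset x := by
    apply Finset.filter_true_of_mem
    intro w _
    exact edge_ne_of_ne hxu hxv
  rw [this, SimpleGraph.card_neighborFinset_eq_degree]

lemma main_count {n : ℕ} (huv : G.Adj u v) (Hnc : ∀ c, ¬ PC G n ∅ c) {c : Sym2 V → ℕ}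
    (hpc : PC G n {s(u,v)} c) (hdeg : ∀ x, G.degree x ≤ n) {k : ℕ} (hk : G.degree v = k) :
    n - k + 1 ≤ ((G.neighborFinset u).filter fun z => G.degree z = n).card := by
  classical
  set M : V → Finset ℕ := fun x => (Finset.range n).filter (fun δ => Miss G {s(u,v)} c x δ)
    with hM
  set Sfin : Finset V := Finset.univ.filter (fun x => ∃ P, FP G u v c P x) with hSfin
  have hvS : v ∈ Sfin := by
    rw [hSfin, Finset.mem_filter]
    exact ⟨Finset.mem_univ _, ⟨[v], FP.base⟩⟩
  have hSadj : ∀ x ∈ Sfin, G.Adj u x := by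
    intro x hx
    rw [hSfin, Finset.mem_filter] at hx
    obtain ⟨P, hP⟩ := hx.2
    exact FP_mem_adj hP huv x (FP_end_mem hP)
  have hk1 : 1 ≤ k := by
    rw [← hk]
    have : u ∈ G.neighborFinset v := (G.mem_neighborFinset _ _).mpr huv.symm
    have := Finset.card_pos.mpr ⟨u, this⟩
    rwa [SimpleGraph.card_neighborFinset_eq_degree] at this
  have hkn : k ≤ n := hk ▸ hdeg v
  -- disjointness
  have hdisj : ∀ x ∈ Sfin, ∀ y ∈ Sfin, x ≠ y → Disjoint (M x) (M y) := by
    intro x hx y hy hxy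
    rw [Finset.disjoint_left]
    intro δ hδx hδy
    rw [hM, Finset.mem_filter, Finset.mem_range] at hδx hδy
    rw [hSfin, Finset.mem_filter] at hx hy
    obtain ⟨P, hP⟩ := hx.2
    obtain ⟨Q, hQ⟩ := hy.2
    exact T_main huv Hnc hpc (hdeg u) hP hQ hxy hδx.1 hδx.2 hδy.2
  -- the injection from the union of missing sets into Sfin.erase v
  have hinj : (Sfin.biUnion M).card ≤ (Sfin.erase v).card := by
    set f : ℕ → V := fun δ =>
      if h : ∃ w, G.Adj u w ∧ w ≠ v ∧ c s(u,w) = δ then h.choose else u with hf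
    have hprop : ∀ δ ∈ Sfin.biUnion M,
        G.Adj u (f δ) ∧ f δ ≠ v ∧ c s(u, f δ) = δ := by
      intro δ hδ
      rw [Finset.mem_biUnion] at hδ
      obtain ⟨x, hx, hδx⟩ := hδ
      rw [hM, Finset.mem_filter, Finset.mem_range] at hδx
      rw [hSfin, Finset.mem_filter] at hx
      obtain ⟨P, hP⟩ := hx.2
      have hnm : ¬ Miss G {s(u,v)} c u δ := fun hm =>
        L_main huv Hnc P.length c hpc hP le_rfl hδx.1 hδx.2 hm
      rw [Miss] at hnm
      push_neg at hnm
      obtain ⟨y, hy, hD, hcol⟩ := hnm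
      have hyv : y ≠ v := fun h => hD (by rw [h]; exact Set.mem_singleton _)
      have hex : ∃ w, G.Adj u w ∧ w ≠ v ∧ c s(u,w) = δ := ⟨y, hy, hyv, hcol⟩
      simp only [hf]
      rw [dif_pos hex]
      exact hex.choose_spec
    apply Finset.card_le_card_of_injOn f
    · intro δ hδ
      obtain ⟨hadj, hne, hcol⟩ := hprop δ hδ
      rw [Finset.mem_coe, Finset.mem_erase]
      refine ⟨hne, ?_⟩
      rw [Finset.mem_coe, Finset.mem_biUnion] at hδ
      obtain ⟨x, hx, hδx⟩ := hδ
      rw [hM, Finset.mem_filter, Finset.mem_range] at hδx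
      rw [hSfin, Finset.mem_filter] at hx
      obtain ⟨P, hP⟩ := hx.2
      rw [hSfin, Finset.mem_filter]
      refine ⟨Finset.mem_univ _, ?_⟩
      by_cases hmem : f δ ∈ P
      · exact FP_prefix hP _ hmem
      · exact ⟨P ++ [f δ], FP.step hP hδx.2 hadj hcol hmem⟩
    · intro δ1 h1 δ2 h2 heq
      obtain ⟨_, _, hc1⟩ := hprop δ1 h1
      obtain ⟨_, _, hc2⟩ := hprop δ2 h2
      rw [← hc1, ← hc2, heq]
  -- sum computation
  have hsum : (Sfin.biUnion M).card = ∑ x ∈ Sfin, (M x).card :=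
    Finset.card_biUnion hdisj
  have hMv : n - k + 1 ≤ (M v).card := by
    have := Mset_card_ge (G := G) (u := u) (v := v) c n v
    rw [filter_card_v huv, hk] at this
    refine le_trans ?_ this
    omega
  set E := Sfin.erase v with hE
  set D1 := E.filter (fun x => ¬ G.degree x = n) with hD1
  set D2 := E.filter (fun x => G.degree x = n) with hD2
  have hD1le : D1.card ≤ ∑ x ∈ E, (M x).card := by
    calc D1.card = ∑ _x ∈ D1, 1 := by rw [Finset.sum_const, Nat.smul_one_eq_cast, Nat.cast_id]
      _ ≤ ∑ x ∈ D1, (M x).card := by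
          apply Finset.sum_le_sum
          intro x hx
          rw [hD1, Finset.mem_filter] at hx
          obtain ⟨hxE, hxd⟩ := hx
          rw [hE, Finset.mem_erase] at hxE
          have hxu : x ≠ u := fun h =>
            G.ne_of_adj (hSadj x hxE.2) h.symm
          have := Mset_card_ge (G := G) (u := u) (v := v) c n x
          rw [filter_card_other hxu hxE.1] at this
          have hdx := hdeg x
          simp only [hM]
          omega
      _ ≤ ∑ x ∈ E, (M x).card := by
          apply Finset.sum_le_sum_of_subset
          rw [hD1]; exact Finset.filter_subset _ _
  have hsplit : ∑ x ∈ E, (M x).card + (M v).card = ∑ x ∈ Sfin, (M x).card := by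
    rw [hE]
    exact Finset.sum_erase_add _ _ hvS
  have hEcard : D2.card + D1.card = E.card := by
    rw [hD2, hD1]
    exact Finset.card_filter_add_card_filter_not _
  have hErw : E.card = (Sfin.erase v).card := by rw [hE]
  have hfin : n - k + 1 ≤ D2.card := by omega
  refine hfin.trans (Finset.card_le_card ?_)
  intro x hx
  rw [hD2, Finset.mem_filter] at hx
  obtain ⟨hxE, hxd⟩ := hx
  rw [hE, Finset.mem_erase] at hxE
  rw [Finset.mem_filter]
  exact ⟨(G.mem_neighborFinset _ _).mpr (hSadj x hxE.2), hxd⟩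

end Lemmas


section Final

variable [Fintype V] (G : SimpleGraph V) [DecidableRel G.Adj]

lemma not_colorable_to_Hnc {n : ℕ} (h : ¬ G.lineGraph.Colorable n) :
    ∀ c, ¬ PC G n ∅ c := by
  intro c hpc
  apply h
  refine ⟨SimpleGraph.Coloring.mk
    (fun e => ⟨c e.val, hpc.1 e.val e.prop (Set.notMem_empty _)⟩) ?_⟩
  intro e f hadj
  obtain ⟨hne, x, hx1, hx2⟩ := SimpleGraph.lineGraph_adj_iff_exists.mp hadj
  obtain ⟨y, hey⟩ := Sym2.mem_iff_exists.mp hx1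
  obtain ⟨y', hfy⟩ := Sym2.mem_iff_exists.mp hx2
  have hadj1 : G.Adj x y := G.mem_edgeSet.mp (hey ▸ e.prop)
  have hadj2 : G.Adj x y' := G.mem_edgeSet.mp (hfy ▸ f.prop)
  have hyy : y ≠ y' := by
    intro h
    apply hne
    apply Subtype.ext
    rw [hey, hfy, h]
  intro hc
  rw [Fin.mk.injEq, hey, hfy] at hc
  exact hpc.2 hadj1 hadj2 hyy (Set.notMem_empty _) (Set.notMem_empty _) hc

lemma colorable_to_PC {n : ℕ} {u v : V} (huv : G.Adj u v)
    (h : (G.deleteEdges {s(u,v)}).lineGraph.Colorable n) :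
    ∃ c, PC G n {s(u,v)} c := by
  classical
  obtain ⟨C⟩ := h
  set G' := G.deleteEdges {s(u,v)} with hG'
  refine ⟨fun e => if h : e ∈ G'.edgeSet then (C ⟨e, h⟩ : Fin n).val else 0, ?_, ?_⟩
  · intro e he heD
    have hmem : e ∈ G'.edgeSet := by
      rw [hG', SimpleGraph.edgeSet_deleteEdges]
      exact ⟨he, heD⟩
    show (if h : e ∈ G'.edgeSet then ((C ⟨e, h⟩ : Fin n) : ℕ) else 0) < n
    rw [dif_pos hmem]
    exact (C ⟨e, hmem⟩).is_lt
  · intro a b b' hab hab' hne h1D h2D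
    have hm1 : s(a,b) ∈ G'.edgeSet := by
      rw [hG', SimpleGraph.edgeSet_deleteEdges]
      exact ⟨G.mem_edgeSet.mpr hab, h1D⟩
    have hm2 : s(a,b') ∈ G'.edgeSet := by
      rw [hG', SimpleGraph.edgeSet_deleteEdges]
      exact ⟨G.mem_edgeSet.mpr hab', h2D⟩
    have hee : s(a,b) ≠ s(a,b') := fun h => hne (Sym2.congr_right.mp h)
    have hadj : G'.lineGraph.Adj ⟨s(a,b), hm1⟩ ⟨s(a,b'), hm2⟩ := by
      rw [SimpleGraph.lineGraph_adj_iff_exists]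
      exact ⟨fun h => hee (congrArg Subtype.val h),
        a, Sym2.mem_mk_left a b, Sym2.mem_mk_left a b'⟩
    have := C.valid hadj
    show (if h : s(a,b) ∈ G'.edgeSet then ((C ⟨s(a,b), h⟩ : Fin n) : ℕ) else 0) ≠
      (if h : s(a,b') ∈ G'.edgeSet then ((C ⟨s(a,b'), h⟩ : Fin n) : ℕ) else 0)
    rw [dif_pos hm1, dif_pos hm2]
    exact fun h => this (Fin.val_injective h)

end Final

end VALproof



open VALproof in
/-- Vizing's Adjacency Lemma, part (a). -/
theorem vizing_adjacency_lemma_a [Fintype V] (G : SimpleGraph V) [DecidableRel G.Adj]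
    (hG : G.IsDeltaCritical) {u v : V} (huv : G.Adj u v) {k : ℕ} (hk : G.degree v = k)
    (hlt : k < G.maxDegree) :
    G.maxDegree - k + 1 ≤
      ((G.neighborFinset u).filter fun z => G.degree z = G.maxDegree).card := by
  classical
  set n := G.maxDegree with hn
  obtain ⟨hconn, hchi, hcrit⟩ := hG
  have Hnc : ∀ c, ¬ PC G n ∅ c := by
    apply not_colorable_to_Hnc
    intro hcol
    have hle := hcol.chromaticNumber_le
    have hchi' : G.lineGraph.chromaticNumber = (n : ℕ∞) + 1 := hchi
    rw [hchi'] at hle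
    have hlt2 : (n : ℕ∞) < (n : ℕ∞) + 1 := by
      rw [← Nat.cast_one, ← Nat.cast_add, Nat.cast_lt]
      omega
    exact lt_irrefl _ (lt_of_lt_of_le hlt2 hle)
  have he : s(u,v) ∈ G.edgeSet := G.mem_edgeSet.mpr huv
  have h3 := hcrit _ he
  rw [hchi] at h3
  have hle : (G.deleteEdges {s(u,v)}).lineGraph.chromaticNumber ≤ (n : ℕ∞) := by
    by_contra hcon
    rw [not_le] at hcon
    have := Order.add_one_le_of_lt hcon
    have h3' : (G.deleteEdges {s(u,v)}).lineGraph.chromaticNumber < (n : ℕ∞) + 1 := h3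
    exact absurd h3' (not_lt.mpr this)
  have hcol := SimpleGraph.chromaticNumber_le_iff_colorable.mp hle
  obtain ⟨c, hpc⟩ := colorable_to_PC G huv hcol
  exact main_count huv Hnc hpc (fun x => G.degree_le_maxDegree x) hk
end

section
/- (Vizing's Adjacency Lemma, part (b)) Let G be a Δ-critical graph and let u and v be adjacent vertices of G with d(v) = Δ. Then u is adjacent to at least two vertices of degree Δ. -/
open SimpleGraph Finset

variable {V : Type*}

namespace VALaux

variable {V : Type*}

/-- A partial proper edge coloring of `G` with `n` colors. -/
def Proper (G : SimpleGraph V) (n : ℕ) (c : Sym2 V → Option (Fin n)) : Prop :=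
  (∀ e, c e ≠ none → e ∈ G.edgeSet) ∧
  ∀ x y z : V, y ≠ z → G.Adj x y → G.Adj x z → c s(x, y) = c s(x, z) → c s(x, y) = none

/-- Color `k` is missing at `x`. -/
def Miss (G : SimpleGraph V) {n : ℕ} (c : Sym2 V → Option (Fin n)) (x : V) (k : Fin n) : Prop :=
  ∀ y, G.Adj x y → c s(x, y) ≠ some k

/-- A good coloring: everything colored except `s(u,v)`. -/
def Good (G : SimpleGraph V) (n : ℕ) (u v : V) (c : Sym2 V → Option (Fin n)) : Prop :=
  Proper G n c ∧ c s(u, v) = none ∧ ∀ e ∈ G.edgeSet, e ≠ s(u, v) → c e ≠ none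

lemma unique_color {G : SimpleGraph V} {n c} (hc : Proper G n c) {x y z : V} {k : Fin n}
    (h1 : c s(x, y) = some k) (h2 : c s(x, z) = some k) : y = z := by
  by_contra hne
  have hy : G.Adj x y := G.mem_edgeSet.mp (hc.1 _ (by simp [h1]))
  have hz : G.Adj x z := G.mem_edgeSet.mp (hc.1 _ (by simp [h2]))
  have := hc.2 x y z hne hy hz (h1.trans h2.symm)
  simp [h1] at this

lemma exists_missing [Fintype V] {G : SimpleGraph V} [DecidableRel G.Adj] {n : ℕ}
    {c : Sym2 V → Option (Fin n)} (hc : Proper G n c) (x : V)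
    (hcard : ((G.neighborFinset x).filter (fun y => c s(x, y) ≠ none)).card < n) :
    ∃ k, Miss G c x k := by
  classical
  by_contra h
  push_neg at h
  simp only [Miss] at h
  push_neg at h
  choose f hadj hf using h
  have hinj : Function.Injective f := by
    intro k k' he
    have h1 := hf k
    have h2 := hf k'
    rw [he, h2] at h1
    exact (Option.some_injective _ h1).symm
  have hle : (Finset.univ : Finset (Fin n)).card ≤
      ((G.neighborFinset x).filter (fun y => c s(x, y) ≠ none)).card := by
    apply Finset.card_le_card_of_injOn f
    · intro k _
      simp only [Finset.mem_coe, mem_filter, mem_neighborFinset]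
      exact ⟨hadj k, by simp [hf k]⟩
    · exact hinj.injOn
  simp only [Finset.card_univ, Fintype.card_fin] at hle
  omega


section Swap

variable {n : ℕ} {c : Sym2 V → Option (Fin n)} {a b : Fin n} {S : Set V}

/-- `S` is closed under `a,b`-colored edges. -/
def SwClosed {n : ℕ} (c : Sym2 V → Option (Fin n)) (a b : Fin n) (S : Set V) : Prop :=
  ∀ ⦃x y : V⦄, x ∈ S → (c s(x, y) = some a ∨ c s(x, y) = some b) → y ∈ S

/-- swap of colors a,b on an option value -/
def swapf (a b : Fin n) : Option (Fin n) → Option (Fin n) := fun o =>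
  if o = some a then some b else if o = some b then some a else o

/-- swap of a color -/
def swk (a b k : Fin n) : Fin n := if k = a then b else if k = b then a else k

open Classical in
/-- the Kempe chain swap of colors `a, b` on the vertex set `S`. -/
noncomputable def swapc (c : Sym2 V → Option (Fin n)) (a b : Fin n) (S : Set V) :
    Sym2 V → Option (Fin n) := fun e =>
  if (∃ x ∈ S, x ∈ e) ∧ (c e = some a ∨ c e = some b) then
    (if c e = some a then some b else some a) else c e

lemma swapf_swapf (hab : a ≠ b) (o : Option (Fin n)) : swapf a b (swapf a b o) = o := by
  unfold swapf
  split_ifs <;> simp_all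

lemma swapf_inj (hab : a ≠ b) {o o' : Option (Fin n)} (h : swapf a b o = swapf a b o') :
    o = o' := by
  have := congrArg (swapf a b) h
  rwa [swapf_swapf hab, swapf_swapf hab] at this

lemma swapf_none (o : Option (Fin n)) : swapf a b o = none ↔ o = none := by
  unfold swapf
  split_ifs <;> simp_all

lemma swapf_eq_some (hab : a ≠ b) (o : Option (Fin n)) (k : Fin n) :
    swapf a b o = some k ↔ o = some (swk a b k) := by
  unfold swapf swk
  split_ifs <;> simp_all <;> tauto

lemma swapc_eq_of_not_mem (hS : SwClosed c a b S) {x : V} (hx : x ∉ S) (y : V) :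
    swapc c a b S s(x, y) = c s(x, y) := by
  unfold swapc
  rw [if_neg]
  rintro ⟨⟨z, hz, hze⟩, hcol⟩
  rcases Sym2.mem_iff.mp hze with rfl | rfl
  · exact hx hz
  · apply hx
    apply hS hz
    rwa [Sym2.eq_swap]

lemma swapc_eq_of_mem {x : V} (hx : x ∈ S) (y : V) :
    swapc c a b S s(x, y) = swapf a b (c s(x, y)) := by
  unfold swapc swapf
  by_cases h1 : c s(x, y) = some a
  · rw [if_pos ⟨⟨x, hx, Sym2.mem_mk_left x y⟩, Or.inl h1⟩, if_pos h1, if_pos h1]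
  · by_cases h2 : c s(x, y) = some b
    · rw [if_pos ⟨⟨x, hx, Sym2.mem_mk_left x y⟩, Or.inr h2⟩, if_neg h1, if_neg h1, if_pos h2]
    · rw [if_neg (by tauto), if_neg h1, if_neg h2]

lemma swapc_none_iff (e : Sym2 V) : swapc c a b S e = none ↔ c e = none := by
  unfold swapc
  split_ifs <;> simp_all

lemma Proper.swap {G : SimpleGraph V} (hc : Proper G n c) (hab : a ≠ b)
    (hS : SwClosed c a b S) : Proper G n (swapc c a b S) := by
  constructor
  · intro e he
    apply hc.1
    exact fun h => he ((swapc_none_iff e).mpr h)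
  · intro x y z hyz hxy hxz heq
    by_cases hx : x ∈ S
    · rw [swapc_eq_of_mem hx] at heq ⊢
      rw [swapc_eq_of_mem hx] at heq
      rw [hc.2 x y z hyz hxy hxz (swapf_inj hab heq)]
      unfold swapf; simp
    · rw [swapc_eq_of_not_mem hS hx] at heq ⊢
      rw [swapc_eq_of_not_mem hS hx] at heq
      exact hc.2 x y z hyz hxy hxz heq

lemma Good.swap {G : SimpleGraph V} {u v : V} (hc : Good G n u v c) (hab : a ≠ b)
    (hS : SwClosed c a b S) : Good G n u v (swapc c a b S) := by
  refine ⟨hc.1.swap hab hS, ?_, ?_⟩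
  · rw [swapc_none_iff]; exact hc.2.1
  · intro e he hne
    rw [Ne, swapc_none_iff]
    exact hc.2.2 e he hne

lemma miss_swap_not_mem {G : SimpleGraph V} (hS : SwClosed c a b S) {x : V} (hx : x ∉ S)
    (k : Fin n) : Miss G (swapc c a b S) x k ↔ Miss G c x k := by
  unfold Miss
  apply forall_congr'
  intro y
  rw [swapc_eq_of_not_mem hS hx]

lemma miss_swap_mem {G : SimpleGraph V} (hab : a ≠ b) {x : V} (hx : x ∈ S) (k : Fin n) :
    Miss G (swapc c a b S) x k ↔ Miss G c x (swk a b k) := by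
  unfold Miss
  apply forall_congr'
  intro y
  rw [swapc_eq_of_mem hx]
  constructor
  · intro h hy hc'
    exact h hy ((swapf_eq_some hab _ _).mpr hc')
  · intro h hy hc'
    exact h hy ((swapf_eq_some hab _ _).mp hc')

lemma swk_a (hab : a ≠ b) : swk a b a = b := by simp [swk]

lemma swk_b (hab : a ≠ b) : swk a b b = a := by simp [swk, hab.symm]

lemma swk_other {k : Fin n} (hka : k ≠ a) (hkb : k ≠ b) : swk a b k = k := by
  simp [swk, hka, hkb]

end Swap

/-- In a max-degree-≤2 graph, a path ending at a degree-≤1 vertex, entered from `o`,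
has adjacency-closed support (up to `o`). -/
lemma path_closed {H : SimpleGraph V}
    (hmax : ∀ x y₁ y₂, H.Adj x y₁ → H.Adj x y₂ → y₁ ≠ y₂ → ∀ z, H.Adj x z → z = y₁ ∨ z = y₂) :
    ∀ {x y : V} (P : H.Walk x y), P.IsPath → (∀ z z', H.Adj y z → H.Adj y z' → z = z') →
      ∀ o, H.Adj x o → o ∉ P.support →
      ∀ a ∈ P.support, ∀ b, H.Adj a b → b = o ∨ b ∈ P.support := by
  intro x y P
  induction P with
  | nil =>
    intro _ h1y o ho hop a ha b hb
    simp only [SimpleGraph.Walk.support_nil, List.mem_singleton] at ha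
    subst ha
    exact Or.inl (h1y b o hb ho)
  | @cons x x₁ y h₁ P' ih =>
    intro hP h1y o ho hop a ha b hb
    rw [SimpleGraph.Walk.cons_isPath_iff] at hP
    rw [SimpleGraph.Walk.support_cons, List.mem_cons] at hop ha
    push_neg at hop
    rcases ha with rfl | ha
    · have hox₁ : o ≠ x₁ := fun h => hop.2 (h ▸ P'.start_mem_support)
      rcases hmax a o x₁ ho h₁ hox₁ b hb with h | h
      · exact Or.inl h
      · right
        rw [SimpleGraph.Walk.support_cons, List.mem_cons]
        exact Or.inr (h ▸ P'.start_mem_support)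
    · rcases ih hP.1 h1y x h₁.symm hP.2 a ha b hb with h | h
      · right
        rw [SimpleGraph.Walk.support_cons, List.mem_cons]
        exact Or.inl h
      · right
        rw [SimpleGraph.Walk.support_cons, List.mem_cons]
        exact Or.inr h

/-- An internal vertex of a path has two distinct neighbors. -/
lemma internal_two {H : SimpleGraph V} :
    ∀ {x y : V} (P : H.Walk x y), P.IsPath → ∀ z ∈ P.support, z ≠ x → z ≠ y →
      ∃ a b, a ≠ b ∧ H.Adj z a ∧ H.Adj z b := by
  intro x y P
  induction P with
  | nil =>
    intro _ z hz hzx _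
    simp only [SimpleGraph.Walk.support_nil, List.mem_singleton] at hz
    exact absurd hz hzx
  | @cons x x₁ y h₁ P' ih =>
    intro hP z hz hzx hzy
    rw [SimpleGraph.Walk.cons_isPath_iff] at hP
    rw [SimpleGraph.Walk.support_cons, List.mem_cons] at hz
    rcases hz with rfl | hz
    · exact absurd rfl hzx
    · by_cases hz1 : z = x₁
      · subst hz1
        cases P' with
        | nil => exact absurd rfl hzy
        | @cons _ x₂ _ h₂ P'' =>
          refine ⟨x, x₂, ?_, h₁.symm, h₂⟩
          intro h
          apply hP.2
          rw [h, SimpleGraph.Walk.support_cons, List.mem_cons]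
          exact Or.inr P''.start_mem_support
      · exact ih hP.1 z hz hz1 hzy

/-- A connected graph of max degree ≤ 2 cannot contain three distinct vertices of degree ≤ 1. -/
lemma three_endpoints {H : SimpleGraph V}
    (hmax : ∀ x y₁ y₂, H.Adj x y₁ → H.Adj x y₂ → y₁ ≠ y₂ → ∀ z, H.Adj x z → z = y₁ ∨ z = y₂)
    {x y z : V}
    (h1x : ∀ a b, H.Adj x a → H.Adj x b → a = b)
    (h1y : ∀ a b, H.Adj y a → H.Adj y b → a = b)
    (h1z : ∀ a b, H.Adj z a → H.Adj z b → a = b)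
    (hxy : x ≠ y) (hzx : z ≠ x) (hzy : z ≠ y)
    (hrxy : H.Reachable x y) (hrxz : H.Reachable x z) : False := by
  classical
  obtain ⟨W⟩ := hrxy
  obtain ⟨P, hPfull⟩ : ∃ P : H.Walk x y, P.IsPath := ⟨W.bypass, W.bypass_isPath⟩
  revert hPfull
  cases P with
  | nil => exact fun _ => hxy rfl
  | @cons _ x₁ _ h₁ P' =>
    intro hPfull
    have hPp := SimpleGraph.Walk.cons_isPath_iff h₁ P' |>.mp hPfull
    set P : H.Walk x y := SimpleGraph.Walk.cons h₁ P' with hPdef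
    have hclosed : ∀ a ∈ P.support, ∀ b, H.Adj a b → b ∈ P.support := by
      intro a ha b hb
      rw [SimpleGraph.Walk.support_cons, List.mem_cons] at ha
      rcases ha with rfl | ha
      · have : b = x₁ := h1x b x₁ hb h₁
        rw [SimpleGraph.Walk.support_cons, List.mem_cons]
        exact Or.inr (this ▸ P'.start_mem_support)
      · rcases path_closed hmax P' hPp.1 h1y x h₁.symm hPp.2 a ha b hb with h | h
        · rw [SimpleGraph.Walk.support_cons, List.mem_cons]
          exact Or.inl h
        · rw [SimpleGraph.Walk.support_cons, List.mem_cons]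
          exact Or.inr h
    have hzsup : z ∈ P.support := by
      obtain ⟨W2⟩ := hrxz
      have : ∀ (x' z' : V) (W' : H.Walk x' z'), x' ∈ P.support → z' ∈ P.support := by
        intro x' z' W'
        induction W' with
        | nil => exact fun h => h
        | cons h W'' ih => exact fun hx' => ih (hclosed _ hx' _ h)
      exact this x z W2 P.start_mem_support
    obtain ⟨a, b, hab, hza, hzb⟩ := internal_two P hPfull z hzsup hzx hzy
    exact hab (h1z a b hza hzb)



section Fan

variable {G : SimpleGraph V} {n : ℕ} {u v : V} {c : Sym2 V → Option (Fin n)}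

/-- A (linear Vizing) fan at `u` w.r.t. the uncolored edge `uv`. -/
def IsFan (G : SimpleGraph V) {n : ℕ} (u v : V) (c : Sym2 V → Option (Fin n)) (p : ℕ)
    (w : ℕ → V) (γ : ℕ → Fin n) : Prop :=
  w 0 = v ∧ (∀ j, j ≤ p → G.Adj u (w j)) ∧ (∀ j k, j ≤ p → k ≤ p → w j = w k → j = k) ∧
  ∀ j, j < p → c s(u, w (j + 1)) = some (γ (j + 1)) ∧ Miss G c (w j) (γ (j + 1))

lemma IsFan.pre {p q : ℕ} {w γ} (hf : IsFan G u v c p w γ) (hq : q ≤ p) :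
    IsFan G u v c q w γ :=
  ⟨hf.1, fun j hj => hf.2.1 j (hj.trans hq), fun j k hj hk => hf.2.2.1 j k (hj.trans hq)
    (hk.trans hq), fun j hj => hf.2.2.2 j (lt_of_lt_of_le hj hq)⟩

/-- Shifting the fan and coloring `uv`; contradiction with `G` having no total coloring. -/
lemma shift (hnt : ∀ c' : Sym2 V → Option (Fin n), Proper G n c' → ¬ ∀ e ∈ G.edgeSet, c' e ≠ none)
    (hc : Good G n u v c) {p : ℕ} {w : ℕ → V} {γ : ℕ → Fin n} (hf : IsFan G u v c p w γ)
    (hdist : ∀ j k, 1 ≤ j → j ≤ p → 1 ≤ k → k ≤ p → γ j = γ k → j = k)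
    {τ : Fin n} (hmu : Miss G c u τ) (hmw : Miss G c (w p) τ) : False := by
  classical
  obtain ⟨hw0, hadj, hinj, hfan⟩ := hf
  set ε : ℕ → Fin n := fun j => if j < p then γ (j + 1) else τ with hε
  have hmissε : ∀ j, j ≤ p → Miss G c (w j) (ε j) := by
    intro j hj
    by_cases h : j < p
    · simpa [hε, h] using (hfan j h).2
    · have hjp : j = p := by omega
      simpa [hε, h, hjp] using hmw
  have hcolγ : ∀ j, 1 ≤ j → j ≤ p → c s(u, w j) = some (γ j) := by
    intro j h1 h2
    obtain ⟨j', rfl⟩ : ∃ j', j = j' + 1 := ⟨j - 1, by omega⟩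
    exact (hfan j' (by omega)).1
  have hεinj : ∀ j k, j ≤ p → k ≤ p → ε j = ε k → j = k := by
    have key : ∀ j k, j ≤ p → k ≤ p → j < p → ¬ k < p → ε j = ε k → False := by
      intro j k hj hk h1 h2 he
      simp only [hε, if_pos h1, if_neg h2] at he
      exact hmu (w (j + 1)) (hadj (j + 1) (by omega))
        (by rw [hcolγ (j + 1) (by omega) (by omega), he])
    intro j k hj hk he
    by_cases h1 : j < p <;> by_cases h2 : k < p
    · simp only [hε, if_pos h1, if_pos h2] at he
      have := hdist (j + 1) (k + 1) (by omega) (by omega) (by omega) (by omega) he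
      omega
    · exact absurd he (fun he => key j k hj hk h1 h2 he)
    · exact absurd he.symm (fun he => key k j hk hj h2 h1 he)
    · omega
  set d : Sym2 V → Option (Fin n) :=
    fun e => if h : ∃ j, j ≤ p ∧ e = s(u, w j) then some (ε (Nat.find h)) else c e with hd
  have dspec : ∀ j, j ≤ p → d s(u, w j) = some (ε j) := by
    intro j hj
    have hex : ∃ k, k ≤ p ∧ s(u, w j) = s(u, w k) := ⟨j, hj, rfl⟩
    simp only [hd]
    rw [dif_pos hex]
    have hspec := Nat.find_spec hex
    rw [hinj _ _ hspec.1 hj (Sym2.congr_right.mp hspec.2).symm]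
  have dother : ∀ e, ¬(∃ j, j ≤ p ∧ e = s(u, w j)) → d e = c e := fun e he => dif_neg he
  have hdproper : Proper G n d := by
    constructor
    · intro e he
      by_cases hsp : ∃ j, j ≤ p ∧ e = s(u, w j)
      · obtain ⟨j, hj, rfl⟩ := hsp
        exact G.mem_edgeSet.mpr (hadj j hj)
      · rw [dother e hsp] at he
        exact hc.1.1 e he
    · intro x y z hyz hxy hxz heq
      have mixed : ∀ y' z', G.Adj x z' → (∃ j, j ≤ p ∧ s(x, y') = s(u, w j)) →
          ¬(∃ j, j ≤ p ∧ s(x, z') = s(u, w j)) → d s(x, y') = d s(x, z') → False := by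
        rintro y' z' hxz' ⟨j, hj, hey⟩ hns heq'
        rw [hey, dspec j hj, dother _ hns] at heq'
        rcases Sym2.eq_iff.mp hey with ⟨hxu, hyw⟩ | ⟨hxw, hyu⟩
        · rw [hxu] at heq' hxz' hns
          by_cases hjp : j < p
          · have hcz : c s(u, z') = some (γ (j + 1)) := by
              rw [← heq']
              simp [hε, hjp]
            have hzw := unique_color hc.1 (hcolγ (j + 1) (by omega) (by omega)) hcz
            exact hns ⟨j + 1, by omega, by rw [← hzw]⟩
          · have hτ : ε j = τ := by simp [hε, hjp]
            rw [hτ] at heq'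
            exact hmu z' hxz' heq'.symm
        · rw [hxw] at heq' hxz'
          exact hmissε j hj z' hxz' heq'.symm
      by_cases h1 : ∃ j, j ≤ p ∧ s(x, y) = s(u, w j) <;>
        by_cases h2 : ∃ j, j ≤ p ∧ s(x, z) = s(u, w j)
      · obtain ⟨j, hj, hey⟩ := h1
        obtain ⟨k, hk, hez⟩ := h2
        rw [hey, hez, dspec j hj, dspec k hk] at heq
        have hjk : j = k := hεinj j k hj hk (Option.some_injective _ heq)
        subst hjk
        exact absurd (Sym2.congr_right.mp (hey.trans hez.symm)) hyz
      · exact (mixed y z hxz ⟨h1.choose, h1.choose_spec⟩ h2 heq).elim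
      · exact (mixed z y hxy ⟨h2.choose, h2.choose_spec⟩ h1 heq.symm).elim
      · rw [dother _ h1, dother _ h2] at heq
        rw [dother _ h1]
        exact hc.1.2 x y z hyz hxy hxz heq
  have hdtot : ∀ e ∈ G.edgeSet, d e ≠ none := by
    intro e he
    by_cases hsp : ∃ j, j ≤ p ∧ e = s(u, w j)
    · obtain ⟨j, hj, rfl⟩ := hsp
      rw [dspec j hj]
      simp
    · rw [dother e hsp]
      apply hc.2.2 e he
      intro huv'
      exact hsp ⟨0, Nat.zero_le _, by rw [huv', hw0]⟩
  exact hnt d hdproper hdtot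

end Fan

section Disj

/-- The subgraph on edges colored `a` or `b`. -/
def cGraph {n : ℕ} (c : Sym2 V → Option (Fin n)) (a b : Fin n) : SimpleGraph V where
  Adj x y := x ≠ y ∧ (c s(x, y) = some a ∨ c s(x, y) = some b)
  symm := by
    constructor
    rintro x y ⟨h1, h2⟩
    refine ⟨h1.symm, ?_⟩
    rwa [Sym2.eq_swap]
  loopless := ⟨fun x h => h.1 rfl⟩

variable {G : SimpleGraph V} {n : ℕ} {u v : V} {c : Sym2 V → Option (Fin n)}

lemma colors_inj {p w γ} (hf : IsFan G u v c p w γ)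
    (h2 : ∀ q, q < p → ∀ i, i < q → ∀ k, Miss G c (w i) k → Miss G c (w q) k → False) :
    ∀ j k, 1 ≤ j → j ≤ p → 1 ≤ k → k ≤ p → γ j = γ k → j = k := by
  have key : ∀ j k, 1 ≤ j → j < k → k ≤ p → γ j = γ k → False := by
    intro j k h1 hjk hkp he
    obtain ⟨j', rfl⟩ : ∃ j', j = j' + 1 := ⟨j - 1, by omega⟩
    obtain ⟨k', rfl⟩ : ∃ k', k = k' + 1 := ⟨k - 1, by omega⟩
    have hmj : Miss G c (w j') (γ (j' + 1)) := (hf.2.2.2 j' (by omega)).2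
    have hmk : Miss G c (w k') (γ (k' + 1)) := (hf.2.2.2 k' (by omega)).2
    rw [← he] at hmk
    exact h2 k' (by omega) j' (by omega) _ hmj hmk
  intro j k hj1 hjp hk1 hkp he
  rcases lt_trichotomy j k with h | h | h
  · exact (key j k hj1 h hkp he).elim
  · exact h
  · exact (key k j hk1 h hjp he.symm).elim

lemma IsFan.swap {p w γ} (hc : Good G n u v c) (hf : IsFan G u v c p w γ) {a b : Fin n}
    {S : Set V} (hS : SwClosed c a b S) (hab : a ≠ b) (hu : u ∉ S) (hbu : Miss G c u b)
    (ha : ∀ j, 1 ≤ j → j ≤ p → γ j = a → w (j - 1) ∉ S) :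
    IsFan G u v (swapc c a b S) p w γ := by
  obtain ⟨hw0, hadj, hinj, hfan⟩ := hf
  refine ⟨hw0, hadj, hinj, ?_⟩
  intro j hj
  have hcol := (hfan j hj).1
  have hmiss := (hfan j hj).2
  refine ⟨by rw [swapc_eq_of_not_mem hS hu]; exact hcol, ?_⟩
  by_cases hwj : w j ∈ S
  · by_cases h1 : γ (j + 1) = a
    · have hnot := ha (j + 1) (by omega) (by omega) h1
      simp only [Nat.add_sub_cancel] at hnot
      exact absurd hwj hnot
    · by_cases h2 : γ (j + 1) = b
      · exact absurd hcol (by rw [h2]; exact hbu (w (j + 1)) (hadj (j + 1) (by omega)))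
      · rw [miss_swap_mem hab hwj, swk_other h1 h2]
        exact hmiss
  · rw [miss_swap_not_mem hS hwj]
    exact hmiss

variable [Fintype V] [DecidableRel G.Adj]

theorem fanDisj
    (hnt : ∀ c' : Sym2 V → Option (Fin n), Proper G n c' → ¬ ∀ e ∈ G.edgeSet, c' e ≠ none)
    (huv : G.Adj u v) (hdeg : ∀ x : V, G.degree x ≤ n) :
    ∀ p, ∀ c : Sym2 V → Option (Fin n), Good G n u v c → ∀ w γ, IsFan G u v c p w γ →
      (∀ k, Miss G c u k → Miss G c (w p) k → False) ∧
      (∀ i, i < p → ∀ k, Miss G c (w i) k → Miss G c (w p) k → False) := by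
  classical
  intro p
  induction p using Nat.strong_induction_on with
  | _ p IH =>
  have part1 : ∀ c : Sym2 V → Option (Fin n), Good G n u v c → ∀ w γ, IsFan G u v c p w γ →
      ∀ k, Miss G c u k → Miss G c (w p) k → False := by
    intro c hc w γ hf k hku hkw
    refine shift hnt hc hf ?_ hku hkw
    exact colors_inj hf (fun q hq i hi k' => (IH q hq c hc w γ (hf.pre (le_of_lt hq))).2 i hi k')
  intro c hc w γ hf
  refine ⟨part1 c hc w γ hf, ?_⟩
  intro i hip τ hti htp
  have hmu_ex : ∃ β, Miss G c u β := by
    apply exists_missing hc.1 u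
    have hsub : (G.neighborFinset u).filter (fun y => c s(u, y) ≠ none) ⊆
        (G.neighborFinset u).erase v := by
      intro y hy
      rw [Finset.mem_filter] at hy
      rw [Finset.mem_erase]
      refine ⟨?_, hy.1⟩
      rintro rfl
      exact hy.2 hc.2.1
    have hvmem : v ∈ G.neighborFinset u := by rwa [SimpleGraph.mem_neighborFinset]
    have h1 : 0 < (G.neighborFinset u).card := Finset.card_pos.mpr ⟨v, hvmem⟩
    have h2 := Finset.card_le_card hsub
    rw [Finset.card_erase_of_mem hvmem] at h2
    have h3 : (G.neighborFinset u).card ≤ n := by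
      rw [SimpleGraph.card_neighborFinset_eq_degree]
      exact hdeg u
    omega
  obtain ⟨β, hβ⟩ := hmu_ex
  have hβτ : β ≠ τ := by
    rintro rfl
    exact part1 c hc w γ hf β hβ htp
  have hab : τ ≠ β := hβτ.symm
  set H : SimpleGraph V := cGraph c τ β with hH
  have hSw : ∀ r : V, SwClosed c τ β {z | H.Reachable r z} := by
    intro r x y hx hcol
    have hne : x ≠ y := by
      intro hxy
      have hmem : s(x, y) ∈ G.edgeSet := hc.1.1 _ (by rcases hcol with h | h <;> simp [h])
      rw [hxy] at hmem
      exact G.irrefl (G.mem_edgeSet.mp hmem)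
    exact hx.trans (SimpleGraph.Adj.reachable ⟨hne, hcol⟩)
  have hone : ∀ x : V, Miss G c x τ → ∀ a b', H.Adj x a → H.Adj x b' → a = b' := by
    intro x hmx a b' ha hb'
    have hca : c s(x, a) = some β := by
      rcases ha.2 with h | h
      · exact absurd h (hmx a (G.mem_edgeSet.mp (hc.1.1 _ (by simp [h]))))
      · exact h
    have hcb : c s(x, b') = some β := by
      rcases hb'.2 with h | h
      · exact absurd h (hmx b' (G.mem_edgeSet.mp (hc.1.1 _ (by simp [h]))))
      · exact h
    exact unique_color hc.1 hca hcb
  have honeu : ∀ a b', H.Adj u a → H.Adj u b' → a = b' := by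
    intro a b' ha hb'
    have hca : c s(u, a) = some τ := by
      rcases ha.2 with h | h
      · exact h
      · exact absurd h (hβ a (G.mem_edgeSet.mp (hc.1.1 _ (by simp [h]))))
    have hcb : c s(u, b') = some τ := by
      rcases hb'.2 with h | h
      · exact h
      · exact absurd h (hβ b' (G.mem_edgeSet.mp (hc.1.1 _ (by simp [h]))))
    exact unique_color hc.1 hca hcb
  have hmax : ∀ x y₁ y₂, H.Adj x y₁ → H.Adj x y₂ → y₁ ≠ y₂ → ∀ z, H.Adj x z → z = y₁ ∨ z = y₂ := by
    intro x y₁ y₂ h1 h2 hne z hz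
    rcases h1.2 with hc1 | hc1 <;> rcases h2.2 with hc2 | hc2
    · exact absurd (unique_color hc.1 hc1 hc2) hne
    · rcases hz.2 with hcz | hcz
      · exact Or.inl (unique_color hc.1 hcz hc1)
      · exact Or.inr (unique_color hc.1 hcz hc2)
    · rcases hz.2 with hcz | hcz
      · exact Or.inr (unique_color hc.1 hcz hc2)
      · exact Or.inl (unique_color hc.1 hcz hc1)
    · exact absurd (unique_color hc.1 hc1 hc2) hne
  have hγτ : ∀ j, 1 ≤ j → j ≤ p → γ j = τ → j = i + 1 := by
    intro j h1 hj he
    obtain ⟨j', rfl⟩ : ∃ j', j = j' + 1 := ⟨j - 1, by omega⟩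
    have hmj : Miss G c (w j') τ := he ▸ (hf.2.2.2 j' (by omega)).2
    by_contra hne
    have hji : j' ≠ i := by omega
    rcases lt_or_gt_of_ne hji with h | h
    · exact (IH i hip c hc w γ (hf.pre (le_of_lt hip))).2 j' h τ hmj hti
    · exact (IH j' (by omega) c hc w γ (hf.pre (by omega))).2 i h τ hti hmj
  by_cases huS : H.Reachable (w p) u
  · by_cases huS' : H.Reachable (w i) u
    · -- Case C: three endpoints of a max-degree-2 graph
      have h1 : u ≠ w i := (hf.2.1 i (le_of_lt hip)).ne
      have h2 : w p ≠ u := (hf.2.1 p le_rfl).ne'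
      have h3 : w p ≠ w i := fun h =>
        absurd (hf.2.2.1 p i le_rfl (le_of_lt hip) h) (by omega)
      exact three_endpoints hmax honeu (hone (w i) hti) (hone (w p) htp)
        h1 h2 h3 huS'.symm huS.symm
    · -- Case B1: swap the component of `w i`
      have hcl := hSw (w i)
      have hu' : u ∉ {z | H.Reachable (w i) z} := huS'
      have hfan' : IsFan G u v (swapc c τ β {z | H.Reachable (w i) z}) i w γ := by
        refine (hf.pre (le_of_lt hip)).swap hc hcl hab hu' hβ ?_
        intro j hj1 hji he
        have := hγτ j hj1 (by omega) he
        omega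
      have hgood' := hc.swap hab hcl
      have hwiS' : w i ∈ {z | H.Reachable (w i) z} := SimpleGraph.Reachable.refl _
      have hm1 : Miss G (swapc c τ β {z | H.Reachable (w i) z}) u β :=
        (miss_swap_not_mem hcl hu' β).mpr hβ
      have hm2 : Miss G (swapc c τ β {z | H.Reachable (w i) z}) (w i) β := by
        rw [miss_swap_mem hab hwiS', swk_b hab]
        exact hti
      exact (IH i hip _ hgood' w γ hfan').1 β hm1 hm2
  · have hcl := hSw (w p)
    have hu' : u ∉ {z | H.Reachable (w p) z} := huS
    by_cases hwiS : H.Reachable (w p) (w i)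
    · -- Case A2: swap the component of `w p`, use the prefix fan of length `i`
      have hfan' : IsFan G u v (swapc c τ β {z | H.Reachable (w p) z}) i w γ := by
        refine (hf.pre (le_of_lt hip)).swap hc hcl hab hu' hβ ?_
        intro j hj1 hji he
        have := hγτ j hj1 (by omega) he
        omega
      have hgood' := hc.swap hab hcl
      have hm1 : Miss G (swapc c τ β {z | H.Reachable (w p) z}) u β :=
        (miss_swap_not_mem hcl hu' β).mpr hβ
      have hwiS2 : w i ∈ {z | H.Reachable (w p) z} := hwiS
      have hm2 : Miss G (swapc c τ β {z | H.Reachable (w p) z}) (w i) β := by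
        rw [miss_swap_mem hab hwiS2, swk_b hab]
        exact hti
      exact (IH i hip _ hgood' w γ hfan').1 β hm1 hm2
    · -- Case A1: swap the component of `w p`, use the full fan
      have hfan' : IsFan G u v (swapc c τ β {z | H.Reachable (w p) z}) p w γ := by
        refine hf.swap hc hcl hab hu' hβ ?_
        intro j hj1 hjp he
        have hji := hγτ j hj1 hjp he
        subst hji
        simpa using hwiS
      have hgood' := hc.swap hab hcl
      have hwpS : w p ∈ {z | H.Reachable (w p) z} := SimpleGraph.Reachable.refl _
      have hm1 : Miss G (swapc c τ β {z | H.Reachable (w p) z}) u β :=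
        (miss_swap_not_mem hcl hu' β).mpr hβ
      have hm2 : Miss G (swapc c τ β {z | H.Reachable (w p) z}) (w p) β := by
        rw [miss_swap_mem hab hwpS, swk_b hab]
        exact htp
      exact part1 _ hgood' w γ hfan' β hm1 hm2

end Disj

section Bridge

variable [Fintype V] (G : SimpleGraph V) [DecidableRel G.Adj]

lemma no_total (hclass : G.chromaticIndex = (G.maxDegree : ℕ∞) + 1)
    (c : Sym2 V → Option (Fin G.maxDegree)) (hp : Proper G G.maxDegree c) :
    ¬ ∀ e ∈ G.edgeSet, c e ≠ none := by
  intro htot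
  have hcol : G.lineGraph.Colorable G.maxDegree := by
    refine ⟨SimpleGraph.Coloring.mk
      (fun e => (c e.1).get (Option.isSome_iff_ne_none.mpr (htot e.1 e.2))) ?_⟩
    intro e₁ e₂ hadj heq
    obtain ⟨hne, x, hx1, hx2⟩ := SimpleGraph.lineGraph_adj_iff_exists.mp hadj
    obtain ⟨y, hy⟩ := Sym2.mem_iff_exists.mp hx1
    obtain ⟨z, hz⟩ := Sym2.mem_iff_exists.mp hx2
    have hyz : y ≠ z := by
      rintro rfl
      exact hne (Subtype.ext (hy.trans hz.symm))
    have hxy : G.Adj x y := G.mem_edgeSet.mp (hy ▸ e₁.2)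
    have hxz : G.Adj x z := G.mem_edgeSet.mp (hz ▸ e₂.2)
    have hceq : c e₁.1 = c e₂.1 := by
      rw [← Option.some_get (Option.isSome_iff_ne_none.mpr (htot e₁.1 e₁.2)),
        ← Option.some_get (Option.isSome_iff_ne_none.mpr (htot e₂.1 e₂.2)), heq]
    rw [hy, hz] at hceq
    have := hp.2 x y z hyz hxy hxz hceq
    rw [← hy] at this
    exact htot e₁.1 e₁.2 this
  have hle : G.lineGraph.chromaticNumber ≤ (G.maxDegree : ℕ∞) :=
    SimpleGraph.chromaticNumber_le_iff_colorable.mpr hcol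
  rw [show G.lineGraph.chromaticNumber = G.chromaticIndex from rfl, hclass] at hle
  have : G.maxDegree + 1 ≤ G.maxDegree := by exact_mod_cast hle
  omega

lemma exists_good (hG : G.IsDeltaCritical) {u v : V} (huv : G.Adj u v) :
    ∃ c : Sym2 V → Option (Fin G.maxDegree), Good G G.maxDegree u v c := by
  classical
  obtain ⟨-, hclass, hcrit⟩ := hG
  have hlt := hcrit s(u, v) (G.mem_edgeSet.mpr huv)
  rw [hclass] at hlt
  have hle : (G.deleteEdges {s(u, v)}).chromaticIndex ≤ (G.maxDegree : ℕ∞) :=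
    (ENat.lt_add_one_iff (ENat.coe_ne_top _)).mp hlt
  have hcol : (G.deleteEdges {s(u, v)}).lineGraph.Colorable G.maxDegree :=
    SimpleGraph.chromaticNumber_le_iff_colorable.mp hle
  obtain ⟨col⟩ := hcol
  refine ⟨fun e => if h : e ∈ (G.deleteEdges {s(u, v)}).edgeSet then some (col ⟨e, h⟩)
    else none, ⟨?_, ?_⟩, ?_, ?_⟩
  · intro e he
    by_cases h : e ∈ (G.deleteEdges {s(u, v)}).edgeSet
    · have : e ∈ G.edgeSet \ {s(u, v)} := by rwa [← SimpleGraph.edgeSet_deleteEdges]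
      exact this.1
    · dsimp only at he
      rw [dif_neg h] at he
      exact absurd rfl he
  · intro x y z hyz hxy hxz heq
    dsimp only at heq ⊢
    by_cases h1 : s(x, y) ∈ (G.deleteEdges {s(u, v)}).edgeSet
    · by_cases h2 : s(x, z) ∈ (G.deleteEdges {s(u, v)}).edgeSet
      · exfalso
        rw [dif_pos h1, dif_pos h2] at heq
        have hadj : (G.deleteEdges {s(u, v)}).lineGraph.Adj ⟨s(x, y), h1⟩ ⟨s(x, z), h2⟩ := by
          rw [SimpleGraph.lineGraph_adj_iff_exists]
          refine ⟨?_, x, Sym2.mem_mk_left x y, Sym2.mem_mk_left x z⟩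
          intro h
          exact hyz (Sym2.congr_right.mp (congrArg Subtype.val h))
        exact col.valid hadj (Option.some_injective _ heq)
      · rw [dif_pos h1, dif_neg h2] at heq
        exact absurd heq (Option.some_ne_none _)
    · rw [dif_neg h1]
  · dsimp only
    rw [dif_neg]
    rw [SimpleGraph.edgeSet_deleteEdges]
    simp
  · intro e he hne
    dsimp only
    have hmem : e ∈ (G.deleteEdges {s(u, v)}).edgeSet := by
      rw [SimpleGraph.edgeSet_deleteEdges]
      exact ⟨he, by simpa using hne⟩
    rw [dif_pos hmem]
    exact Option.some_ne_none _

end Bridge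

end VALaux

/-- Vizing's Adjacency Lemma, part (b). -/
theorem vizing_adjacency_lemma_b [Fintype V] (G : SimpleGraph V) [DecidableRel G.Adj]
    (hG : G.IsDeltaCritical) {u v : V} (huv : G.Adj u v) (hv : G.degree v = G.maxDegree) :
    2 ≤ ((G.neighborFinset u).filter fun z => G.degree z = G.maxDegree).card := by
  classical
  by_contra hlt
  push_neg at hlt
  have hvmem : v ∈ (G.neighborFinset u).filter fun z => G.degree z = G.maxDegree := by
    rw [Finset.mem_filter, SimpleGraph.mem_neighborFinset]
    exact ⟨huv, hv⟩
  have hpos : 0 < ((G.neighborFinset u).filter fun z => G.degree z = G.maxDegree).card :=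
    Finset.card_pos.mpr ⟨v, hvmem⟩
  have hcard1 : ((G.neighborFinset u).filter fun z => G.degree z = G.maxDegree).card = 1 := by
    omega
  obtain ⟨a, ha⟩ := Finset.card_eq_one.mp hcard1
  have hva : v = a := by
    rw [ha] at hvmem
    simpa using hvmem
  subst hva
  have hsmall : ∀ z, G.Adj u z → z ≠ v → G.degree z < G.maxDegree := by
    intro z hz hzv
    rcases lt_or_eq_of_le (G.degree_le_maxDegree z) with h | h
    · exact h
    · exfalso
      apply hzv
      have : z ∈ (G.neighborFinset u).filter fun z => G.degree z = G.maxDegree := by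
        rw [Finset.mem_filter, SimpleGraph.mem_neighborFinset]
        exact ⟨hz, h⟩
      rw [ha] at this
      simpa using this
  set n := G.maxDegree with hn
  have hnt : ∀ c' : Sym2 V → Option (Fin n), VALaux.Proper G n c' →
      ¬ ∀ e ∈ G.edgeSet, c' e ≠ none := fun c' hp => VALaux.no_total G hG.2.1 c' hp
  obtain ⟨c, hgood⟩ := VALaux.exists_good G hG huv
  have hdeg : ∀ x : V, G.degree x ≤ n := fun x => G.degree_le_maxDegree x
  have hfd := VALaux.fanDisj hnt huv hdeg
  have hn1 : 1 ≤ n := by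
    have : 0 < G.degree v := by
      rw [SimpleGraph.degree_pos_iff_exists_adj]
      exact ⟨u, huv.symm⟩
    omega
  -- missing colors at fan endpoints
  have hmiss_end : ∀ (w : ℕ → V) (γ : ℕ → Fin n) (p : ℕ), VALaux.IsFan G u v c p w γ →
      ∃ τ, VALaux.Miss G c (w p) τ := by
    intro w γ p hf
    apply VALaux.exists_missing hgood.1 (w p)
    rcases Nat.eq_zero_or_pos p with rfl | hp
    · rw [hf.1]
      have hsub : (G.neighborFinset v).filter (fun y => c s(v, y) ≠ none) ⊆
          (G.neighborFinset v).erase u := by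
        intro y hy
        rw [Finset.mem_filter] at hy
        rw [Finset.mem_erase]
        refine ⟨?_, hy.1⟩
        rintro rfl
        apply hy.2
        rw [Sym2.eq_swap]
        exact hgood.2.1
      have humem : u ∈ G.neighborFinset v := by
        rw [SimpleGraph.mem_neighborFinset]
        exact huv.symm
      have h2 := Finset.card_le_card hsub
      rw [Finset.card_erase_of_mem humem, SimpleGraph.card_neighborFinset_eq_degree, hv] at h2
      omega
    · have hwv : w p ≠ v := by
        intro h
        have := hf.2.2.1 p 0 le_rfl (Nat.zero_le _) (by rw [h, hf.1])
        omega
      have hdlt : G.degree (w p) < n := hsmall (w p) (hf.2.1 p le_rfl) hwv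
      have h2 := Finset.card_le_card
        (Finset.filter_subset (fun y => c s(w p, y) ≠ none) (G.neighborFinset (w p)))
      rw [SimpleGraph.card_neighborFinset_eq_degree] at h2
      omega
  -- fans of every length exist
  have hfans : ∀ p, ∃ w γ, VALaux.IsFan G u v c p w γ := by
    intro p
    induction p with
    | zero =>
      refine ⟨fun _ => v, fun _ => ⟨0, hn1⟩, rfl, fun j _ => huv, ?_, ?_⟩
      · intro j k hj hk _
        omega
      · intro j hj
        omega
    | succ p ih =>
      obtain ⟨w, γ, hf⟩ := ih
      obtain ⟨τ, hτ⟩ := hmiss_end w γ p hf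
      have hnotu : ¬ VALaux.Miss G c u τ := fun h => (hfd p c hgood w γ hf).1 τ h hτ
      rw [VALaux.Miss] at hnotu
      push_neg at hnotu
      obtain ⟨y, hy, hcy⟩ := hnotu
      have hynew : ∀ j, j ≤ p → y ≠ w j := by
        intro j hj hyw
        rcases Nat.eq_zero_or_pos j with rfl | hj1
        · rw [hf.1] at hyw
          rw [hyw, hgood.2.1] at hcy
          exact nomatch hcy
        · obtain ⟨j', rfl⟩ : ∃ j', j = j' + 1 := ⟨j - 1, by omega⟩
          have hcolj : c s(u, w (j' + 1)) = some (γ (j' + 1)) := (hf.2.2.2 j' (by omega)).1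
          rw [hyw, hcolj] at hcy
          have hγτ : γ (j' + 1) = τ := Option.some_injective _ hcy
          have hmj : VALaux.Miss G c (w j') τ := hγτ ▸ (hf.2.2.2 j' (by omega)).2
          exact (hfd p c hgood w γ hf).2 j' (by omega) τ hmj hτ
      refine ⟨fun j => if j = p + 1 then y else w j, fun j => if j = p + 1 then τ else γ j,
        ?_, ?_, ?_, ?_⟩
      · simp only [Nat.zero_ne_add_one, if_neg]
        exact hf.1
      · intro j hj
        by_cases h : j = p + 1
        · simpa [h] using hy
        · simpa [h] using hf.2.1 j (by omega)
      · intro j k hj hk he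
        dsimp only at he
        by_cases h1 : j = p + 1 <;> by_cases h2 : k = p + 1
        · omega
        · rw [if_pos h1, if_neg h2] at he
          exact absurd he (hynew k (by omega))
        · rw [if_neg h1, if_pos h2] at he
          exact absurd he.symm (hynew j (by omega))
        · rw [if_neg h1, if_neg h2] at he
          exact hf.2.2.1 j k (by omega) (by omega) he
      · intro j hj
        dsimp only
        by_cases h : j = p
        · subst h
          rw [if_pos rfl, if_pos rfl, if_neg (by omega : ¬ j = j + 1)]
          exact ⟨hcy, hτ⟩
        · rw [if_neg (by omega : ¬ j + 1 = p + 1), if_neg (by omega : ¬ j + 1 = p + 1),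
            if_neg (by omega : ¬ j = p + 1)]
          exact hf.2.2.2 j (by omega)
  -- final contradiction by counting colors
  obtain ⟨w, γ, hf⟩ := hfans (n + 1)
  have hinj : ∀ j k, 1 ≤ j → j ≤ n + 1 → 1 ≤ k → k ≤ n + 1 → γ j = γ k → j = k :=
    VALaux.colors_inj hf (fun q hq i2 hi k =>
      (hfd q c hgood w γ (hf.pre (le_of_lt hq))).2 i2 hi k)
  have hFinj : Function.Injective (fun j : Fin (n + 1) => γ (j.val + 1)) := by
    intro j k he
    have := hinj (j.val + 1) (k.val + 1) (by omega) (by omega) (by omega) (by omega) he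
    exact Fin.ext (by omega)
  have hle := Fintype.card_le_of_injective _ hFinj
  simp only [Fintype.card_fin] at hle
  omega
end

section
/- Let G be a Δ-critical graph and let uv be an edge of G with d(u) + d(v) = Δ + 2. Then every vertex of N({u,v}) \ {u,v} (i.e., every vertex other than u and v that is adjacent to u or v) has degree Δ. -/
open SimpleGraph Finset

variable {V : Type*}

namespace VAL

variable {V : Type*} [DecidableEq V]



/-- A (symmetric, proper) edge `k`-coloring presented as a function on pairs. -/
def Good (A : SimpleGraph V) (k : ℕ) (C : V → V → Fin k) : Prop :=
  (∀ x y, C x y = C y x) ∧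
    ∀ ⦃x y z : V⦄, A.Adj x y → A.Adj x z → y ≠ z → C x y ≠ C x z

/-- Color `α` is missing at `x`. -/
def Miss (A : SimpleGraph V) {k : ℕ} (C : V → V → Fin k) (x : V) (α : Fin k) : Prop :=
  ∀ ⦃y⦄, A.Adj x y → C x y ≠ α

lemma good_of_colorable {A : SimpleGraph V} {k : ℕ} (hk : 0 < k)
    (h : A.lineGraph.Colorable k) : ∃ C, Good A k C := by
  classical
  obtain ⟨col⟩ := h
  refine ⟨fun x y => if h : A.Adj x y then col ⟨s(x,y), h⟩ else ⟨0, hk⟩, ?_, ?_⟩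
  · intro x y
    by_cases h : A.Adj x y
    · have h' : A.Adj y x := h.symm
      simp only [dif_pos h, dif_pos h']
      congr 1
      exact Subtype.ext (Sym2.eq_swap)
    · have h' : ¬ A.Adj y x := fun hc => h hc.symm
      simp [h, h']
  · intro x y z hxy hxz hyz
    simp only [dif_pos hxy, dif_pos hxz]
    have hne : (⟨s(x,y), hxy⟩ : A.edgeSet) ≠ ⟨s(x,z), hxz⟩ := by
      intro hc
      have := Subtype.mk.injEq (p := fun e => e ∈ A.edgeSet) s(x,y) hxy s(x,z) hxz ▸ hc
      have h2 : s(x,y) = s(x,z) := congrArg Subtype.val hc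
      rw [Sym2.eq_iff] at h2
      rcases h2 with ⟨-, h2⟩ | ⟨h2, -⟩
      · exact hyz h2
      · exact A.loopless.irrefl x (h2 ▸ hxz)
    have hadj : A.lineGraph.Adj ⟨s(x,y), hxy⟩ ⟨s(x,z), hxz⟩ := by
      refine ⟨hne, ⟨x, ?_⟩⟩
      simp [Sym2.mem_iff]
    exact col.valid hadj

lemma colorable_of_good {A : SimpleGraph V} {k : ℕ} {C : V → V → Fin k}
    (hC : Good A k C) : A.lineGraph.Colorable k := by
  classical
  refine ⟨Coloring.mk (fun e => Sym2.lift ⟨fun x y => C x y, fun a b => hC.1 a b⟩ e.1) ?_⟩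
  rintro ⟨e₁, he₁⟩ ⟨e₂, he₂⟩ ⟨hne, w, hw1, hw2⟩
  obtain ⟨a, rfl⟩ := Sym2.mem_iff_exists.1 hw1
  obtain ⟨b, rfl⟩ := Sym2.mem_iff_exists.1 hw2
  have hab : a ≠ b := by
    rintro rfl
    exact hne (Subtype.ext rfl)
  simp only [Sym2.lift_mk]
  exact hC.2 (A.mem_edgeSet.1 he₁) (A.mem_edgeSet.1 he₂) hab

lemma exists_miss [Fintype V] {A : SimpleGraph V} [DecidableRel A.Adj] {k : ℕ}
    {C : V → V → Fin k} {x : V} (hx : A.degree x < k) : ∃ α, Miss A C x α := by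
  classical
  have hcard : ((A.neighborFinset x).image (fun y => C x y)).card < Fintype.card (Fin k) := by
    calc ((A.neighborFinset x).image (fun y => C x y)).card ≤ (A.neighborFinset x).card :=
          Finset.card_image_le
    _ < k := hx
    _ = Fintype.card (Fin k) := (Fintype.card_fin k).symm
  have hne : ((A.neighborFinset x).image (fun y => C x y)) ≠ Finset.univ := by
    intro h
    rw [h, Finset.card_univ] at hcard
    exact lt_irrefl _ hcard
  obtain ⟨α, hα⟩ : ∃ α, α ∉ (A.neighborFinset x).image (fun y => C x y) := by
    by_contra hc
    push_neg at hc
    exact hne (Finset.eq_univ_iff_forall.2 hc)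
  refine ⟨α, fun y hy hc => hα ?_⟩
  exact Finset.mem_image.2 ⟨y, by simpa using hy, hc⟩





/-- Recolor the pair `{a,b}` with color `β`. -/
def upd {k : ℕ} (C : V → V → Fin k) (a b : V) (β : Fin k) : V → V → Fin k :=
  fun x y => if (x = a ∧ y = b) ∨ (x = b ∧ y = a) then β else C x y

lemma upd_eq_of_ne {k : ℕ} {C : V → V → Fin k} {a b x : V} (β : Fin k)
    (hxa : x ≠ a) (hxb : x ≠ b) : ∀ y, upd C a b β x y = C x y := by
  intro y
  simp [upd, hxa, hxb]

lemma upd_good {A : SimpleGraph V} {k : ℕ} {C : V → V → Fin k} {a b : V} {β : Fin k}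
    (hab : A.Adj a b) (hsymm : ∀ x y, C x y = C y x)
    (hA' : ∀ ⦃x y z : V⦄, A.Adj x y → A.Adj x z → y ≠ z →
      ¬((x = a ∧ y = b) ∨ (x = b ∧ y = a)) → ¬((x = a ∧ z = b) ∨ (x = b ∧ z = a)) →
        C x y ≠ C x z)
    (hma : ∀ y, A.Adj a y → y ≠ b → C a y ≠ β)
    (hmb : ∀ y, A.Adj b y → y ≠ a → C b y ≠ β) :
    Good A k (upd C a b β) := by
  have hne : a ≠ b := hab.ne
  constructor
  · intro x y
    by_cases h : (x = a ∧ y = b) ∨ (x = b ∧ y = a)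
    · have h' : (y = a ∧ x = b) ∨ (y = b ∧ x = a) := by tauto
      simp only [upd, if_pos h, if_pos h']
    · have h' : ¬((y = a ∧ x = b) ∨ (y = b ∧ x = a)) := by tauto
      simp only [upd, if_neg h, if_neg h']
      exact hsymm x y
  · intro x y z hxy hxz hyz
    by_cases h1 : (x = a ∧ y = b) ∨ (x = b ∧ y = a) <;>
      by_cases h2 : (x = a ∧ z = b) ∨ (x = b ∧ z = a)
    · exfalso
      rcases h1 with ⟨hx1, hy1⟩ | ⟨hx1, hy1⟩ <;> rcases h2 with ⟨hx2, hz2⟩ | ⟨hx2, hz2⟩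
      · exact hyz (hy1.trans hz2.symm)
      · exact hne (hx1.symm.trans hx2)
      · exact hne (hx2.symm.trans hx1)
      · exact hyz (hy1.trans hz2.symm)
    · simp only [upd, if_pos h1, if_neg h2]
      intro hc
      rcases h1 with ⟨hx1, hy1⟩ | ⟨hx1, hy1⟩ <;> subst hx1
      · have hzb : z ≠ b := fun h => h2 (Or.inl ⟨rfl, h⟩)
        exact hma z hxz hzb hc.symm
      · have hza : z ≠ a := fun h => h2 (Or.inr ⟨rfl, h⟩)
        exact hmb z hxz hza hc.symm
    · simp only [upd, if_neg h1, if_pos h2]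
      intro hc
      rcases h2 with ⟨hx2, hz2⟩ | ⟨hx2, hz2⟩ <;> subst hx2
      · have hyb : y ≠ b := fun h => h1 (Or.inl ⟨rfl, h⟩)
        exact hma y hxy hyb hc
      · have hya : y ≠ a := fun h => h1 (Or.inr ⟨rfl, h⟩)
        exact hmb y hxy hya hc
    · simp only [upd, if_neg h1, if_neg h2]
      exact hA' hxy hxz hyz h1 h2

/-- After recoloring `{a,b}` to `β`, the old color of `ab` is missing at `a`. -/
lemma upd_miss {A : SimpleGraph V} {k : ℕ} {C : V → V → Fin k} {a b : V} {β : Fin k}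
    (hC : Good A k C) (hab : A.Adj a b) (hβ : C a b ≠ β) :
    Miss A (upd C a b β) a (C a b) := by
  intro y hy
  by_cases h : y = b
  · have hcond : (a = a ∧ y = b) ∨ (a = b ∧ y = a) := Or.inl ⟨rfl, h⟩
    unfold upd
    rw [if_pos hcond]
    exact fun hc => hβ hc.symm
  · have h' : ¬((a = a ∧ y = b) ∨ (a = b ∧ y = a)) := by
      rintro (⟨-, h1⟩ | ⟨h1, -⟩)
      · exact h h1
      · exact hab.ne h1
    unfold upd
    rw [if_neg h']
    exact hC.2 hy hab h





open scoped Classical in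
/-- Swap colors `α`,`γ` via `σ = Equiv.swap α γ` on the component of `z` in `H`. -/
noncomputable def swapC {k : ℕ} (H : SimpleGraph V) (z : V) (σ : Fin k → Fin k)
    (C : V → V → Fin k) : V → V → Fin k :=
  fun x y => if H.Adj x y ∧ H.Reachable x z then σ (C x y) else C x y

section Swap

variable {A : SimpleGraph V} {k : ℕ} {C : V → V → Fin k} {α γ : Fin k} {H : SimpleGraph V} {z : V}

lemma reach_transfer {x y : V} (h : H.Adj x y) (hx : H.Reachable x z) : H.Reachable y z :=
  (h.symm.reachable).trans hx

lemma swap_good (hC : Good A k C) (hαγ : α ≠ γ)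
    (hH : ∀ x y, H.Adj x y ↔ A.Adj x y ∧ (C x y = α ∨ C x y = γ)) :
    Good A k (swapC H z (Equiv.swap α γ) C) := by
  classical
  have hcond : ∀ x y, (H.Adj x y ∧ H.Reachable x z) ↔ (H.Adj y x ∧ H.Reachable y z) := by
    intro x y
    constructor
    · rintro ⟨h, hx⟩; exact ⟨h.symm, reach_transfer h hx⟩
    · rintro ⟨h, hy⟩; exact ⟨h.symm, reach_transfer h hy⟩
  constructor
  · intro x y
    unfold swapC
    by_cases h : H.Adj x y ∧ H.Reachable x z
    · rw [if_pos h, if_pos ((hcond x y).1 h), hC.1 x y]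
    · rw [if_neg h, if_neg (fun hc => h ((hcond y x).1 hc)), hC.1 x y]
  · intro x y w hxy hxw hyw
    unfold swapC
    by_cases h1 : H.Adj x y ∧ H.Reachable x z <;> by_cases h2 : H.Adj x w ∧ H.Reachable x z
    · rw [if_pos h1, if_pos h2]
      exact fun hc => hC.2 hxy hxw hyw ((Equiv.swap α γ).injective hc)
    · rw [if_pos h1, if_neg h2]
      have hxy' : C x y = α ∨ C x y = γ := ((hH x y).1 h1.1).2
      have hxw' : ¬(C x w = α ∨ C x w = γ) := by
        intro hc
        exact h2 ⟨(hH x w).2 ⟨hxw, hc⟩, h1.2⟩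
      rcases hxy' with h | h <;> rw [h]
      · rw [Equiv.swap_apply_left]
        exact fun hc => hxw' (Or.inr hc.symm)
      · rw [Equiv.swap_apply_right]
        exact fun hc => hxw' (Or.inl hc.symm)
    · rw [if_neg h1, if_pos h2]
      have hxw' : C x w = α ∨ C x w = γ := ((hH x w).1 h2.1).2
      have hxy' : ¬(C x y = α ∨ C x y = γ) := by
        intro hc
        exact h1 ⟨(hH x y).2 ⟨hxy, hc⟩, h2.2⟩
      rcases hxw' with h | h <;> rw [h]
      · rw [Equiv.swap_apply_left]
        exact fun hc => hxy' (Or.inr hc)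
      · rw [Equiv.swap_apply_right]
        exact fun hc => hxy' (Or.inl hc)
    · rw [if_neg h1, if_neg h2]
      exact hC.2 hxy hxw hyw

lemma swap_eq_of_not_reach {w : V} (hw : ¬H.Reachable w z) :
    ∀ y, swapC H z (Equiv.swap α γ) C w y = C w y := by
  intro y
  unfold swapC
  rw [if_neg (fun hc => hw hc.2)]

lemma swap_miss_of_reach (hC : Good A k C) (hαγ : α ≠ γ)
    (hH : ∀ x y, H.Adj x y ↔ A.Adj x y ∧ (C x y = α ∨ C x y = γ))
    {w : V} (hr : H.Reachable w z) (hw : Miss A C w α) :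
    Miss A (swapC H z (Equiv.swap α γ) C) w γ := by
  classical
  intro y hy
  unfold swapC
  by_cases h : H.Adj w y ∧ H.Reachable w z
  · rw [if_pos h]
    have : C w y = γ := ((hH w y).1 h.1).2.resolve_left (hw hy)
    rw [this, Equiv.swap_apply_right]
    exact fun hc => hαγ hc
  · rw [if_neg h]
    intro hc
    exact h ⟨(hH w y).2 ⟨hy, Or.inr hc⟩, hr⟩

lemma swap_miss_of_reach' (hC : Good A k C) (hαγ : α ≠ γ)
    (hH : ∀ x y, H.Adj x y ↔ A.Adj x y ∧ (C x y = α ∨ C x y = γ))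
    {w : V} (hr : H.Reachable w z) (hw : Miss A C w γ) :
    Miss A (swapC H z (Equiv.swap α γ) C) w α := by
  classical
  intro y hy
  unfold swapC
  by_cases h : H.Adj w y ∧ H.Reachable w z
  · rw [if_pos h]
    have : C w y = α := ((hH w y).1 h.1).2.resolve_right (hw hy)
    rw [this, Equiv.swap_apply_left]
    exact fun hc => hαγ hc.symm
  · rw [if_neg h]
    intro hc
    exact h ⟨(hH w y).2 ⟨hy, Or.inl hc⟩, hr⟩

lemma H_deg_le_two [Fintype V] [DecidableRel H.Adj] (hC : Good A k C)
    (hH : ∀ x y, H.Adj x y ↔ A.Adj x y ∧ (C x y = α ∨ C x y = γ)) (w : V) :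
    H.degree w ≤ 2 := by
  rw [← card_neighborFinset_eq_degree]
  have : (H.neighborFinset w).card ≤ ({α, γ} : Finset (Fin k)).card := by
    apply Finset.card_le_card_of_injOn (fun y => C w y)
    · intro y hy
      have := (hH w y).1 ((SimpleGraph.mem_neighborFinset H w _).1 hy)
      simp only [Finset.mem_coe, Finset.mem_insert, Finset.mem_singleton]
      exact this.2
    · intro y hy y' hy' hcc
      by_contra hne
      exact hC.2 ((hH w y).1 ((SimpleGraph.mem_neighborFinset H w _).1 hy)).1
        ((hH w y').1 ((SimpleGraph.mem_neighborFinset H w _).1 hy')).1 hne hcc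
  calc (H.neighborFinset w).card ≤ ({α, γ} : Finset (Fin k)).card := this
  _ ≤ 2 := Finset.card_insert_le _ _ |>.trans (by simp)

lemma H_deg_le_one [Fintype V] [DecidableRel H.Adj] (hC : Good A k C)
    (hH : ∀ x y, H.Adj x y ↔ A.Adj x y ∧ (C x y = α ∨ C x y = γ))
    {w : V} {δ : Fin k} (hδ : δ = α ∨ δ = γ) (hw : Miss A C w δ) :
    H.degree w ≤ 1 := by
  rw [← card_neighborFinset_eq_degree]
  apply Finset.card_le_one.2
  intro y hy y' hy'
  have h1 := (hH w y).1 ((SimpleGraph.mem_neighborFinset H w _).1 hy)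
  have h2 := (hH w y').1 ((SimpleGraph.mem_neighborFinset H w _).1 hy')
  by_contra hne
  apply hC.2 h1.1 h2.1 hne
  rcases hδ with rfl | rfl
  · have e1 : C w y = γ := h1.2.resolve_left (hw h1.1)
    have e2 : C w y' = γ := h2.2.resolve_left (hw h2.1)
    rw [e1, e2]
  · have e1 : C w y = α := h1.2.resolve_right (hw h1.1)
    have e2 : C w y' = α := h2.2.resolve_right (hw h2.1)
    rw [e1, e2]

end Swap


lemma reach_transfer' {H : SimpleGraph V} {z x y : V} (h : H.Adj x y)
    (hx : H.Reachable x z) : H.Reachable y z :=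
  (h.symm.reachable).trans hx

lemma three_leaves [Fintype V] (H : SimpleGraph V) [DecidableRel H.Adj] {u v z : V}
    (hdeg : ∀ x, H.degree x ≤ 2) (hu : H.degree u ≤ 1) (hv : H.degree v ≤ 1)
    (hz : H.degree z ≤ 1) (huv : u ≠ v) (huz : u ≠ z) (hvz : v ≠ z)
    (hru : H.Reachable u z) (hrv : H.Reachable v z) : False := by
  classical
  set H' : SimpleGraph V := SimpleGraph.fromRel (fun x y => H.Adj x y ∧ H.Reachable x z) with hH'def
  have hH' : ∀ x y, H'.Adj x y ↔ H.Adj x y ∧ H.Reachable x z := by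
    intro x y
    rw [hH'def, SimpleGraph.fromRel_adj]
    constructor
    · rintro ⟨hne, (⟨h, hr⟩ | ⟨h, hr⟩)⟩
      · exact ⟨h, hr⟩
      · exact ⟨h.symm, reach_transfer' h hr⟩
    · rintro ⟨h, hr⟩
      exact ⟨h.ne, Or.inl ⟨h, hr⟩⟩
  -- transfer reachability to H'
  have htrans : ∀ x, H.Reachable x z → H'.Reachable x z := by
    intro x hr
    obtain ⟨p⟩ := hr
    refine ⟨p.transfer H' ?_⟩
    intro e he
    induction e with
    | _ a b =>
      rw [SimpleGraph.mem_edgeSet, hH']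
      refine ⟨p.adj_of_mem_edges he, ?_⟩
      have ha : a ∈ p.support := p.fst_mem_support_of_mem_edges he
      exact ⟨p.dropUntil a ha⟩
  -- the component of z as a finset
  set S : Finset V := Finset.univ.filter (fun x => H.Reachable x z) with hSdef
  have hmemS : ∀ x, x ∈ S ↔ H.Reachable x z := by
    intro x; rw [hSdef]; simp
  have hdegeq : ∀ x ∈ S, H'.degree x = H.degree x := by
    intro x hx
    rw [← card_neighborFinset_eq_degree, ← card_neighborFinset_eq_degree]
    congr 1
    ext y
    rw [SimpleGraph.mem_neighborFinset, SimpleGraph.mem_neighborFinset, hH']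
    exact ⟨fun h => h.1, fun h => ⟨h, (hmemS x).1 hx⟩⟩
  have hdegzero : ∀ x ∉ S, H'.degree x = 0 := by
    intro x hx
    rw [← card_neighborFinset_eq_degree, Finset.card_eq_zero]
    ext y
    simp only [SimpleGraph.mem_neighborFinset, Finset.notMem_empty, iff_false]
    intro h
    exact hx ((hmemS x).2 ((hH' x y).1 h).2)
  -- handshake
  have hh : ∑ x : V, H'.degree x = 2 * H'.edgeFinset.card :=
    SimpleGraph.sum_degrees_eq_twice_card_edges H'
  have hsum : ∑ x ∈ S, H.degree x = ∑ x : V, H'.degree x := by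
    rw [← Finset.sum_subset (Finset.subset_univ S) (fun x _ hx => hdegzero x hx)]
    exact Finset.sum_congr rfl (fun x hx => (hdegeq x hx).symm)
  rw [hh] at hsum
  -- membership of u, v, z in S
  have huS : u ∈ S := (hmemS u).2 hru
  have hvS : v ∈ S := (hmemS v).2 hrv
  have hzS : z ∈ S := (hmemS z).2 (SimpleGraph.Reachable.refl z)
  set T : Finset V := {u, v, z} with hTdef
  have hTS : T ⊆ S := by
    intro x hx
    rw [hTdef] at hx
    simp only [Finset.mem_insert, Finset.mem_singleton] at hx
    rcases hx with rfl | rfl | rfl <;> assumption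
  have hcardT : T.card = 3 := by
    rw [hTdef, Finset.card_insert_of_notMem (by simp [huv, huz]),
      Finset.card_insert_of_notMem (by simp [hvz]), Finset.card_singleton]
  have hcardS : 3 ≤ S.card := hcardT ▸ Finset.card_le_card hTS
  -- upper bound on the degree sum
  have hupper : ∑ x ∈ S, H.degree x ≤ 2 * S.card - 3 := by
    rw [← Finset.sum_sdiff hTS]
    have hT3 : ∑ x ∈ T, H.degree x ≤ 3 := by
      rw [hTdef, Finset.sum_insert (by simp [huv, huz]),
        Finset.sum_insert (by simp [hvz]), Finset.sum_singleton]
      omega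
    have hST : ∑ x ∈ S \ T, H.degree x ≤ 2 * (S.card - 3) := by
      calc ∑ x ∈ S \ T, H.degree x ≤ (S \ T).card * 2 :=
            Finset.sum_le_card_nsmul _ _ 2 (fun x _ => hdeg x)
      _ = 2 * (S.card - 3) := by
          rw [Finset.card_sdiff_of_subset hTS, hcardT]; ring
    omega
  -- lower bound: injection from S.erase z into the edges of H'
  have key : ∀ x ∈ S.erase z, ∃ w, H'.Adj x w ∧ H'.dist w z < H'.dist x z := by
    intro x hx
    have hxz : x ≠ z := Finset.ne_of_mem_erase hx
    have hr' : H'.Reachable x z := htrans x ((hmemS x).1 (Finset.mem_of_mem_erase hx))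
    obtain ⟨p, hp⟩ := hr'.exists_walk_length_eq_dist
    cases p with
    | nil => exact absurd rfl hxz
    | cons h q =>
      refine ⟨_, h, ?_⟩
      have hq : H'.dist _ z ≤ q.length := SimpleGraph.dist_le q
      rw [SimpleGraph.Walk.length_cons] at hp
      omega
  choose! w hw1 hw2 using key
  have hinj : S.card - 1 ≤ H'.edgeFinset.card := by
    have hcard : (S.erase z).card ≤ H'.edgeFinset.card := by
      apply Finset.card_le_card_of_injOn (fun x => s(x, w x))
      · intro x hx
        rw [Finset.mem_coe, SimpleGraph.mem_edgeFinset]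
        exact hw1 x hx
      · intro x hx x' hx' hcc
        simp only [Sym2.eq_iff] at hcc
        rcases hcc with ⟨h1, -⟩ | ⟨h1, h2⟩
        · exact h1
        · exfalso
          have d1 := hw2 x hx
          have d2 := hw2 x' hx'
          rw [← h1] at d2
          rw [h2] at d1
          omega
    rw [Finset.card_erase_of_mem hzS] at hcard
    exact hcard
  omega


section Main

variable [Fintype V] {G : SimpleGraph V} [DecidableRel G.Adj]

lemma G'_adj {u v x y : V} (huv : u ≠ v) :
    (G.deleteEdges {s(u, v)}).Adj x y ↔
      G.Adj x y ∧ ¬((x = u ∧ y = v) ∨ (x = v ∧ y = u)) := by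
  rw [SimpleGraph.deleteEdges_adj, Set.mem_singleton_iff, Sym2.eq_iff]

/-- A good coloring of `G - uv` with `k < χ'(G)` colors cannot miss a common color
at `u` and `v`. -/
lemma noExtend {u v : V} (huv : G.Adj u v) {k : ℕ}
    (hk : (k : ℕ∞) < G.lineGraph.chromaticNumber) {C : V → V → Fin k} {β : Fin k}
    (hC : Good (G.deleteEdges {s(u, v)}) k C)
    (hu : Miss (G.deleteEdges {s(u, v)}) C u β)
    (hv : Miss (G.deleteEdges {s(u, v)}) C v β) : False := by
  classical
  have hG : Good G k (upd C u v β) := by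
    refine upd_good huv hC.1 ?_ ?_ ?_
    · intro x y w hxy hxw hyw h1 h2
      exact hC.2 ((G'_adj huv.ne).2 ⟨hxy, h1⟩) ((G'_adj huv.ne).2 ⟨hxw, h2⟩) hyw
    · intro y hy hyv
      refine hu ((G'_adj huv.ne).2 ⟨hy, ?_⟩)
      rintro (⟨-, h⟩ | ⟨h, -⟩)
      · exact hyv h
      · exact huv.ne h
    · intro y hy hyu
      refine hv ((G'_adj huv.ne).2 ⟨hy, ?_⟩)
      rintro (⟨h, -⟩ | ⟨-, h⟩)
      · exact huv.ne h.symm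
      · exact hyu h
  have := (colorable_of_good hG).chromaticNumber_le
  exact absurd (lt_of_lt_of_le hk this) (lt_irrefl _)

end Main

section Part

variable [Fintype V] {A : SimpleGraph V} [DecidableRel A.Adj] {k : ℕ} {C : V → V → Fin k}

/-- If no color can be missed at both `u` and `v`, and the degrees are small enough,
every color is missing at `u` or at `v`. -/
lemma part (hC : Good A k C) {u v : V}
    (hdisj : ∀ β, Miss A C u β → Miss A C v β → False)
    (hsum : A.degree u + A.degree v ≤ k) :
    ∀ β, Miss A C u β ∨ Miss A C v β := by
  classical
  set MU : Finset (Fin k) := Finset.univ \ (A.neighborFinset u).image (fun y => C u y) with hMU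
  set MV : Finset (Fin k) := Finset.univ \ (A.neighborFinset v).image (fun y => C v y) with hMV
  have hmem : ∀ (x : V) (β : Fin k),
      (β ∈ Finset.univ \ (A.neighborFinset x).image (fun y => C x y)) ↔ Miss A C x β := by
    intro x β
    rw [Finset.mem_sdiff]
    simp only [Finset.mem_univ, true_and, Finset.mem_image, not_exists]
    constructor
    · intro h y hy
      have := h y
      rw [not_and] at this
      exact this (SimpleGraph.mem_neighborFinset A x y |>.2 hy)
    · intro h y
      rintro ⟨hy, hc⟩
      exact h ((SimpleGraph.mem_neighborFinset A x y).1 hy) hc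
  have hcard : ∀ x : V, (Finset.univ \ (A.neighborFinset x).image (fun y => C x y)).card
      = k - A.degree x := by
    intro x
    rw [Finset.card_sdiff_of_subset (Finset.subset_univ _), Finset.card_univ, Fintype.card_fin]
    congr 1
    rw [Finset.card_image_of_injOn, card_neighborFinset_eq_degree]
    intro y hy y' hy' hcc
    by_contra hne
    exact hC.2 ((SimpleGraph.mem_neighborFinset A x y).1 hy)
      ((SimpleGraph.mem_neighborFinset A x y').1 hy') hne hcc
  have hdisj' : Disjoint MU MV := by
    rw [Finset.disjoint_left]
    intro β h1 h2
    exact hdisj β ((hmem u β).1 h1) ((hmem v β).1 h2)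
  have hdu : A.degree u ≤ k := le_trans (Nat.le_add_right _ _) hsum
  have hdv : A.degree v ≤ k := le_trans (Nat.le_add_left _ _) hsum
  have hunion : MU ∪ MV = Finset.univ := by
    apply Finset.eq_univ_of_card
    have h1 : (MU ∪ MV).card = (k - A.degree u) + (k - A.degree v) := by
      rw [Finset.card_union_of_disjoint hdisj', hMU, hMV, hcard u, hcard v]
    have h2 : (MU ∪ MV).card ≤ Fintype.card (Fin k) := Finset.card_le_univ _
    rw [Fintype.card_fin] at h2 ⊢
    omega
  intro β
  have : β ∈ MU ∪ MV := hunion ▸ Finset.mem_univ β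
  rcases Finset.mem_union.1 this with h | h
  · exact Or.inl ((hmem u β).1 h)
  · exact Or.inr ((hmem v β).1 h)

end Part

section Core

variable [Fintype V] {G : SimpleGraph V} [DecidableRel G.Adj]

/-- Pattern: a color missing at both `u` and a neighbor `z` of `u` leads to a contradiction. -/
lemma caseA {u v z : V} (huv : G.Adj u v) {k : ℕ}
    (hnoext : ∀ (C' : V → V → Fin k) β, Good (G.deleteEdges {s(u, v)}) k C' →
      Miss (G.deleteEdges {s(u, v)}) C' u β → Miss (G.deleteEdges {s(u, v)}) C' v β → False)
    {C : V → V → Fin k} {δ : Fin k}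
    (hC : Good (G.deleteEdges {s(u, v)}) k C)
    (huz : (G.deleteEdges {s(u, v)}).Adj u z)
    (hvu : v ≠ u) (hvz : v ≠ z)
    (hmz : Miss (G.deleteEdges {s(u, v)}) C z δ)
    (hmu : Miss (G.deleteEdges {s(u, v)}) C u δ)
    (hpart : ∀ β, Miss (G.deleteEdges {s(u, v)}) C u β ∨ Miss (G.deleteEdges {s(u, v)}) C v β) :
    False := by
  classical
  set A := G.deleteEdges {s(u, v)} with hA
  set C3 := upd C u z δ with hC3def
  have hC3 : Good A k C3 := by
    refine upd_good huz hC.1 (fun x y w hxy hxw hyw _ _ => hC.2 hxy hxw hyw) ?_ ?_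
    · intro y hy _
      exact hmu hy
    · intro y hy _
      exact hmz hy
  have hβ : C u z ≠ δ := hmu huz
  have hm3u : Miss A C3 u (C u z) := upd_miss hC huz hβ
  have hMvβ : Miss A C (v) (C u z) := by
    refine (hpart (C u z)).resolve_left ?_
    intro hm
    exact hm huz rfl
  have hm3v : Miss A C3 v (C u z) := by
    intro y hy
    rw [hC3def, upd_eq_of_ne δ hvu hvz y]
    exact hMvβ hy
  exact hnoext C3 (C u z) hC3 hm3u hm3v

lemma core (hchi : G.lineGraph.chromaticNumber = (G.maxDegree : ℕ∞) + 1)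
    (hcrit : ∀ e ∈ G.edgeSet,
      (G.deleteEdges {e}).lineGraph.chromaticNumber < G.lineGraph.chromaticNumber)
    {u v z : V} (huv : G.Adj u v) (hsum : G.degree u + G.degree v = G.maxDegree + 2)
    (huz : G.Adj u z) (hzu : z ≠ u) (hzv : z ≠ v) (hdz : G.degree z < G.maxDegree) :
    False := by
  classical
  set Δ := G.maxDegree with hΔdef
  set A := G.deleteEdges {s(u, v)} with hA
  -- basic degree facts
  have hΔpos : 0 < Δ :=
    lt_of_lt_of_le (G.degree_pos_iff_exists_adj u |>.2 ⟨v, huv⟩) (G.degree_le_maxDegree u)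
  have hduΔ : G.degree u ≤ Δ := G.degree_le_maxDegree u
  have hdvΔ : G.degree v ≤ Δ := G.degree_le_maxDegree v
  have hdupos : 0 < G.degree u := G.degree_pos_iff_exists_adj u |>.2 ⟨v, huv⟩
  have hdvpos : 0 < G.degree v := G.degree_pos_iff_exists_adj v |>.2 ⟨u, huv.symm⟩
  -- the coloring of G - uv
  have hlt : A.lineGraph.chromaticNumber ≤ (Δ : ℕ∞) := by
    have h := hcrit s(u, v) (G.mem_edgeSet.2 huv)
    rw [hchi] at h
    exact (ENat.lt_add_one_iff (by simp)).1 h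
  obtain ⟨C, hC⟩ := good_of_colorable hΔpos (SimpleGraph.chromaticNumber_le_iff_colorable.1 hlt)
  -- degrees in A
  have hnbu : A.neighborFinset u = (G.neighborFinset u).erase v := by
    ext y
    rw [SimpleGraph.mem_neighborFinset, Finset.mem_erase, SimpleGraph.mem_neighborFinset,
      G'_adj huv.ne]
    constructor
    · rintro ⟨h1, h2⟩
      exact ⟨fun hc => h2 (Or.inl ⟨rfl, hc⟩), h1⟩
    · rintro ⟨h1, h2⟩
      refine ⟨h2, ?_⟩
      rintro (⟨-, hc⟩ | ⟨hc, -⟩)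
      · exact h1 hc
      · exact huv.ne hc
  have hnbv : A.neighborFinset v = (G.neighborFinset v).erase u := by
    ext y
    rw [SimpleGraph.mem_neighborFinset, Finset.mem_erase, SimpleGraph.mem_neighborFinset,
      G'_adj huv.ne]
    constructor
    · rintro ⟨h1, h2⟩
      exact ⟨fun hc => h2 (Or.inr ⟨rfl, hc⟩), h1⟩
    · rintro ⟨h1, h2⟩
      refine ⟨h2, ?_⟩
      rintro (⟨hc, -⟩ | ⟨-, hc⟩)
      · exact huv.ne hc.symm
      · exact h1 hc
  have hdAu : A.degree u = G.degree u - 1 := by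
    rw [← card_neighborFinset_eq_degree, hnbu,
      Finset.card_erase_of_mem ((SimpleGraph.mem_neighborFinset G u v).2 huv),
      card_neighborFinset_eq_degree]
  have hdAv : A.degree v = G.degree v - 1 := by
    rw [← card_neighborFinset_eq_degree, hnbv,
      Finset.card_erase_of_mem ((SimpleGraph.mem_neighborFinset G v u).2 huv.symm),
      card_neighborFinset_eq_degree]
  have hdAz : A.degree z < Δ := by
    have hsub : A.neighborFinset z ⊆ G.neighborFinset z := by
      intro y hy
      rw [SimpleGraph.mem_neighborFinset] at hy ⊢
      exact ((G'_adj huv.ne).1 hy).1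
    calc A.degree z = (A.neighborFinset z).card := (card_neighborFinset_eq_degree A z).symm
    _ ≤ (G.neighborFinset z).card := Finset.card_le_card hsub
    _ = G.degree z := card_neighborFinset_eq_degree G z
    _ < Δ := hdz
  have hdAu' : A.degree u < Δ := by omega
  -- no-extension principle
  have hkΔ : (Δ : ℕ∞) < G.lineGraph.chromaticNumber := by
    rw [hchi]
    exact (ENat.lt_add_one_iff (by simp)).2 (le_refl _)
  have hnoext : ∀ (C' : V → V → Fin Δ) β, Good A Δ C' →
      Miss A C' u β → Miss A C' v β → False := by
    intro C' β h1 h2 h3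
    exact noExtend huv hkΔ h1 h2 h3
  -- the partition of colors between u and v
  have hpart : ∀ β, Miss A C u β ∨ Miss A C v β := by
    refine part hC (fun β h1 h2 => hnoext C β hC h1 h2) ?_
    omega
  -- z is adjacent to u in A
  have huzA : A.Adj u z := by
    rw [hA, G'_adj huv.ne]
    refine ⟨huz, ?_⟩
    rintro (⟨-, hc⟩ | ⟨hc, -⟩)
    · exact hzv hc
    · exact huv.ne hc
  -- a color missing at z
  obtain ⟨γ, hγ⟩ := exists_miss (C := C) hdAz
  by_cases hMuγ : Miss A C u γ
  · exact caseA huv hnoext hC huzA huv.ne.symm (fun h => hzv h.symm) hγ hMuγ hpart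
  have hMvγ : Miss A C v γ := (hpart γ).resolve_left hMuγ
  obtain ⟨α, hα⟩ := exists_miss (C := C) hdAu'
  have hαγ : α ≠ γ := fun h => hMuγ (h ▸ hα)
  by_cases hMzα : Miss A C z α
  · exact caseA huv hnoext hC huzA huv.ne.symm (fun h => hzv h.symm) hMzα hα hpart
  -- Kempe chain swap
  set H : SimpleGraph V :=
    SimpleGraph.fromRel (fun x y => A.Adj x y ∧ (C x y = α ∨ C x y = γ)) with hHdef
  have hH : ∀ x y, H.Adj x y ↔ A.Adj x y ∧ (C x y = α ∨ C x y = γ) := by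
    intro x y
    rw [hHdef, SimpleGraph.fromRel_adj]
    constructor
    · rintro ⟨hne, (⟨h1, h2⟩ | ⟨h1, h2⟩)⟩
      · exact ⟨h1, h2⟩
      · rw [hC.1 x y]
        exact ⟨h1.symm, hC.1 y x ▸ h2⟩
    · rintro ⟨h1, h2⟩
      exact ⟨h1.ne, Or.inl ⟨h1, h2⟩⟩
  set C2 := swapC H z (Equiv.swap α γ) C with hC2def
  have hC2 : Good A Δ C2 := swap_good hC hαγ hH
  by_cases hRu : H.Reachable u z <;> by_cases hRv : H.Reachable v z
  · -- both u and v in the chain of z: three leaves, impossible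
    exact three_leaves H (H_deg_le_two hC hH)
      (H_deg_le_one hC hH (Or.inl rfl) hα)
      (H_deg_le_one hC hH (Or.inr rfl) hMvγ)
      (H_deg_le_one hC hH (Or.inr rfl) hγ)
      huv.ne (fun h => hzu h.symm) (fun h => hzv h.symm) hRu hRv
  · -- u in the chain, v not: γ becomes missing at both u and v
    have h1 : Miss A C2 u γ := swap_miss_of_reach hC hαγ hH hRu hα
    have h2 : Miss A C2 v γ := by
      intro y hy
      rw [hC2def, swap_eq_of_not_reach hRv y]
      exact hMvγ hy
    exact hnoext C2 γ hC2 h1 h2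
  · -- v in the chain, u not: α becomes missing at both u and v
    have h1 : Miss A C2 u α := by
      intro y hy
      rw [hC2def, swap_eq_of_not_reach hRu y]
      exact hα hy
    have h2 : Miss A C2 v α := swap_miss_of_reach' hC hαγ hH hRv hMvγ
    exact hnoext C2 α hC2 h1 h2
  · -- neither u nor v in the chain: α becomes missing at z, palettes of u, v unchanged
    have hmz2 : Miss A C2 z α := swap_miss_of_reach' hC hαγ hH (SimpleGraph.Reachable.refl z) hγ
    have hmu2 : Miss A C2 u α := by
      intro y hy
      rw [hC2def, swap_eq_of_not_reach hRu y]
      exact hα hy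
    have hpart2 : ∀ β, Miss A C2 u β ∨ Miss A C2 v β := by
      intro β
      rcases hpart β with h | h
      · left
        intro y hy
        rw [hC2def, swap_eq_of_not_reach hRu y]
        exact h hy
      · right
        intro y hy
        rw [hC2def, swap_eq_of_not_reach hRv y]
        exact h hy
    exact caseA huv hnoext hC2 huzA huv.ne.symm (fun h => hzv h.symm) hmz2 hmu2 hpart2

end Core


end VAL

theorem critical_neighbors_max_degree [Fintype V] (G : SimpleGraph V) [DecidableRel G.Adj]
    (hG : G.IsDeltaCritical) {u v : V} (huv : G.Adj u v)
    (hsum : G.degree u + G.degree v = G.maxDegree + 2) :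
    ∀ z ∈ G.setNbhd {u, v}, G.degree z = G.maxDegree := by
  classical
  obtain ⟨-, hchi, hcrit⟩ := hG
  intro z hz
  obtain ⟨hzX, w, hw, hwz⟩ := hz
  have hzu : z ≠ u := fun h => hzX (by simp [h])
  have hzv : z ≠ v := fun h => hzX (by simp [h])
  by_contra hne
  have hdz : G.degree z < G.maxDegree := lt_of_le_of_ne (G.degree_le_maxDegree z) hne
  rcases hw with rfl | rfl
  · exact (VAL.core hchi hcrit huv hsum hwz hzu hzv hdz).elim
  · have hsum' : G.degree w + G.degree u = G.maxDegree + 2 := by omega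
    exact (VAL.core hchi hcrit huv.symm hsum' hwz hzv hzu hdz).elim
end

section
/- Let G be a Δ-critical graph and let uv be an edge of G with d(u) + d(v) = Δ + 2. Then every vertex of N(N({u,v})) \ {u,v} has degree at least Δ − 1. -/
open SimpleGraph Finset

variable {V : Type*}

open SimpleGraph

namespace EK

variable {V : Type*} [DecidableEq V]

def Deg1 (D : SimpleGraph V) (x : V) : Prop := ∀ ⦃c d⦄, D.Adj x c → D.Adj x d → c = d

def Deg2 (D : SimpleGraph V) (x : V) : Prop :=
  ∀ ⦃c d e⦄, D.Adj x c → D.Adj x d → D.Adj x e → c = d ∨ c = e ∨ d = e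

lemma exists_adj_mem_tail {D : SimpleGraph V} {a y : V} (p : D.Walk a y) (h : a ≠ y) :
    ∃ c, D.Adj a c ∧ c ∈ p.support.tail := by
  cases p with
  | nil => exact absurd rfl h
  | cons h' q => exact ⟨_, h', by simp⟩

lemma internal_two_nbrs {D : SimpleGraph V} {x y a : V} (p : D.Walk x y) (hp : p.IsPath)
    (ha : a ∈ p.support) (hax : a ≠ x) (hay : a ≠ y) :
    ∃ c d, c ≠ d ∧ D.Adj a c ∧ D.Adj a d ∧ c ∈ p.support ∧ d ∈ p.support := by
  obtain ⟨c, hc, hcm⟩ := exists_adj_mem_tail (p.takeUntil a ha).reverse hax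
  obtain ⟨d, hd, hdm⟩ := exists_adj_mem_tail (p.dropUntil a ha) hay
  have hsup : p.support = (p.takeUntil a ha).support ++ (p.dropUntil a ha).support.tail := by
    rw [← SimpleGraph.Walk.support_append, SimpleGraph.Walk.take_spec]
  have hcm' : c ∈ (p.takeUntil a ha).support := by
    have h1 := List.mem_of_mem_tail hcm
    rwa [SimpleGraph.Walk.support_reverse, List.mem_reverse] at h1
  have hnd := hp.support_nodup
  rw [hsup] at hnd
  obtain ⟨-, -, hdisj⟩ := List.nodup_append'.mp hnd
  refine ⟨c, d, fun h => hdisj hcm' (h ▸ hdm), hc, hd, ?_, ?_⟩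
  · rw [hsup]; exact List.mem_append_left _ hcm'
  · rw [hsup]; exact List.mem_append_right _ hdm

lemma support_closed {D : SimpleGraph V} {x y : V} (p : D.Walk x y) (hp : p.IsPath)
    (hxy : x ≠ y) (hx : Deg1 D x) (hy : Deg1 D y) (h2 : ∀ t, Deg2 D t)
    {a b : V} (ha : a ∈ p.support) (hab : D.Adj a b) : b ∈ p.support := by
  by_cases hax : a = x
  · subst hax
    obtain ⟨c, hc, hcm⟩ := exists_adj_mem_tail p hxy
    exact (hx hab hc) ▸ List.mem_of_mem_tail hcm
  by_cases hay : a = y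
  · subst hay
    obtain ⟨c, hc, hcm⟩ := exists_adj_mem_tail p.reverse (Ne.symm hxy)
    have hcmem : c ∈ p.support := by
      have h1 := List.mem_of_mem_tail hcm
      rwa [SimpleGraph.Walk.support_reverse, List.mem_reverse] at h1
    exact (hy hab hc) ▸ hcmem
  · obtain ⟨c, d, hcd, hc, hd, hcm, hdm⟩ := internal_two_nbrs p hp ha hax hay
    rcases h2 a hab hc hd with h | h | h
    · exact h ▸ hcm
    · exact h ▸ hdm
    · exact absurd h hcd

lemma mem_support_of_reachable {D : SimpleGraph V} {x y : V} (p : D.Walk x y) (hp : p.IsPath)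
    (hxy : x ≠ y) (hx : Deg1 D x) (hy : Deg1 D y) (h2 : ∀ t, Deg2 D t)
    {s t : V} (q : D.Walk s t) (hs : s ∈ p.support) : t ∈ p.support := by
  induction q with
  | nil => exact hs
  | cons h q ih => exact ih (support_closed p hp hxy hx hy h2 hs h)

lemma three_endpoints {D : SimpleGraph V} {x y z : V} (hxy : x ≠ y) (hzx : z ≠ x) (hzy : z ≠ y)
    (hrxy : D.Reachable x y) (hrxz : D.Reachable x z)
    (hx : Deg1 D x) (hy : Deg1 D y) (hz : Deg1 D z) (h2 : ∀ t, Deg2 D t) : False := by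
  obtain ⟨q⟩ := hrxz
  obtain ⟨p0⟩ := hrxy
  have hzmem : z ∈ p0.toPath.1.support :=
    mem_support_of_reachable _ p0.toPath.2 hxy hx hy h2 q (SimpleGraph.Walk.start_mem_support _)
  obtain ⟨c, d, hcd, hc, hd, -, -⟩ := internal_two_nbrs _ p0.toPath.2 hzmem hzx hzy
  exact hcd (hz hc hd)

end EK
open SimpleGraph Finset
namespace EK
set_option linter.unusedSectionVars false
open scoped Classical

variable {V : Type*} [DecidableEq V]

structure EC (H : SimpleGraph V) (n : ℕ) where
  c : V → V → Fin n
  symm : ∀ x y, c x y = c y x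
  proper : ∀ ⦃x y z⦄, H.Adj x y → H.Adj x z → y ≠ z → c x y ≠ c x z

variable {H : SimpleGraph V} {n : ℕ}

def Mis (φ : EC H n) (x : V) (a : Fin n) : Prop := ∀ ⦃y⦄, H.Adj x y → φ.c x y ≠ a

/-! ### recoloring one edge -/

noncomputable def recolorFun (φ : EC H n) (u₀ v₀ : V) (m : Fin n) (x y : V) : Fin n :=
  if (x = u₀ ∧ y = v₀) ∨ (x = v₀ ∧ y = u₀) then m else φ.c x y

noncomputable def recolor (φ : EC H n) (u₀ v₀ : V) (m : Fin n) (h : H.Adj u₀ v₀)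
    (hu : Mis φ u₀ m) (hv : Mis φ v₀ m) : EC H n where
  c := recolorFun φ u₀ v₀ m
  symm x y := by
    unfold recolorFun
    by_cases hc : (x = u₀ ∧ y = v₀) ∨ (x = v₀ ∧ y = u₀)
    · rw [if_pos hc, if_pos (by tauto)]
    · rw [if_neg hc, if_neg (by tauto), φ.symm]
  proper x y z hxy hxz hyz := by
    unfold recolorFun
    have hne := H.ne_of_adj h
    by_cases h1 : (x = u₀ ∧ y = v₀) ∨ (x = v₀ ∧ y = u₀) <;>
      by_cases h2 : (x = u₀ ∧ z = v₀) ∨ (x = v₀ ∧ z = u₀)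
    · exfalso
      rcases h1 with ⟨hx1, hy1⟩ | ⟨hx1, hy1⟩ <;> rcases h2 with ⟨hx2, hz2⟩ | ⟨hx2, hz2⟩
      · exact hyz (hy1.trans hz2.symm)
      · exact hne (hx1.symm.trans hx2)
      · exact hne (hx2.symm.trans hx1)
      · exact hyz (hy1.trans hz2.symm)
    · rw [if_pos h1, if_neg h2]
      rcases h1 with ⟨rfl, rfl⟩ | ⟨rfl, rfl⟩
      · exact Ne.symm (hu hxz)
      · exact Ne.symm (hv hxz)
    · rw [if_neg h1, if_pos h2]
      rcases h2 with ⟨rfl, rfl⟩ | ⟨rfl, rfl⟩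
      · exact hu hxy
      · exact hv hxy
    · rw [if_neg h1, if_neg h2]; exact φ.proper hxy hxz hyz

lemma recolor_c_uv {φ : EC H n} {u₀ v₀ m h hu hv} :
    (recolor φ u₀ v₀ m h hu hv).c u₀ v₀ = m := by
  show recolorFun φ u₀ v₀ m u₀ v₀ = m
  unfold recolorFun; exact if_pos (Or.inl ⟨rfl, rfl⟩)

lemma recolor_c_of_ne {φ : EC H n} {u₀ v₀ m h hu hv} {x y : V}
    (hx : ¬((x = u₀ ∧ y = v₀) ∨ (x = v₀ ∧ y = u₀))) :
    (recolor φ u₀ v₀ m h hu hv).c x y = φ.c x y := by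
  show recolorFun φ u₀ v₀ m x y = _
  unfold recolorFun; exact if_neg hx

lemma Mis_recolor_of_ne {φ : EC H n} {u₀ v₀ m h hu hv} {x : V}
    (hx : x ≠ u₀) (hx' : x ≠ v₀) {t} (ht : Mis φ x t) :
    Mis (recolor φ u₀ v₀ m h hu hv) x t := fun y hy => by
  rw [recolor_c_of_ne (by tauto)]; exact ht hy

/-- after recoloring `u₀v₀` to `m`, the old color of `u₀v₀` is missing at `u₀`. -/
lemma Mis_recolor_old {φ : EC H n} {u₀ v₀ m} {h : H.Adj u₀ v₀} {hu hv} :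
    Mis (recolor φ u₀ v₀ m h hu hv) u₀ (φ.c u₀ v₀) := by
  intro y hy
  by_cases hyv : y = v₀
  · subst hyv; rw [recolor_c_uv]; exact Ne.symm (hu h)
  · rw [recolor_c_of_ne (by rintro (⟨-, h'⟩ | ⟨h', -⟩); exact hyv h'; exact H.ne_of_adj h h')]
    exact φ.proper hy h hyv

/-! ### Kempe chains -/

def kGraph (φ : EC H n) (a b : Fin n) : SimpleGraph V where
  Adj x y := H.Adj x y ∧ (φ.c x y = a ∨ φ.c x y = b)
  symm := ⟨fun x y h => ⟨h.1.symm, by rw [φ.symm]; exact h.2⟩⟩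
  loopless := ⟨fun x h => H.loopless.irrefl x h.1⟩

def flp (a b t : Fin n) : Fin n := if t = a then b else if t = b then a else t

lemma flp_a {a b : Fin n} : flp a b a = b := if_pos rfl

lemma flp_b {a b : Fin n} (hab : a ≠ b) : flp a b b = a := by
  unfold flp; rw [if_neg (Ne.symm hab), if_pos rfl]

lemma flp_flp (a b t : Fin n) : flp a b (flp a b t) = t := by
  unfold flp; split_ifs <;> simp_all

lemma flp_inj {a b t s : Fin n} (h : flp a b t = flp a b s) : t = s := by
  have := congrArg (flp a b) h; rwa [flp_flp, flp_flp] at this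

lemma flp_mem {a b t : Fin n} (h : t = a ∨ t = b) : flp a b t = a ∨ flp a b t = b := by
  unfold flp; split_ifs <;> tauto

noncomputable def swapFun (φ : EC H n) (a b : Fin n) (p : V) (x y : V) : Fin n :=
  if (kGraph φ a b).Adj x y ∧ (kGraph φ a b).Reachable p x then flp a b (φ.c x y)
  else φ.c x y

noncomputable def swap (φ : EC H n) (a b : Fin n) (p : V) : EC H n where
  c := swapFun φ a b p
  symm x y := by
    unfold swapFun
    by_cases hadj : (kGraph φ a b).Adj x y
    · have hre : (kGraph φ a b).Reachable p x ↔ (kGraph φ a b).Reachable p y :=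
        ⟨fun r => r.trans hadj.reachable, fun r => r.trans hadj.symm.reachable⟩
      by_cases hr : (kGraph φ a b).Reachable p x
      · rw [if_pos ⟨hadj, hr⟩, if_pos ⟨hadj.symm, hre.mp hr⟩, φ.symm]
      · rw [if_neg (fun hh => hr hh.2), if_neg (fun hh => hr (hre.mpr hh.2)), φ.symm]
    · rw [if_neg (fun hh => hadj hh.1), if_neg (fun hh => hadj hh.1.symm), φ.symm]
  proper x y z hxy hxz hyz := by
    unfold swapFun
    by_cases h1 : (kGraph φ a b).Adj x y ∧ (kGraph φ a b).Reachable p x <;>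
      by_cases h2 : (kGraph φ a b).Adj x z ∧ (kGraph φ a b).Reachable p x
    · rw [if_pos h1, if_pos h2]
      exact fun he => φ.proper hxy hxz hyz (flp_inj he)
    · rw [if_pos h1, if_neg h2]
      have hz' : ¬(φ.c x z = a ∨ φ.c x z = b) := fun ho => h2 ⟨⟨hxz, ho⟩, h1.2⟩
      rcases flp_mem h1.1.2 with he | he <;> rw [he] <;>
        exact fun e => hz' (by rw [← e]; tauto)
    · rw [if_neg h1, if_pos h2]
      have hy' : ¬(φ.c x y = a ∨ φ.c x y = b) := fun ho => h1 ⟨⟨hxy, ho⟩, h2.2⟩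
      rcases flp_mem h2.1.2 with he | he <;> rw [he] <;>
        exact fun e => hy' (by rw [e]; tauto)
    · rw [if_neg h1, if_neg h2]; exact φ.proper hxy hxz hyz

lemma swap_c_of_not_reach {φ : EC H n} {a b : Fin n} {p x : V}
    (hx : ¬(kGraph φ a b).Reachable p x) (y : V) :
    (swap φ a b p).c x y = φ.c x y := by
  show swapFun φ a b p x y = _
  unfold swapFun; exact if_neg (fun hh => hx hh.2)

lemma swap_c_of_not_kadj {φ : EC H n} {a b : Fin n} {p x y : V}
    (hxy : ¬(kGraph φ a b).Adj x y) :
    (swap φ a b p).c x y = φ.c x y := by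
  show swapFun φ a b p x y = _
  unfold swapFun; exact if_neg (fun hh => hxy hh.1)

lemma swap_c_of_kadj {φ : EC H n} {a b : Fin n} {p x y : V}
    (h : (kGraph φ a b).Adj x y) (hr : (kGraph φ a b).Reachable p x) :
    (swap φ a b p).c x y = flp a b (φ.c x y) := by
  show swapFun φ a b p x y = _
  unfold swapFun; exact if_pos ⟨h, hr⟩

lemma Mis_swap_of_not_reach {φ : EC H n} {a b : Fin n} {p x : V}
    (hx : ¬(kGraph φ a b).Reachable p x) {t} (ht : Mis φ x t) :
    Mis (swap φ a b p) x t := fun y hy => by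
  rw [swap_c_of_not_reach hx]; exact ht hy

lemma Mis_swap_off {φ : EC H n} {a b : Fin n} {p : V} {t : Fin n}
    (hta : t ≠ a) (htb : t ≠ b) {x : V} (ht : Mis φ x t) :
    Mis (swap φ a b p) x t := by
  intro y hy
  show swapFun φ a b p x y ≠ t
  unfold swapFun
  split_ifs with hcond
  · rcases flp_mem hcond.1.2 with he | he <;> rw [he]
    · exact Ne.symm hta
    · exact Ne.symm htb
  · exact ht hy

lemma Mis_swap_L3 {φ : EC H n} {a b : Fin n} {p x : V}
    (hx : Mis φ x a) (hr : (kGraph φ a b).Reachable p x) (hab : a ≠ b) :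
    Mis (swap φ a b p) x b := by
  intro y hy
  show swapFun φ a b p x y ≠ b
  unfold swapFun
  split_ifs with hcond
  · rcases hcond.1.2 with he | he
    · exact absurd he (hx hy)
    · rw [he, flp_b hab]; exact hab
  · exact fun e => hcond ⟨⟨hy, Or.inr e⟩, hr⟩

lemma Mis_swap_L3' {φ : EC H n} {a b : Fin n} {p x : V}
    (hx : Mis φ x b) (hr : (kGraph φ a b).Reachable p x) (hab : a ≠ b) :
    Mis (swap φ a b p) x a := by
  intro y hy
  show swapFun φ a b p x y ≠ a
  unfold swapFun
  split_ifs with hcond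
  · rcases hcond.1.2 with he | he
    · rw [he, flp_a]; exact Ne.symm hab
    · exact absurd he (hx hy)
  · exact fun e => hcond ⟨⟨hy, Or.inl e⟩, hr⟩

lemma kGraph_deg1 {φ : EC H n} {a b : Fin n} {x : V} (hx : Mis φ x a) :
    Deg1 (kGraph φ a b) x := by
  intro c d hc hd
  by_contra hcd
  have h1 : φ.c x c = b := (hc.2).resolve_left (hx hc.1)
  have h2 : φ.c x d = b := (hd.2).resolve_left (hx hd.1)
  exact φ.proper hc.1 hd.1 hcd (h1.trans h2.symm)

lemma kGraph_deg2 (φ : EC H n) (a b : Fin n) (x : V) : Deg2 (kGraph φ a b) x := by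
  intro c d e hc hd he
  by_contra hcon
  push_neg at hcon
  obtain ⟨h1, h2, h3⟩ := hcon
  have hcd := φ.proper hc.1 hd.1 h1
  have hce := φ.proper hc.1 he.1 h2
  have hde := φ.proper hd.1 he.1 h3
  rcases hc.2 with e1 | e1 <;> rcases hd.2 with e2 | e2 <;> rcases he.2 with e3 | e3 <;>
    first
      | exact hcd (e1.trans e2.symm)
      | exact hce (e1.trans e3.symm)
      | exact hde (e2.trans e3.symm)

end EK
namespace EK
variable {V : Type*} [DecidableEq V] {H : SimpleGraph V} {n : ℕ}
lemma kGraph_deg1' {φ : EC H n} {a b : Fin n} {x : V} (hx : Mis φ x b) :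
    Deg1 (kGraph φ a b) x := by
  intro c d hc hd
  by_contra hcd
  have h1 : φ.c x c = a := (hc.2).resolve_right (hx hc.1)
  have h2 : φ.c x d = a := (hd.2).resolve_right (hx hd.1)
  exact φ.proper hc.1 hd.1 hcd (h1.trans h2.symm)
end EK
namespace EK
variable {V : Type*} [DecidableEq V] {H : SimpleGraph V} {n : ℕ}

section Counting
variable [Fintype V] [DecidableRel H.Adj]

noncomputable def misF (φ : EC H n) (x : V) : Finset (Fin n) :=
  Finset.univ \ (H.neighborFinset x).image (φ.c x)

lemma mem_misF {φ : EC H n} {x : V} {t : Fin n} : t ∈ misF φ x ↔ Mis φ x t := by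
  unfold misF
  rw [Finset.mem_sdiff, Finset.mem_image]
  simp only [Finset.mem_univ, true_and, SimpleGraph.mem_neighborFinset]
  constructor
  · intro h y hy he
    exact h ⟨y, hy, he⟩
  · rintro h ⟨y, hy, he⟩
    exact h hy he

lemma card_misF (φ : EC H n) (x : V) :
    (misF φ x).card = n - (H.neighborFinset x).card := by
  unfold misF
  rw [Finset.card_sdiff_of_subset (Finset.subset_univ _), Finset.card_univ, Fintype.card_fin,
    Finset.card_image_of_injOn]
  intro y hy y' hy' he
  rw [Finset.mem_coe, SimpleGraph.mem_neighborFinset] at hy hy'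
  by_contra hne
  exact φ.proper hy hy' hne he

end Counting

/-! ### bridges with line-graph colorability -/

noncomputable def ecFun (hn : 0 < n) (C : H.lineGraph.Coloring (Fin n)) (x y : V) : Fin n :=
  letI := Classical.dec
  if h : H.Adj x y then C ⟨s(x,y), h⟩ else ⟨0, hn⟩

lemma ec_of_colorable (hn : 0 < n) (h : H.lineGraph.Colorable n) : Nonempty (EC H n) := by
  obtain ⟨C⟩ := h
  refine ⟨{ c := ecFun hn C, symm := ?_, proper := ?_ }⟩
  · intro x y
    unfold ecFun
    by_cases h : H.Adj x y
    · rw [dif_pos h, dif_pos h.symm]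
      congr 1
      exact Subtype.ext (Sym2.eq_swap)
    · rw [dif_neg h, dif_neg (fun hh => h hh.symm)]
  · intro x y z hxy hxz hyz
    unfold ecFun
    rw [dif_pos hxy, dif_pos hxz]
    apply C.valid
    refine ⟨fun he => hyz (Sym2.congr_right.mp (Subtype.ext_iff.mp he)), ?_⟩
    exact ⟨x, Set.mem_inter (by simp) (by simp)⟩

lemma colorable_of_ec {G : SimpleGraph V} (φ : EC G n) : G.lineGraph.Colorable n := by
  refine ⟨SimpleGraph.Coloring.mk (fun e => Sym2.lift ⟨φ.c, φ.symm⟩ e.1) ?_⟩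
  rintro ⟨e1, he1⟩ ⟨e2, he2⟩ hadj
  obtain ⟨hne, t, ht1, ht2⟩ := SimpleGraph.lineGraph_adj_iff_exists.mp hadj
  simp only at ht1 ht2
  obtain ⟨y1, rfl⟩ := Sym2.mem_iff_exists.mp ht1
  obtain ⟨y2, rfl⟩ := Sym2.mem_iff_exists.mp ht2
  simp only [Sym2.lift_mk]
  exact φ.proper ((SimpleGraph.mem_edgeSet _).mp he1) ((SimpleGraph.mem_edgeSet _).mp he2)
    (fun h => hne (Subtype.ext (by simp [h])))

lemma colorable_of_chromIndex_lt {G : SimpleGraph V} {Δ : ℕ}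
    (h : G.chromaticIndex < (Δ : ℕ∞) + 1) : G.lineGraph.Colorable Δ := by
  rw [SimpleGraph.chromaticIndex] at h
  apply SimpleGraph.chromaticNumber_le_iff_colorable.mp
  have hne : G.lineGraph.chromaticNumber ≠ ⊤ := LT.lt.ne_top h
  lift G.lineGraph.chromaticNumber to ℕ using hne with m hm
  have : ((m : ℕ∞)) < ((Δ + 1 : ℕ) : ℕ∞) := by push_cast; exact h
  exact_mod_cast Nat.lt_add_one_iff.mp (by exact_mod_cast this)

lemma chromIndex_le_of_ec {G : SimpleGraph V} (φ : EC G n) :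
    G.chromaticIndex ≤ (n : ℕ∞) :=
  SimpleGraph.chromaticNumber_le_iff_colorable.mpr (colorable_of_ec φ)

end EK
namespace EK
open SimpleGraph

lemma core {V : Type*} [Fintype V] [DecidableEq V] (G : SimpleGraph V) [DecidableRel G.Adj]
    (hG : G.IsDeltaCritical) {u v : V} (huv : G.Adj u v)
    (hsum : G.degree u + G.degree v = G.maxDegree + 2)
    {w z : V} (hw : G.Adj u w) (hwv : w ≠ v) (hz : G.Adj w z) (hzu : z ≠ u) (hzv : z ≠ v)
    (hdz : G.degree z < G.maxDegree - 1) : False := by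
  set Δ := G.maxDegree with hΔdef
  set H := G.deleteEdges {s(u,v)} with hHdef
  haveI : DecidableRel H.Adj := Classical.decRel _
  have hne_uv : u ≠ v := G.ne_of_adj huv
  have hwu : w ≠ u := (G.ne_of_adj hw).symm
  have hΔu : G.degree u ≤ Δ := G.degree_le_maxDegree u
  have hΔv : G.degree v ≤ Δ := G.degree_le_maxDegree v
  have hΔz : G.degree z ≤ Δ := G.degree_le_maxDegree z
  have hdu1 : 0 < G.degree u := G.degree_pos_iff_exists_adj u |>.mpr ⟨v, huv⟩
  have hdv1 : 0 < G.degree v := G.degree_pos_iff_exists_adj v |>.mpr ⟨u, huv.symm⟩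
  have hΔpos : 0 < Δ := lt_of_lt_of_le hdu1 hΔu
  -- H-adjacency facts
  have hHuw : H.Adj u w := by
    rw [hHdef, SimpleGraph.deleteEdges_adj]
    refine ⟨hw, ?_⟩
    rw [Set.mem_singleton_iff, Sym2.eq_iff]
    rintro (⟨-, h⟩ | ⟨h, -⟩)
    exacts [hwv h, hne_uv h]
  have hHwz : H.Adj w z := by
    rw [hHdef, SimpleGraph.deleteEdges_adj]
    refine ⟨hz, ?_⟩
    rw [Set.mem_singleton_iff, Sym2.eq_iff]
    rintro (⟨h, -⟩ | ⟨h, -⟩)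
    exacts [hwu h, hwv h]
  -- neighbor finsets
  have hNu : H.neighborFinset u = (G.neighborFinset u).erase v := by
    ext y
    simp only [SimpleGraph.mem_neighborFinset, Finset.mem_erase, hHdef,
      SimpleGraph.deleteEdges_adj, Set.mem_singleton_iff, Sym2.eq_iff,
      eq_self_iff_true, true_and, and_true]
    constructor
    · rintro ⟨ha, hn⟩
      exact ⟨fun hyv => hn (Or.inl hyv), ha⟩
    · rintro ⟨hyv, ha⟩
      refine ⟨ha, ?_⟩
      rintro (h | ⟨h, -⟩)
      exacts [hyv h, hne_uv h]
  have hNv : H.neighborFinset v = (G.neighborFinset v).erase u := by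
    ext y
    simp only [SimpleGraph.mem_neighborFinset, Finset.mem_erase, hHdef,
      SimpleGraph.deleteEdges_adj, Set.mem_singleton_iff, Sym2.eq_iff,
      eq_self_iff_true, true_and, and_true]
    constructor
    · rintro ⟨ha, hn⟩
      exact ⟨fun hyu => hn (Or.inr hyu), ha⟩
    · rintro ⟨hyu, ha⟩
      refine ⟨ha, ?_⟩
      rintro (⟨h, -⟩ | h)
      exacts [hne_uv h.symm, hyu h]
  have hNz : H.neighborFinset z = G.neighborFinset z := by
    ext y
    simp only [SimpleGraph.mem_neighborFinset, hHdef, SimpleGraph.deleteEdges_adj,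
      Set.mem_singleton_iff, Sym2.eq_iff]
    constructor
    · exact fun h => h.1
    · intro h
      refine ⟨h, ?_⟩
      rintro (⟨h1, -⟩ | ⟨h1, -⟩)
      exacts [hzu h1, hzv h1]
  have hcardNu : (H.neighborFinset u).card = G.degree u - 1 := by
    rw [hNu, Finset.card_erase_of_mem (by rw [SimpleGraph.mem_neighborFinset]; exact huv)]
    rfl
  have hcardNv : (H.neighborFinset v).card = G.degree v - 1 := by
    rw [hNv, Finset.card_erase_of_mem (by rw [SimpleGraph.mem_neighborFinset]; exact huv.symm)]
    rfl
  have hcardNz : (H.neighborFinset z).card = G.degree z := by rw [hNz]; rfl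
  -- get a coloring of H
  have hcrit := hG.2.2 s(u,v) ((SimpleGraph.mem_edgeSet G).mpr huv)
  rw [hG.2.1] at hcrit
  obtain ⟨φ₀⟩ : Nonempty (EC H Δ) :=
    ec_of_colorable hΔpos (colorable_of_chromIndex_lt hcrit)
  -- the master contradiction: no color can be missing at both u and v
  have CONTRA : ∀ (φ : EC H Δ) (m : Fin Δ), Mis φ u m → Mis φ v m → False := by
    intro φ m hmu hmv
    have key : ∀ ⦃x y : V⦄, G.Adj x y → ¬((x = u ∧ y = v) ∨ (x = v ∧ y = u)) → H.Adj x y := by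
      intro x y hxy hnot
      rw [hHdef, SimpleGraph.deleteEdges_adj]
      refine ⟨hxy, ?_⟩
      rw [Set.mem_singleton_iff, Sym2.eq_iff]
      exact hnot
    have ψ : EC G Δ := by
      refine ⟨recolorFun φ u v m, ?_, ?_⟩
      · intro x y
        unfold recolorFun
        by_cases hc : (x = u ∧ y = v) ∨ (x = v ∧ y = u)
        · rw [if_pos hc, if_pos (by tauto)]
        · rw [if_neg hc, if_neg (by tauto), φ.symm]
      · intro x y z' hxy hxz hyz
        unfold recolorFun
        by_cases h1 : (x = u ∧ y = v) ∨ (x = v ∧ y = u) <;>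
          by_cases h2 : (x = u ∧ z' = v) ∨ (x = v ∧ z' = u)
        · exfalso
          rcases h1 with ⟨hx1, hy1⟩ | ⟨hx1, hy1⟩ <;> rcases h2 with ⟨hx2, hz2⟩ | ⟨hx2, hz2⟩
          · exact hyz (hy1.trans hz2.symm)
          · exact hne_uv (hx1.symm.trans hx2)
          · exact hne_uv (hx2.symm.trans hx1)
          · exact hyz (hy1.trans hz2.symm)
        · rw [if_pos h1, if_neg h2]
          rcases h1 with ⟨rfl, rfl⟩ | ⟨rfl, rfl⟩
          · exact Ne.symm (hmu (key hxz h2))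
          · exact Ne.symm (hmv (key hxz h2))
        · rw [if_neg h1, if_pos h2]
          rcases h2 with ⟨rfl, rfl⟩ | ⟨rfl, rfl⟩
          · exact hmu (key hxy h1)
          · exact hmv (key hxy h1)
        · rw [if_neg h1, if_neg h2]
          exact φ.proper (key hxy h1) (key hxz h2) hyz
    have hle := chromIndex_le_of_ec ψ
    rw [hG.2.1] at hle
    rw [show ((Δ : ℕ∞) + 1) = ((Δ + 1 : ℕ) : ℕ∞) by push_cast; ring] at hle
    exact absurd (Nat.cast_le.mp hle) (by omega)
  -- every color is missing at u or at v
  have partition : ∀ (φ : EC H Δ) (t : Fin Δ), Mis φ u t ∨ Mis φ v t := by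
    intro φ t
    by_contra hcon
    push_neg at hcon
    obtain ⟨hnt, hnv⟩ := hcon
    have hcu : (misF φ u).card = Δ - (G.degree u - 1) := by rw [card_misF, hcardNu]
    have hcv : (misF φ v).card = Δ - (G.degree v - 1) := by rw [card_misF, hcardNv]
    have hdisj : Disjoint (misF φ u) (misF φ v) := by
      rw [Finset.disjoint_left]
      intro s hsu hsv
      exact CONTRA φ s (mem_misF.mp hsu) (mem_misF.mp hsv)
    have hsub : misF φ u ∪ misF φ v ⊆ Finset.univ.erase t := by
      intro s hs
      rw [Finset.mem_erase]
      refine ⟨?_, Finset.mem_univ _⟩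
      rw [Finset.mem_union] at hs
      rcases hs with h | h
      · exact fun e => hnt (e ▸ mem_misF.mp h)
      · exact fun e => hnv (e ▸ mem_misF.mp h)
    have hcard := Finset.card_le_card hsub
    rw [Finset.card_union_of_disjoint hdisj, Finset.card_erase_of_mem (Finset.mem_univ t),
      Finset.card_univ, Fintype.card_fin, hcu, hcv] at hcard
    omega
  have αexists : ∀ φ : EC H Δ, ∃ a, Mis φ u a := by
    intro φ
    have hpos : 0 < (misF φ u).card := by
      rw [card_misF, hcardNu]; omega
    obtain ⟨a, ha⟩ := Finset.card_pos.mp hpos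
    exact ⟨a, mem_misF.mp ha⟩
  have δexists : ∀ φ : EC H Δ, ∃ a, Mis φ v a := by
    intro φ
    have hpos : 0 < (misF φ v).card := by
      rw [card_misF, hcardNv]; omega
    obtain ⟨a, ha⟩ := Finset.card_pos.mp hpos
    exact ⟨a, mem_misF.mp ha⟩
  have βv : ∀ φ : EC H Δ, Mis φ v (φ.c u w) :=
    fun φ => (partition φ (φ.c u w)).resolve_left (fun hm => hm hHuw rfl)
  -- Kempe-chain fact : u and v lie in the same (a,b)-component
  have F3 : ∀ (φ : EC H Δ) (a b : Fin Δ), Mis φ u a → Mis φ v b → a ≠ b →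
      (kGraph φ a b).Reachable u v := by
    intro φ a b ha hb hab
    by_contra hr
    exact CONTRA (swap φ a b u) b (Mis_swap_L3 ha (SimpleGraph.Reachable.refl u) hab)
      (Mis_swap_of_not_reach hr hb)
  -- key lemma: z cannot miss both a color missing at u and the color of uw
  have KL : ∀ (φ : EC H Δ) (α : Fin Δ), Mis φ u α → Mis φ z α → Mis φ z (φ.c u w) → False := by
    intro φ α huα hzα hzβ
    have hvβ : Mis φ v (φ.c u w) := βv φ
    have hβα : φ.c u w ≠ α := huα hHuw
    have hθβ : φ.c w z ≠ φ.c u w := by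
      rw [φ.symm u w]
      exact φ.proper hHwz hHuw.symm hzu
    have hθα : φ.c w z ≠ α := by
      rw [φ.symm w z]
      exact hzα hHwz.symm
    by_cases hθu : Mis φ u (φ.c w z)
    · have hruv := F3 φ (φ.c w z) (φ.c u w) hθu hvβ hθβ
      have hkuw : (kGraph φ (φ.c w z) (φ.c u w)).Adj u w := ⟨hHuw, Or.inr rfl⟩
      have hkwz : (kGraph φ (φ.c w z) (φ.c u w)).Adj w z := ⟨hHwz, Or.inl rfl⟩
      exact three_endpoints hne_uv hzu hzv hruv (hkuw.reachable.trans hkwz.reachable)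
        (kGraph_deg1 hθu) (kGraph_deg1' hvβ) (kGraph_deg1' hzβ) (kGraph_deg2 _ _ _)
    · have hvθ : Mis φ v (φ.c w z) := (partition φ (φ.c w z)).resolve_left hθu
      have hαθ : α ≠ φ.c w z := Ne.symm hθα
      have hruv1 := F3 φ α (φ.c w z) huα hvθ hαθ
      have hkwz1 : (kGraph φ α (φ.c w z)).Adj w z := ⟨hHwz, Or.inr rfl⟩
      by_cases hz1 : (kGraph φ α (φ.c w z)).Reachable u z
      · exact three_endpoints hne_uv hzu hzv hruv1 hz1 (kGraph_deg1 huα)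
          (kGraph_deg1' hvθ) (kGraph_deg1 hzα) (kGraph_deg2 _ _ _)
      · have hnzu : ¬(kGraph φ α (φ.c w z)).Reachable z u := fun h => hz1 h.symm
        have hnzv : ¬(kGraph φ α (φ.c w z)).Reachable z v := fun h => hz1 (hruv1.trans h.symm)
        have h1uα : Mis (swap φ α (φ.c w z) z) u α := Mis_swap_of_not_reach hnzu huα
        have h1vβ : Mis (swap φ α (φ.c w z) z) v (φ.c u w) := Mis_swap_of_not_reach hnzv hvβ
        have h1cuw : (swap φ α (φ.c w z) z).c u w = φ.c u w := swap_c_of_not_reach hnzu w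
        have h1zθ : Mis (swap φ α (φ.c w z) z) z (φ.c w z) :=
          Mis_swap_L3 hzα (SimpleGraph.Reachable.refl z) hαθ
        have h1zβ : Mis (swap φ α (φ.c w z) z) z (φ.c u w) :=
          Mis_swap_off hβα hθβ.symm hzβ
        have h1cwz : (swap φ α (φ.c w z) z).c w z = α := by
          rw [swap_c_of_kadj hkwz1 hkwz1.symm.reachable, flp_b hαθ]
        have hruv2 := F3 (swap φ α (φ.c w z) z) α (φ.c u w) h1uα h1vβ hβα.symm
        have hk2uw : (kGraph (swap φ α (φ.c w z) z) α (φ.c u w)).Adj u w :=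
          ⟨hHuw, Or.inr h1cuw⟩
        have hk2wz : (kGraph (swap φ α (φ.c w z) z) α (φ.c u w)).Adj w z :=
          ⟨hHwz, Or.inl h1cwz⟩
        exact three_endpoints hne_uv hzu hzv hruv2 (hk2uw.reachable.trans hk2wz.reachable)
          (kGraph_deg1 h1uα) (kGraph_deg1' h1vβ) (kGraph_deg1' h1zβ) (kGraph_deg2 _ _ _)
  -- step 2 : z misses the color of uw together with some color missing at v
  have STEP2 : ∀ (φ : EC H Δ) (g : Fin Δ), Mis φ v g → Mis φ z g → Mis φ z (φ.c u w) →
      g ≠ φ.c u w → False := by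
    intro φ g hvg hzg hzβ hgβ
    obtain ⟨α, huα⟩ := αexists φ
    have hαg : α ≠ g := fun e => CONTRA φ g (e ▸ huα) hvg
    have hruv := F3 φ α g huα hvg hαg
    by_cases hz1 : (kGraph φ α g).Reachable u z
    · exact three_endpoints hne_uv hzu hzv hruv hz1 (kGraph_deg1 huα) (kGraph_deg1' hvg)
        (kGraph_deg1' hzg) (kGraph_deg2 _ _ _)
    · have hnzu : ¬(kGraph φ α g).Reachable z u := fun h => hz1 h.symm
      have h1uα : Mis (swap φ α g z) u α := Mis_swap_of_not_reach hnzu huα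
      have h1cuw : (swap φ α g z).c u w = φ.c u w := swap_c_of_not_reach hnzu w
      have h1zα : Mis (swap φ α g z) z α :=
        Mis_swap_L3' hzg (SimpleGraph.Reachable.refl z) hαg
      have h1zβ : Mis (swap φ α g z) z (φ.c u w) :=
        Mis_swap_off (fun e => huα hHuw e) (Ne.symm hgβ) hzβ
      exact KL (swap φ α g z) α h1uα h1zα (by rw [h1cuw]; exact h1zβ)
  -- step 1 : z misses a color missing at u and a color missing at v
  have STEP : ∀ (φ : EC H Δ) (a g : Fin Δ), Mis φ u a → Mis φ z a → Mis φ v g →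
      Mis φ z g → False := by
    intro φ a g hua hza hvg hzg
    by_cases hgβ : g = φ.c u w
    · exact KL φ a hua hza (hgβ ▸ hzg)
    · have hvβ := βv φ
      have haβ : a ≠ φ.c u w := fun e => hua hHuw e.symm
      have hruv := F3 φ a (φ.c u w) hua hvβ haβ
      by_cases hz1 : (kGraph φ a (φ.c u w)).Reachable u z
      · exact three_endpoints hne_uv hzu hzv hruv hz1 (kGraph_deg1 hua) (kGraph_deg1' hvβ)
          (kGraph_deg1 hza) (kGraph_deg2 _ _ _)
      · have hnzu : ¬(kGraph φ a (φ.c u w)).Reachable z u := fun h => hz1 h.symm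
        have hnzv : ¬(kGraph φ a (φ.c u w)).Reachable z v := fun h => hz1 (hruv.trans h.symm)
        have h1cuw : (swap φ a (φ.c u w) z).c u w = φ.c u w := swap_c_of_not_reach hnzu w
        have h1zβ : Mis (swap φ a (φ.c u w) z) z (φ.c u w) :=
          Mis_swap_L3 hza (SimpleGraph.Reachable.refl z) haβ
        have h1zg : Mis (swap φ a (φ.c u w) z) z g :=
          Mis_swap_off (fun e => CONTRA φ a hua (by rw [← e]; exact hvg)) hgβ hzg
        have h1vg : Mis (swap φ a (φ.c u w) z) v g := Mis_swap_of_not_reach hnzv hvg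
        exact STEP2 (swap φ a (φ.c u w) z) g h1vg h1zg (by rw [h1cuw]; exact h1zβ)
          (by rw [h1cuw]; exact hgβ)
  -- z misses at least two colors
  have hz2 : 1 < (misF φ₀ z).card := by
    rw [card_misF, hcardNz]; omega
  obtain ⟨γ₁, hγ₁m, γ₂, hγ₂m, hγne⟩ := Finset.one_lt_card.mp hz2
  have hzγ₁ : Mis φ₀ z γ₁ := mem_misF.mp hγ₁m
  have hzγ₂ : Mis φ₀ z γ₂ := mem_misF.mp hγ₂m
  rcases partition φ₀ γ₁ with h1 | h1 <;> rcases partition φ₀ γ₂ with h2 | h2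
  · -- both γ₁ γ₂ missing at u
    obtain ⟨δ, hvδ⟩ := δexists φ₀
    have hγ₁δ : γ₁ ≠ δ := fun e => CONTRA φ₀ γ₁ h1 (e.symm ▸ hvδ)
    have hγ₂δ : γ₂ ≠ δ := fun e => CONTRA φ₀ γ₂ h2 (e.symm ▸ hvδ)
    have hruv := F3 φ₀ γ₁ δ h1 hvδ hγ₁δ
    by_cases hz1 : (kGraph φ₀ γ₁ δ).Reachable u z
    · exact three_endpoints hne_uv hzu hzv hruv hz1 (kGraph_deg1 h1) (kGraph_deg1' hvδ)
        (kGraph_deg1 hzγ₁) (kGraph_deg2 _ _ _)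
    · have hnzu : ¬(kGraph φ₀ γ₁ δ).Reachable z u := fun h => hz1 h.symm
      have hnzv : ¬(kGraph φ₀ γ₁ δ).Reachable z v := fun h => hz1 (hruv.trans h.symm)
      have h1zδ : Mis (swap φ₀ γ₁ δ z) z δ :=
        Mis_swap_L3 hzγ₁ (SimpleGraph.Reachable.refl z) hγ₁δ
      have h1zγ₂ : Mis (swap φ₀ γ₁ δ z) z γ₂ := Mis_swap_off hγne.symm hγ₂δ hzγ₂
      have h1uγ₂ : Mis (swap φ₀ γ₁ δ z) u γ₂ := Mis_swap_of_not_reach hnzu h2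
      have h1vδ : Mis (swap φ₀ γ₁ δ z) v δ := Mis_swap_of_not_reach hnzv hvδ
      exact STEP (swap φ₀ γ₁ δ z) γ₂ δ h1uγ₂ h1zγ₂ h1vδ h1zδ
  · exact STEP φ₀ γ₁ γ₂ h1 hzγ₁ h2 hzγ₂
  · exact STEP φ₀ γ₂ γ₁ h2 hzγ₂ h1 hzγ₁
  · -- both γ₁ γ₂ missing at v
    by_cases hb1 : γ₁ = φ₀.c u w
    · exact STEP2 φ₀ γ₂ h2 hzγ₂ (hb1 ▸ hzγ₁) (fun e => hγne.symm (e.trans hb1.symm))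
    · by_cases hb2 : γ₂ = φ₀.c u w
      · exact STEP2 φ₀ γ₁ h1 hzγ₁ (hb2 ▸ hzγ₂) (fun e => hγne (e.trans hb2.symm))
      · obtain ⟨α, huα⟩ := αexists φ₀
        have hαγ₁ : α ≠ γ₁ := fun e => CONTRA φ₀ γ₁ (e ▸ huα) h1
        have hαγ₂ : γ₂ ≠ α := fun e => CONTRA φ₀ γ₂ (e.symm ▸ huα) h2
        have hruv := F3 φ₀ α γ₁ huα h1 hαγ₁
        by_cases hz1 : (kGraph φ₀ α γ₁).Reachable u z
        · exact three_endpoints hne_uv hzu hzv hruv hz1 (kGraph_deg1 huα) (kGraph_deg1' h1)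
            (kGraph_deg1' hzγ₁) (kGraph_deg2 _ _ _)
        · have hnzu : ¬(kGraph φ₀ α γ₁).Reachable z u := fun h => hz1 h.symm
          have hnzv : ¬(kGraph φ₀ α γ₁).Reachable z v := fun h => hz1 (hruv.trans h.symm)
          have h1zα : Mis (swap φ₀ α γ₁ z) z α :=
            Mis_swap_L3' hzγ₁ (SimpleGraph.Reachable.refl z) hαγ₁
          have h1zγ₂ : Mis (swap φ₀ α γ₁ z) z γ₂ := Mis_swap_off hαγ₂ hγne.symm hzγ₂
          have h1uα : Mis (swap φ₀ α γ₁ z) u α := Mis_swap_of_not_reach hnzu huα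
          have h1vγ₂ : Mis (swap φ₀ α γ₁ z) v γ₂ := Mis_swap_of_not_reach hnzv h2
          exact STEP (swap φ₀ α γ₁ z) α γ₂ h1uα h1zα h1vγ₂ h1zγ₂

end EK
theorem critical_second_neighbors_degree [Fintype V] (G : SimpleGraph V) [DecidableRel G.Adj]
    (hG : G.IsDeltaCritical) {u v : V} (huv : G.Adj u v)
    (hsum : G.degree u + G.degree v = G.maxDegree + 2) :
    ∀ z ∈ G.setNbhd (G.setNbhd {u, v}), z ≠ u → z ≠ v →
      G.maxDegree - 1 ≤ G.degree z := by
  classical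
  intro z hz hzu hzv
  by_contra hlt
  push_neg at hlt
  obtain ⟨hznotin, w, hwmem, hwz⟩ := hz
  obtain ⟨hwnot, t, htmem, htw⟩ := hwmem
  have hwu : w ≠ u := by rintro rfl; exact hwnot (Set.mem_insert _ _)
  have hwv : w ≠ v := by rintro rfl; exact hwnot (Set.mem_insert_of_mem _ rfl)
  rcases htmem with rfl | rfl
  · exact EK.core G hG huv hsum htw hwv hwz hzu hzv hlt
  · exact EK.core G hG huv.symm (by rwa [Nat.add_comm] at hsum) htw hwu hwz hzv hzu hlt
end

section
/- (Mader) Every finite simple K5-minor free graph with n ≥ 3 vertices has at most 3n − 6 edges. -/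
open SimpleGraph Finset

variable {V : Type*}

section MaderAux

universe u

variable {W : Type u}

instance induceAdjDecidable' (G : SimpleGraph W) [DecidableRel G.Adj] (s : Set W) :
    DecidableRel (G.induce s).Adj := fun a b => inferInstanceAs (Decidable (G.Adj a.1 b.1))

def CliqueMinorAux (G : SimpleGraph W) (k : ℕ) : Prop :=
  ∃ S : Fin k → Set W,
    (∀ i, (S i).Nonempty) ∧
    (∀ i, (G.induce (S i)).Connected) ∧
    (∀ i j, i ≠ j → Disjoint (S i) (S j)) ∧
    (∀ i j, i ≠ j → ∃ u ∈ S i, ∃ v ∈ S j, G.Adj u v)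

lemma reach_transfer {A B : Type*} {G1 : SimpleGraph A} {G2 : SimpleGraph B} (f : A → B)
    (h : ∀ a b, G1.Adj a b → G2.Reachable (f a) (f b)) {x y : A} (hr : G1.Reachable x y) :
    G2.Reachable (f x) (f y) := by
  obtain ⟨p⟩ := hr
  induction p with
  | nil => exact Reachable.refl _
  | cons ha _ ih => exact (h _ _ ha).trans ih

lemma connected_induce_singleton (G : SimpleGraph W) (v : W) :
    (G.induce ({v} : Set W)).Connected := by
  haveI : Nonempty ({v} : Set W) := ⟨⟨v, rfl⟩⟩
  refine ⟨fun a b => ?_⟩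
  have : a = b := Subtype.ext (a.2.trans b.2.symm)
  exact this ▸ Reachable.refl _

lemma CliqueMinorAux.mono {G H : SimpleGraph W} (hle : H ≤ G) {k : ℕ}
    (h : CliqueMinorAux H k) : CliqueMinorAux G k := by
  obtain ⟨S, h1, h2, h3, h4⟩ := h
  refine ⟨S, h1, fun i => (h2 i).mono (fun a b hab => ?_), h3, fun i j hij => ?_⟩
  · exact hle hab
  · obtain ⟨u, hu, v, hv, ha⟩ := h4 i j hij
    exact ⟨u, hu, v, hv, hle ha⟩

lemma connected_image_val {G : SimpleGraph W} {s : Set W} {T : Set s}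
    (h : ((G.induce s).induce T).Connected) :
    (G.induce (Subtype.val '' T)).Connected := by
  have hne : Nonempty T := h.nonempty
  obtain ⟨a0⟩ := hne
  haveI : Nonempty (Subtype.val '' T : Set W) := ⟨⟨a0.1.1, ⟨a0.1, a0.2, rfl⟩⟩⟩
  refine ⟨fun x y => ?_⟩
  let f : T → (Subtype.val '' T : Set W) := fun a => ⟨a.1.1, ⟨a.1, a.2, rfl⟩⟩
  have step : ∀ a b : T, ((G.induce s).induce T).Adj a b →
      (G.induce (Subtype.val '' T)).Reachable (f a) (f b) := by
    intro a b hab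
    have hadj : G.Adj a.1.1 b.1.1 := hab
    exact Adj.reachable hadj
  obtain ⟨ax, haxT, hax⟩ := x.2
  obtain ⟨ay, hayT, hay⟩ := y.2
  have hx : x = f ⟨ax, haxT⟩ := Subtype.ext hax.symm
  have hy : y = f ⟨ay, hayT⟩ := Subtype.ext hay.symm
  rw [hx, hy]
  exact reach_transfer f step (h.preconnected _ _)


def contractE (G : SimpleGraph W) (x y : W) : SimpleGraph {v : W // v ≠ y} where
  Adj a b := a.1 ≠ b.1 ∧ (G.Adj a.1 b.1 ∨ (a.1 = x ∧ G.Adj y b.1) ∨ (b.1 = x ∧ G.Adj a.1 y))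
  symm := by
    constructor
    rintro a b ⟨hne, h⟩
    refine ⟨hne.symm, ?_⟩
    rcases h with h | ⟨h1, h2⟩ | ⟨h1, h2⟩
    · exact Or.inl h.symm
    · exact Or.inr (Or.inr ⟨h1, h2.symm⟩)
    · exact Or.inr (Or.inl ⟨h1, h2.symm⟩)
  loopless := ⟨fun a h => h.1 rfl⟩

instance contractE.adjDecidable [DecidableEq W] (G : SimpleGraph W) [DecidableRel G.Adj]
    (x y : W) : DecidableRel (contractE G x y).Adj := fun _ _ =>
  inferInstanceAs (Decidable (_ ∧ _))

lemma card_edgeFinset_le_contract [Fintype W] [DecidableEq W]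
    (G : SimpleGraph W) [DecidableRel G.Adj] {x y : W} (hxy : G.Adj x y)
    (common : Finset W) (hc : ∀ z, G.Adj x z → G.Adj y z → z ∈ common) :
    G.edgeFinset.card ≤ (contractE G x y).edgeFinset.card + 1 + common.card := by
  classical
  set bad : Finset (Sym2 W) := insert s(x, y) (common.image (fun z => s(y, z))) with hbad
  have hbadcard : bad.card ≤ 1 + common.card := by
    refine (Finset.card_insert_le _ _).trans ?_
    have := Finset.card_image_le (s := common) (f := fun z => s(y, z))
    omega
  have hybad : ∀ z ∈ common, s(y, z) ∈ bad := by
    intro z hz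
    exact Finset.mem_insert_of_mem (Finset.mem_image_of_mem _ hz)
  have hxybad : s(x, y) ∈ bad := Finset.mem_insert_self _ _
  set g : W → {v : W // v ≠ y} := fun w => if h : w = y then ⟨x, hxy.ne⟩ else ⟨w, h⟩ with hg
  have hgy : g y = ⟨x, hxy.ne⟩ := by simp [hg]
  have hgne : ∀ w (h : w ≠ y), g w = ⟨w, h⟩ := fun w h => by simp [hg, h]
  have hginj : ∀ a c : W, g a = g c → a = c ∨ (a = y ∧ c = x) ∨ (a = x ∧ c = y) := by
    intro a c hac
    by_cases ha : a = y <;> by_cases hcc : c = y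
    · exact Or.inl (ha.trans hcc.symm)
    · rw [ha, hgy, hgne c hcc] at hac
      exact Or.inr (Or.inl ⟨ha, (congrArg Subtype.val hac).symm⟩)
    · rw [hcc, hgy, hgne a ha] at hac
      exact Or.inr (Or.inr ⟨congrArg Subtype.val hac, hcc⟩)
    · rw [hgne a ha, hgne c hcc] at hac
      exact Or.inl (congrArg Subtype.val hac)
  have hmain : (G.edgeFinset \ bad).card ≤ (contractE G x y).edgeFinset.card := by
    apply Finset.card_le_card_of_injOn (Sym2.map g)
    · -- maps to
      intro e he
      rw [Finset.mem_coe, Finset.mem_sdiff] at he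
      obtain ⟨heE, hebad⟩ := he
      induction e using Sym2.ind with
      | _ a b =>
        rw [mem_edgeFinset, mem_edgeSet] at heE
        rw [Sym2.map_pair_eq, Finset.mem_coe, mem_edgeFinset, mem_edgeSet]
        by_cases ha : a = y <;> by_cases hb : b = y
        · exact absurd (ha.trans hb.symm) heE.ne
        · -- a = y : map to s(x, b)
          rw [ha, hgy, hgne b hb]
          have hyb : G.Adj y b := ha ▸ heE
          have hxb : x ≠ b := by
            rintro rfl
            exact hebad (by rw [ha, Sym2.eq_swap]; exact hxybad)
          exact ⟨hxb, Or.inr (Or.inl ⟨rfl, hyb⟩)⟩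
        · rw [hb, hgy, hgne a ha]
          have hay : G.Adj a y := hb ▸ heE
          have hxa : a ≠ x := by
            rintro rfl
            exact hebad (hb ▸ hxybad)
          exact ⟨hxa, Or.inr (Or.inr ⟨rfl, hay⟩)⟩
        · rw [hgne a ha, hgne b hb]
          exact ⟨heE.ne, Or.inl heE⟩
    · -- injective on
      have claim : ∀ a b c d : W, G.Adj a b → s(a, b) ∉ bad → G.Adj c d → s(c, d) ∉ bad →
          g a = g c → g b = g d → s(a, b) = s(c, d) := by
        intro a b c d hab habad hcd hcdbad hac hbd
        rcases hginj a c hac with h5 | ⟨h5, h6⟩ | ⟨h5, h6⟩ <;>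
          rcases hginj b d hbd with h7 | ⟨h7, h8⟩ | ⟨h7, h8⟩ <;>
          subst_vars <;>
          first
            | rfl
            | exact absurd hab (G.loopless.irrefl _)
            | exact absurd hcd (G.loopless.irrefl _)
            | exact absurd hxybad habad
            | exact absurd hxybad hcdbad
            | exact absurd (by rw [Sym2.eq_swap]; exact hxybad) habad
            | exact absurd (by rw [Sym2.eq_swap]; exact hxybad) hcdbad
            | exact absurd (hybad _ (hc _ hab hcd)) hcdbad
            | exact absurd (hybad _ (hc _ hcd hab)) habad
            | exact absurd (hybad _ (hc _ hab hcd)) habad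
            | exact absurd (hybad _ (hc _ hcd hab)) hcdbad
            | exact absurd (hybad _ (hc _ hab.symm hcd.symm))
                (fun hh => hcdbad (by rw [Sym2.eq_swap]; exact hh))
            | exact absurd (hybad _ (hc _ hcd.symm hab.symm))
                (fun hh => habad (by rw [Sym2.eq_swap]; exact hh))
            | exact absurd (hybad _ (hc _ hab.symm hcd.symm))
                (fun hh => habad (by rw [Sym2.eq_swap]; exact hh))
            | exact absurd (hybad _ (hc _ hcd.symm hab.symm))
                (fun hh => hcdbad (by rw [Sym2.eq_swap]; exact hh))
      intro e1 he1 e2 he2 heq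
      simp only [Finset.coe_sdiff, Set.mem_diff, Finset.mem_coe, mem_edgeFinset,
        mem_edgeSet] at he1 he2
      induction e1 using Sym2.ind with
      | _ a b =>
        induction e2 using Sym2.ind with
        | _ c d =>
          rw [Sym2.map_pair_eq, Sym2.map_pair_eq, Sym2.eq_iff] at heq
          rcases heq with ⟨h1, h2⟩ | ⟨h1, h2⟩
          · exact claim a b c d he1.1 he1.2 he2.1 he2.2 h1 h2
          · have := claim a b d c he1.1 he1.2 he2.1.symm
              (by rw [Sym2.eq_swap]; exact he2.2) h1 h2
            rwa [Sym2.eq_swap (a := d)] at this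
  calc G.edgeFinset.card ≤ (G.edgeFinset \ bad).card + bad.card :=
        Finset.card_le_card_sdiff_add_card
    _ ≤ (contractE G x y).edgeFinset.card + 1 + common.card := by omega

lemma CliqueMinorAux.of_contract {G : SimpleGraph W} {x y : W} (hxy : G.Adj x y) {k : ℕ}
    (h : CliqueMinorAux (contractE G x y) k) : CliqueMinorAux G k := by
  obtain ⟨S', h1, h2, h3, h4⟩ := h
  have hxny : x ≠ y := hxy.ne
  set xv : {v : W // v ≠ y} := ⟨x, hxny⟩ with hxv
  set S : Fin k → Set W :=
    fun i => {w | (∃ a : {v : W // v ≠ y}, a ∈ S' i ∧ (a : W) = w) ∨ (w = y ∧ xv ∈ S' i)}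
    with hS
  have hmemimg : ∀ i (a : {v : W // v ≠ y}), a ∈ S' i → (a : W) ∈ S i :=
    fun i a ha => Or.inl ⟨a, ha, rfl⟩
  refine ⟨S, ?_, ?_, ?_, ?_⟩
  · intro i
    obtain ⟨a, ha⟩ := h1 i
    exact ⟨a, hmemimg i a ha⟩
  · -- connectivity
    intro i
    obtain ⟨a0, ha0⟩ := h1 i
    haveI : Nonempty (S i) := ⟨⟨a0.1, hmemimg i a0 ha0⟩⟩
    refine ⟨fun u w => ?_⟩
    set f : S' i → S i := fun a => ⟨a.1.1, hmemimg i a.1 a.2⟩ with hf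
    have step : ∀ a b : S' i, ((contractE G x y).induce (S' i)).Adj a b →
        (G.induce (S i)).Reachable (f a) (f b) := by
      intro a b hab
      have hab' : (contractE G x y).Adj a.1 b.1 := hab
      obtain ⟨hne, hcase⟩ := hab'
      rcases hcase with hc | ⟨hc1, hc2⟩ | ⟨hc1, hc2⟩
      · exact Adj.reachable (by exact hc : (G.induce (S i)).Adj (f a) (f b))
      · -- a = x, Adj y b
        have hxa : xv = a.1 := Subtype.ext hc1.symm
        have hyS : y ∈ S i := Or.inr ⟨rfl, hxa ▸ a.2⟩
        have r1 : (G.induce (S i)).Adj (f a) ⟨y, hyS⟩ := by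
          show G.Adj a.1.1 y
          rw [hc1]; exact hxy
        have r2 : (G.induce (S i)).Adj ⟨y, hyS⟩ (f b) := by
          show G.Adj y b.1.1
          exact hc2
        exact (Adj.reachable r1).trans (Adj.reachable r2)
      · have hxb : xv = b.1 := Subtype.ext hc1.symm
        have hyS : y ∈ S i := Or.inr ⟨rfl, hxb ▸ b.2⟩
        have r1 : (G.induce (S i)).Adj (f a) ⟨y, hyS⟩ := by
          show G.Adj a.1.1 y
          exact hc2
        have r2 : (G.induce (S i)).Adj ⟨y, hyS⟩ (f b) := by
          show G.Adj y b.1.1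
          rw [hc1]; exact hxy.symm
        exact (Adj.reachable r1).trans (Adj.reachable r2)
    have hto : ∀ w : S i, ∃ a : S' i, (G.induce (S i)).Reachable w (f a) := by
      rintro ⟨w, hw | hw⟩
      · obtain ⟨a, haS, hav⟩ := hw
        exact ⟨⟨a, haS⟩, by exact (show (⟨w, _⟩ : S i) = f ⟨a, haS⟩ from Subtype.ext hav.symm) ▸ Reachable.refl _⟩
      · obtain ⟨hwy, hxvS⟩ := hw
        refine ⟨⟨xv, hxvS⟩, Adj.reachable ?_⟩
        show G.Adj w x
        rw [hwy]; exact hxy.symm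
    obtain ⟨au, hu⟩ := hto u
    obtain ⟨aw, hw⟩ := hto w
    exact hu.trans ((reach_transfer f step (h2 i |>.preconnected au aw)).trans hw.symm)
  · -- disjoint
    intro i j hij
    rw [Set.disjoint_left]
    rintro z (⟨a, haS, hav⟩ | ⟨hzy, hxi⟩) hzj
    · rcases hzj with ⟨b, hbS, hbv⟩ | ⟨hzy, hxj⟩
      · have : a = b := Subtype.ext (hav.trans hbv.symm)
        exact Set.disjoint_left.mp (h3 i j hij) haS (this ▸ hbS)
      · exact a.2 (hav.trans hzy)
    · rcases hzj with ⟨b, hbS, hbv⟩ | ⟨_, hxj⟩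
      · exact b.2 (hbv.trans hzy)
      · exact Set.disjoint_left.mp (h3 i j hij) hxi hxj
  · -- adjacency
    intro i j hij
    obtain ⟨a, haS, b, hbS, hab⟩ := h4 i j hij
    obtain ⟨hne, hcase⟩ := hab
    rcases hcase with hc | ⟨hc1, hc2⟩ | ⟨hc1, hc2⟩
    · exact ⟨a.1, hmemimg i a haS, b.1, hmemimg j b hbS, hc⟩
    · have hxa : xv = a := Subtype.ext hc1.symm
      exact ⟨y, Or.inr ⟨rfl, hxa ▸ haS⟩, b.1, hmemimg j b hbS, hc2⟩
    · have hxb : xv = b := Subtype.ext hc1.symm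
      exact ⟨a.1, hmemimg i a haS, y, Or.inr ⟨rfl, hxb ▸ hbS⟩, hc2⟩

lemma CliqueMinorAux.apex {G : SimpleGraph W} {s : Set W} {v : W}
    (hv : ∀ u ∈ s, G.Adj v u) {k : ℕ} (h : CliqueMinorAux (G.induce s) k) :
    CliqueMinorAux G (k + 1) := by
  obtain ⟨S, h1, h2, h3, h4⟩ := h
  have hvs : v ∉ s := fun hmem => G.irrefl (hv v hmem)
  set T : Fin (k + 1) → Set W := Fin.cons {v} (fun i => Subtype.val '' S i) with hT
  have hTz : T 0 = {v} := rfl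
  have hTs : ∀ i : Fin k, T i.succ = Subtype.val '' S i := fun i => by
    simp [hT, Fin.cons_succ]
  have hsub : ∀ i : Fin k, T i.succ ⊆ s := by
    intro i w hw
    rw [hTs] at hw
    obtain ⟨a, _, rfl⟩ := hw
    exact a.2
  refine ⟨T, ?_, ?_, ?_, ?_⟩
  · intro i
    induction i using Fin.cases with
    | zero => exact ⟨v, rfl⟩
    | succ i =>
      obtain ⟨a, ha⟩ := h1 i
      exact ⟨a.1, (hTs i).symm ▸ ⟨a, ha, rfl⟩⟩
  · intro i
    induction i using Fin.cases with
    | zero => exact connected_induce_singleton G v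
    | succ i => rw [hTs]; exact connected_image_val (h2 i)
  · intro i j hij
    induction i using Fin.cases with
    | zero =>
      induction j using Fin.cases with
      | zero => exact absurd rfl hij
      | succ j =>
        rw [hTz, Set.disjoint_left]
        rintro z rfl hz
        exact hvs (hsub j hz)
    | succ i =>
      induction j using Fin.cases with
      | zero =>
        rw [hTz, Set.disjoint_right]
        rintro z rfl hz
        exact hvs (hsub i hz)
      | succ j =>
        have hij' : i ≠ j := fun hcon => hij (by rw [hcon])
        rw [hTs, hTs, Set.disjoint_left]
        rintro z ⟨a, haS, rfl⟩ ⟨b, hbS, hba⟩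
        have : b = a := Subtype.ext hba
        exact Set.disjoint_left.mp (h3 i j hij') haS (this ▸ hbS)
  · intro i j hij
    induction i using Fin.cases with
    | zero =>
      induction j using Fin.cases with
      | zero => exact absurd rfl hij
      | succ j =>
        obtain ⟨a, ha⟩ := h1 j
        refine ⟨v, rfl, a.1, (hTs j).symm ▸ ⟨a, ha, rfl⟩, hv a.1 a.2⟩
    | succ i =>
      induction j using Fin.cases with
      | zero =>
        obtain ⟨a, ha⟩ := h1 i
        exact ⟨a.1, (hTs i).symm ▸ ⟨a, ha, rfl⟩, v, rfl, (hv a.1 a.2).symm⟩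
      | succ j =>
        have hij' : i ≠ j := fun hcon => hij (by rw [hcon])
        obtain ⟨a, haS, b, hbS, hab⟩ := h4 i j hij'
        exact ⟨a.1, (hTs i).symm ▸ ⟨a, haS, rfl⟩, b.1, (hTs j).symm ▸ ⟨b, hbS, rfl⟩,
          (by exact hab : G.Adj a.1 b.1)⟩

lemma exists_cycle_of_min_degree_two [Fintype W] [DecidableEq W] [Nonempty W]
    (H : SimpleGraph W) [DecidableRel H.Adj] (hdeg : ∀ w, 2 ≤ H.degree w) :
    ∃ (u : W) (c : H.Walk u u), c.IsCycle := by
  classical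
  set n := Fintype.card W with hn
  set P : ℕ → Prop := fun L => ∃ (a b : W) (p : H.Walk a b), p.IsPath ∧ p.length = L with hP
  have hP0 : P 0 := ⟨Classical.arbitrary W, _, Walk.nil, Walk.IsPath.nil, rfl⟩
  have hn0 : 0 ≤ n := Nat.zero_le n
  set L := Nat.findGreatest P n with hL
  have hPL : P L := Nat.findGreatest_spec hn0 hP0
  obtain ⟨a, b, p, hp, hplen⟩ := hPL
  -- get a neighbor to show L ≥ 1
  have hdega : 0 < H.degree a := lt_of_lt_of_le (by norm_num) (hdeg a)
  obtain ⟨w0, hw0⟩ := (H.degree_pos_iff_exists_adj a).mp hdega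
  have hmax : ∀ (c d : W) (q : H.Walk c d), q.IsPath → q.length ≤ L := by
    intro c d q hq
    exact Nat.le_findGreatest (le_of_lt (lt_of_lt_of_le hq.length_lt (le_refl n))) ⟨c, d, q, hq, rfl⟩
  have hL1 : 1 ≤ L := by
    have : (Walk.cons hw0.symm Walk.nil : H.Walk w0 a).IsPath := by
      simp [Walk.cons_isPath_iff, hw0.ne']
    have := hmax _ _ _ this
    simpa using this
  -- p is not nil
  cases p with
  | nil => rw [← hplen] at hL1; simp at hL1
  | @cons _ u₂ _ h₁ p₁ =>
    -- a second neighbor of a, different from u₂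
    have h2 : ∃ w, H.Adj a w ∧ w ≠ u₂ := by
      by_contra hcon
      push_neg at hcon
      have hsub : H.neighborFinset a ⊆ {u₂} := by
        intro z hz
        rw [SimpleGraph.mem_neighborFinset] at hz
        simp [hcon z hz]
      have hcard : (H.neighborFinset a).card ≤ 1 :=
        le_trans (Finset.card_le_card hsub) (le_of_eq (Finset.card_singleton u₂))
      have h2a := hdeg a
      rw [← SimpleGraph.card_neighborFinset_eq_degree] at h2a
      omega
    obtain ⟨w, haw, hwne⟩ := h2
    have hpath : p₁.IsPath := hp.of_cons
    have hanotp1 : a ∉ p₁.support := by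
      rw [Walk.cons_isPath_iff] at hp
      exact hp.2
    by_cases hws : w ∈ (Walk.cons h₁ p₁).support
    · -- cycle found
      have hwp1 : w ∈ p₁.support := by
        rw [Walk.support_cons] at hws
        rcases List.mem_cons.mp hws with h | h
        · exact absurd h.symm haw.ne
        · exact h
      set q := p₁.takeUntil w hwp1 with hq
      have hqpath : q.IsPath := hpath.takeUntil hwp1
      have hanotq : a ∉ q.support := fun hcon => hanotp1 (Walk.support_takeUntil_subset _ hwp1 hcon)
      have hconspath : (Walk.cons h₁ q).IsPath := by
        rw [Walk.cons_isPath_iff]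
        exact ⟨hqpath, hanotq⟩
      refine ⟨w, Walk.cons haw.symm (Walk.cons h₁ q), ?_⟩
      rw [Walk.cons_isCycle_iff]
      refine ⟨hconspath, ?_⟩
      intro hcon
      rw [Walk.edges_cons] at hcon
      rcases List.mem_cons.mp hcon with h | h
      · rw [Sym2.eq_iff] at h
        rcases h with ⟨h1, h2⟩ | ⟨h1, h2⟩
        · exact haw.ne h1.symm
        · exact hwne h1
      · exact hanotq (Walk.snd_mem_support_of_mem_edges q h)
    · -- extend the path: contradiction with maximality
      have hext : (Walk.cons haw.symm (Walk.cons h₁ p₁)).IsPath := by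
        rw [Walk.cons_isPath_iff]
        exact ⟨hp, hws⟩
      have := hmax _ _ _ hext
      rw [Walk.length_cons] at this
      have hplen' : (Walk.cons h₁ p₁).length = L := hplen
      omega

lemma cliqueMinor3_of_cycle {A : Type*} (H : SimpleGraph A) {u : A} {c : H.Walk u u}
    (hc : c.IsCycle) :
    ∃ S : Fin 3 → Set A,
    (∀ i, (S i).Nonempty) ∧
    (∀ i, (H.induce (S i)).Connected) ∧
    (∀ i j, i ≠ j → Disjoint (S i) (S j)) ∧
    (∀ i j, i ≠ j → ∃ a ∈ S i, ∃ b ∈ S j, H.Adj a b) := by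
  have hlen3 := hc.three_le_length
  cases c with
  | nil => exact absurd rfl hc.ne_nil
  | @cons _ y _ hadj p =>
    -- hadj : H.Adj u y, p : H.Walk y u
    rw [Walk.cons_isCycle_iff] at hc
    obtain ⟨hppath, hpedge⟩ := hc
    rw [Walk.length_cons] at hlen3
    cases p with
    | nil => simp at hlen3
    | @cons _ b _ h₂ p₂ =>
      -- h₂ : H.Adj y b, p₂ : H.Walk b u
      rw [Walk.length_cons] at hlen3
      have hp₂path : p₂.IsPath := hppath.of_cons
      have hynotp₂ : y ∉ p₂.support := by
        rw [Walk.cons_isPath_iff] at hppath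
        exact hppath.2
      have hrevpath : p₂.reverse.IsPath := hp₂path.reverse
      cases hr : p₂.reverse with
      | nil =>
        -- p₂.reverse nil : impossible, length ≥ 1
        have : p₂.length = 0 := by
          have := congrArg Walk.length hr
          rwa [Walk.length_reverse, Walk.length_nil] at this
        omega
      | @cons _ z _ h₃ r =>
        -- h₃ : H.Adj u z, r : H.Walk z b
        rw [hr] at hrevpath
        have hrpath : r.IsPath := hrevpath.of_cons
        have hunotr : u ∉ r.support := by
          rw [Walk.cons_isPath_iff] at hrevpath
          exact hrevpath.2
        have hrsubp₂ : ∀ w, w ∈ r.support → w ∈ p₂.support := by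
          intro w hw
          have : w ∈ p₂.reverse.support := by
            rw [hr, Walk.support_cons]
            exact List.mem_cons_of_mem _ hw
          rwa [Walk.support_reverse, List.mem_reverse] at this
        have hynotr : y ∉ r.support := fun hcon => hynotp₂ (hrsubp₂ y hcon)
        set S : Fin 3 → Set A := ![{u}, {y}, {w | w ∈ r.support}] with hS
        have hS0 : S 0 = {u} := rfl
        have hS1 : S 1 = {y} := rfl
        have hS2 : S 2 = {w | w ∈ r.support} := rfl
        have hzS : z ∈ S 2 := r.start_mem_support
        have hbS : b ∈ S 2 := r.end_mem_support
        have huy : u ≠ y := hadj.ne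
        have huS2 : u ∉ S 2 := hunotr
        have hyS2 : y ∉ S 2 := hynotr
        refine ⟨S, ?_, ?_, ?_, ?_⟩
        · intro i
          fin_cases i
          · exact ⟨u, rfl⟩
          · exact ⟨y, rfl⟩
          · exact ⟨z, hzS⟩
        · intro i
          fin_cases i
          · exact connected_induce_singleton H u
          · exact connected_induce_singleton H y
          · exact r.connected_induce_support
        · have d01 : Disjoint (S 0) (S 1) := by
            rw [hS0, hS1]; exact Set.disjoint_singleton.mpr huy
          have d02 : Disjoint (S 0) (S 2) := by
            rw [hS0, hS2, Set.disjoint_left]; rintro x rfl; exact huS2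
          have d12 : Disjoint (S 1) (S 2) := by
            rw [hS1, hS2, Set.disjoint_left]; rintro x rfl; exact hyS2
          intro i j hij
          fin_cases i <;> fin_cases j
          · exact absurd rfl hij
          · exact d01
          · exact d02
          · exact d01.symm
          · exact absurd rfl hij
          · exact d12
          · exact d02.symm
          · exact d12.symm
          · exact absurd rfl hij
        · intro i j hij
          fin_cases i <;> fin_cases j
          · exact absurd rfl hij
          · exact ⟨u, rfl, y, rfl, hadj⟩
          · exact ⟨u, rfl, z, hzS, h₃⟩
          · exact ⟨y, rfl, u, rfl, hadj.symm⟩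
          · exact absurd rfl hij
          · exact ⟨y, rfl, b, hbS, h₂⟩
          · exact ⟨z, hzS, u, rfl, h₃.symm⟩
          · exact ⟨b, hbS, y, rfl, h₂.symm⟩
          · exact absurd rfl hij

lemma card_filter_le_card_edgeFinset_induce [Fintype W] [DecidableEq W]
    (G : SimpleGraph W) [DecidableRel G.Adj] (s : Set W) [DecidablePred (· ∈ s)]
    (p : Sym2 W → Prop) [DecidablePred p]
    (hp : ∀ a b : W, G.Adj a b → p s(a, b) → a ∈ s ∧ b ∈ s) :
    (G.edgeFinset.filter p).card ≤ (G.induce s).edgeFinset.card := by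
  classical
  apply Finset.card_le_card_of_surjOn (Sym2.map Subtype.val)
  intro e he
  simp only [Finset.coe_filter, Set.mem_setOf_eq, mem_edgeFinset] at he
  obtain ⟨he1, he2⟩ := he
  induction e using Sym2.ind with
  | _ a b =>
    rw [mem_edgeSet] at he1
    obtain ⟨ha, hb⟩ := hp a b he1 he2
    refine ⟨s(⟨a, ha⟩, ⟨b, hb⟩), ?_, ?_⟩
    · simp only [Finset.mem_coe, mem_edgeFinset, mem_edgeSet]
      exact he1
    · rfl

lemma card_edgeFinset_le_induce_compl_add_degree [Fintype W] [DecidableEq W]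
    (G : SimpleGraph W) [DecidableRel G.Adj] (v : W) :
    G.edgeFinset.card ≤ (G.induce {w | w ≠ v}).edgeFinset.card + G.degree v := by
  classical
  have h1 : (G.edgeFinset.filter (fun e => v ∉ e)).card ≤
      (G.induce {w | w ≠ v}).edgeFinset.card := by
    apply card_filter_le_card_edgeFinset_induce
    intro a b hab hmem
    rw [Sym2.mem_iff] at hmem
    push_neg at hmem
    exact ⟨fun h => hmem.1 h.symm, fun h => hmem.2 h.symm⟩
  have h2 : (G.edgeFinset.filter (fun e => v ∈ e)).card = G.degree v := by
    rw [← card_incidenceFinset_eq_degree, incidenceFinset_eq_filter]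
  have h3 := Finset.card_filter_add_card_filter_not
    (s := G.edgeFinset) (p := fun e => v ∈ e)
  omega

lemma sum_card_filter_comm {α β : Type*} [DecidableEq α] [DecidableEq β]
    (s : Finset α) (t : Finset β) (P : α → β → Prop) [∀ a b, Decidable (P a b)] :
    ∑ a ∈ s, (t.filter (fun b => P a b)).card = ∑ b ∈ t, (s.filter (fun a => P a b)).card := by
  simp only [Finset.card_filter]
  exact Finset.sum_comm

lemma CliqueMinorAux.of_induce {G : SimpleGraph W} {s : Set W} {k : ℕ}
    (h : CliqueMinorAux (G.induce s) k) : CliqueMinorAux G k := by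
  obtain ⟨S, h1, h2, h3, h4⟩ := h
  refine ⟨fun i => Subtype.val '' S i, fun i => (h1 i).image _,
    fun i => connected_image_val (h2 i), ?_, ?_⟩
  · intro i j hij
    rw [Set.disjoint_left]
    rintro z ⟨a, ha, rfl⟩ ⟨b, hb, hba⟩
    exact Set.disjoint_left.mp (h3 i j hij) ha ((Subtype.ext hba : b = a) ▸ hb)
  · intro i j hij
    obtain ⟨a, ha, b, hb, hab⟩ := h4 i j hij
    exact ⟨a.1, ⟨a, ha, rfl⟩, b.1, ⟨b, hb, rfl⟩, (by exact hab : G.Adj a.1 b.1)⟩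

lemma card_subtype_ne [Fintype W] [DecidableEq W] (v : W) :
    Fintype.card {w : W // w ≠ v} = Fintype.card W - 1 := by
  classical
  have h := Fintype.card_subtype_compl (p := fun w : W => w = v)
  rw [Fintype.card_subtype_eq] at h
  rw [← h]

lemma card_coe_setOf_ne [Fintype W] [DecidableEq W] (v : W) :
    Fintype.card ({w : W | w ≠ v} : Set W) = Fintype.card W - 1 := by
  classical
  rw [← card_subtype_ne v]
  exact Fintype.card_congr (Equiv.subtypeEquivRight (fun _ => Iff.rfl))

lemma adj_of_max_edges [Fintype W] [DecidableEq W] (G : SimpleGraph W) [DecidableRel G.Adj]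
    (he : (Fintype.card W).choose 2 ≤ G.edgeFinset.card) :
    ∀ a b : W, a ≠ b → G.Adj a b := by
  intro a b hab
  by_contra hnadj
  have hsub : G.edgeFinset ⊆ (⊤ : SimpleGraph W).edgeFinset := by
    intro e he'
    rw [mem_edgeFinset] at he' ⊢
    exact edgeSet_mono le_top he'
  have hmem : s(a, b) ∈ (⊤ : SimpleGraph W).edgeFinset := by
    rw [mem_edgeFinset, mem_edgeSet]
    exact hab
  have hnot : s(a, b) ∉ G.edgeFinset := by
    rw [mem_edgeFinset, mem_edgeSet]
    exact hnadj
  have hss : G.edgeFinset ⊂ (⊤ : SimpleGraph W).edgeFinset :=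
    ⟨hsub, fun hcon => hnot (hcon hmem)⟩
  have := Finset.card_lt_card hss
  rw [card_edgeFinset_top_eq_card_choose_two] at this
  omega

lemma cliqueMinorAux_of_complete [Fintype W] (G : SimpleGraph W)
    (h : ∀ a b : W, a ≠ b → G.Adj a b) {k : ℕ} (hcard : Fintype.card W = k) :
    CliqueMinorAux G k := by
  have e : Fin k ≃ W := (Fintype.equivFinOfCardEq hcard).symm
  refine ⟨fun i => {e i}, fun i => ⟨e i, rfl⟩,
    fun i => connected_induce_singleton G (e i), ?_, ?_⟩
  · intro i j hij
    exact Set.disjoint_singleton.mpr (e.injective.ne hij)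
  · intro i j hij
    exact ⟨e i, rfl, e j, rfl, h _ _ (e.injective.ne hij)⟩

theorem auxK4 (n : ℕ) :
    ∀ (A : Type u) [Fintype A] [DecidableEq A] (H : SimpleGraph A) [DecidableRel H.Adj],
      Fintype.card A = n → 2 ≤ n → 2 * n ≤ H.edgeFinset.card + 2 → CliqueMinorAux H 4 := by
  induction n using Nat.strong_induction_on with
  | _ n IH =>
    intro A _ _ H _ hcard hn2 hedge
    classical
    have hmax : H.edgeFinset.card ≤ n.choose 2 := by
      rw [← hcard]
      exact H.card_edgeFinset_le_card_choose_two
    by_cases hsmall : n ≤ 4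
    · interval_cases n
    -- n = 2
      · have hch : Nat.choose 2 2 = 1 := by decide
        omega
      · have hch : Nat.choose 3 2 = 3 := by decide
        omega
      · -- n = 4 : complete graph
        refine cliqueMinorAux_of_complete H ?_ hcard
        apply adj_of_max_edges
        rw [hcard]
        have : Nat.choose 4 2 = 6 := by decide
        omega
    · push_neg at hsmall
      by_cases hdeg : ∃ v, H.degree v ≤ 1
      · -- delete a vertex of degree ≤ 1
        obtain ⟨v, hv⟩ := hdeg
        have hcard' : Fintype.card ({w : A | w ≠ v} : Set A) = n - 1 := by
          rw [card_coe_setOf_ne, hcard]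
        have hedge' := card_edgeFinset_le_induce_compl_add_degree H v
        have h4 := IH (n - 1) (by omega) ({w : A | w ≠ v} : Set A)
          (H.induce {w : A | w ≠ v}) hcard' (by omega) (by omega)
        exact h4.of_induce
      · push_neg at hdeg
        by_cases htri : ∃ e ∈ H.edgeFinset,
            ((univ : Finset A).filter (fun z => ∀ w ∈ e, H.Adj z w)).card ≤ 1
        · obtain ⟨e, he, hte⟩ := htri
          revert he hte
          induction e using Sym2.ind with
          | _ x y =>
            intro he hte
            have hxy : H.Adj x y := by rwa [mem_edgeFinset, mem_edgeSet] at he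
            have hcon := card_edgeFinset_le_contract H hxy
              ((univ : Finset A).filter (fun z => ∀ w ∈ s(x, y), H.Adj z w))
              (fun z hxz hyz => by
                rw [Finset.mem_filter]
                refine ⟨Finset.mem_univ _, fun w hw => ?_⟩
                rcases Sym2.mem_iff.mp hw with rfl | rfl
                · exact hxz.symm
                · exact hyz.symm)
            have hcard' : Fintype.card {w : A // w ≠ y} = n - 1 := by
              rw [card_subtype_ne, hcard]
            have h4 := IH (n - 1) (by omega) {w : A // w ≠ y}
              (contractE H x y) hcard' (by omega) (by omega)
            exact CliqueMinorAux.of_contract hxy h4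
        · push_neg at htri
          -- every vertex has degree ≥ 2, every edge has ≥ 2 triangles
          haveI hne : Nonempty A := Fintype.card_pos_iff.mp (by omega)
          set v := Classical.arbitrary A with hv
          set s : Set A := H.neighborSet v with hs
          have hvadj : ∀ u ∈ s, H.Adj v u := fun u hu => hu
          haveI : Nonempty s := by
            have : 0 < H.degree v := by have := hdeg v; omega
            obtain ⟨w, hw⟩ := (H.degree_pos_iff_exists_adj v).mp this
            exact ⟨⟨w, hw⟩⟩
          have hmindeg : ∀ w : s, 2 ≤ (H.induce s).degree w := by
            rintro ⟨u, hu⟩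
            have huadj : H.Adj v u := hu
            have hemem : s(v, u) ∈ H.edgeFinset := by
              rw [mem_edgeFinset, mem_edgeSet]
              exact huadj
            have h2t := htri s(v, u) hemem
            obtain ⟨z1, hz1, z2, hz2, hzne⟩ :=
              Finset.one_lt_card.mp (lt_of_lt_of_le one_lt_two h2t)
            rw [Finset.mem_filter] at hz1 hz2
            have hz1v : H.Adj z1 v := hz1.2 v (by rw [Sym2.mem_iff]; left; rfl)
            have hz1u : H.Adj z1 u := hz1.2 u (by rw [Sym2.mem_iff]; right; rfl)
            have hz2v : H.Adj z2 v := hz2.2 v (by rw [Sym2.mem_iff]; left; rfl)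
            have hz2u : H.Adj z2 u := hz2.2 u (by rw [Sym2.mem_iff]; right; rfl)
            have hz1s : z1 ∈ s := hz1v.symm
            have hz2s : z2 ∈ s := hz2v.symm
            show 1 < ((H.induce s).neighborFinset ⟨u, hu⟩).card
            refine Finset.one_lt_card.mpr ⟨⟨z1, hz1s⟩, ?_, ⟨z2, hz2s⟩, ?_, ?_⟩
            · rw [mem_neighborFinset]
              exact (by exact hz1u.symm : (H.induce s).Adj ⟨u, hu⟩ ⟨z1, hz1s⟩)
            · rw [mem_neighborFinset]
              exact (by exact hz2u.symm : (H.induce s).Adj ⟨u, hu⟩ ⟨z2, hz2s⟩)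
            · exact fun hcon => hzne (congrArg Subtype.val hcon)
          obtain ⟨u0, c, hc⟩ := exists_cycle_of_min_degree_two (H.induce s) hmindeg
          have h3 : CliqueMinorAux (H.induce s) 3 := cliqueMinor3_of_cycle (H.induce s) hc
          exact h3.apex hvadj

theorem auxK5 (n : ℕ) :
    ∀ (A : Type u) [Fintype A] [DecidableEq A] (G : SimpleGraph A) [DecidableRel G.Adj],
      Fintype.card A = n → 3 ≤ n → 3 * n ≤ G.edgeFinset.card + 5 → CliqueMinorAux G 5 := by
  induction n using Nat.strong_induction_on with
  | _ n IH =>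
    intro A _ _ G _ hcard hn3 hedge
    classical
    have hmax : G.edgeFinset.card ≤ n.choose 2 := by
      rw [← hcard]
      exact G.card_edgeFinset_le_card_choose_two
    by_cases hsmall : n ≤ 5
    · interval_cases n
      · have hch : Nat.choose 3 2 = 3 := by decide
        omega
      · have hch : Nat.choose 4 2 = 6 := by decide
        omega
      · -- n = 5 : complete graph
        refine cliqueMinorAux_of_complete G ?_ hcard
        apply adj_of_max_edges
        rw [hcard]
        have : Nat.choose 5 2 = 10 := by decide
        omega
    · push_neg at hsmall
      -- trim G to a subgraph H with exactly 3n - 5 edges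
      have hm : 3 * n - 5 ≤ G.edgeFinset.card := by omega
      obtain ⟨F, hFsub, hFcard⟩ := Finset.exists_subset_card_eq
        (show G.edgeFinset.card - (3 * n - 5) ≤ G.edgeFinset.card by omega)
      set H := G.deleteEdges (↑F) with hHdef
      have hHle : H ≤ G := G.deleteEdges_le _
      have heH : H.edgeFinset.card = 3 * n - 5 := by
        have h1 : (G.deleteEdges (↑F)).edgeFinset.card = G.edgeFinset.card - F.card := by
          rw [edgeFinset_deleteEdges, Finset.card_sdiff_of_subset hFsub]
        rw [hFcard] at h1
        have h2 : H.edgeFinset.card = (G.deleteEdges (↑F)).edgeFinset.card := by convert rfl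
        omega
      have hH5 : CliqueMinorAux H 5 := by
        by_cases hdeg : ∃ v, H.degree v ≤ 2
        · -- delete a vertex of degree ≤ 2
          obtain ⟨v, hv⟩ := hdeg
          have hcard' : Fintype.card ({w : A | w ≠ v} : Set A) = n - 1 := by
            rw [card_coe_setOf_ne, hcard]
          have hedge' := card_edgeFinset_le_induce_compl_add_degree H v
          have h5 := IH (n - 1) (by omega) ({w : A | w ≠ v} : Set A)
            (H.induce {w : A | w ≠ v}) hcard' (by omega) (by omega)
          exact h5.of_induce
        · push_neg at hdeg
          by_cases htri : ∃ e ∈ H.edgeFinset,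
              ((univ : Finset A).filter (fun z => ∀ w ∈ e, H.Adj z w)).card ≤ 2
          · obtain ⟨e, he, hte⟩ := htri
            revert he hte
            induction e using Sym2.ind with
            | _ x y =>
              intro he hte
              have hxy : H.Adj x y := by rwa [mem_edgeFinset, mem_edgeSet] at he
              have hcon := card_edgeFinset_le_contract H hxy
                ((univ : Finset A).filter (fun z => ∀ w ∈ s(x, y), H.Adj z w))
                (fun z hxz hyz => by
                  rw [Finset.mem_filter]
                  refine ⟨Finset.mem_univ _, fun w hw => ?_⟩
                  rcases Sym2.mem_iff.mp hw with rfl | rfl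
                  · exact hxz.symm
                  · exact hyz.symm)
              have hcard' : Fintype.card {w : A // w ≠ y} = n - 1 := by
                rw [card_subtype_ne, hcard]
              have h5 := IH (n - 1) (by omega) {w : A // w ≠ y}
                (contractE H x y) hcard' (by omega) (by omega)
              exact CliqueMinorAux.of_contract hxy h5
          · push_neg at htri
            by_cases hnb : ∃ v : A, 2 * H.degree v ≤
                (H.edgeFinset.filter (fun e => ∀ w ∈ e, H.Adj v w)).card + 2
            · -- dense neighborhood: K4 minor inside N(v), plus apex v
              obtain ⟨v, hnbv⟩ := hnb
              set s : Set A := H.neighborSet v with hsdef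
              have hcards : Fintype.card s = H.degree v := H.card_neighborSet_eq_degree v
              have hfilter : (H.edgeFinset.filter (fun e => ∀ w ∈ e, H.Adj v w)).card ≤
                  (H.induce s).edgeFinset.card := by
                apply card_filter_le_card_edgeFinset_induce
                intro a b hab hp
                exact ⟨hp a (by rw [Sym2.mem_iff]; left; rfl),
                  hp b (by rw [Sym2.mem_iff]; right; rfl)⟩
              have h4 := auxK4 (H.degree v) s (H.induce s) hcards
                (by have := hdeg v; omega) (by omega)
              exact h4.apex (fun u hu => hu)
            · push_neg at hnb
              exfalso
              have hcomm := sum_card_filter_comm (univ : Finset A) H.edgeFinset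
                (fun v e => ∀ w ∈ e, H.Adj v w)
              have hlow : 3 * H.edgeFinset.card ≤
                  ∑ e ∈ H.edgeFinset,
                    ((univ : Finset A).filter (fun z => ∀ w ∈ e, H.Adj z w)).card := by
                calc 3 * H.edgeFinset.card = ∑ _e ∈ H.edgeFinset, 3 := by
                      rw [Finset.sum_const, smul_eq_mul, mul_comm]
                  _ ≤ _ := Finset.sum_le_sum (fun e he => by have := htri e he; omega)
              have hup : (∑ v : A,
                  (H.edgeFinset.filter (fun e => ∀ w ∈ e, H.Adj v w)).card) + 3 * n ≤
                  4 * H.edgeFinset.card := by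
                calc (∑ v : A, (H.edgeFinset.filter (fun e => ∀ w ∈ e, H.Adj v w)).card) + 3 * n
                    = ∑ v : A,
                      ((H.edgeFinset.filter (fun e => ∀ w ∈ e, H.Adj v w)).card + 3) := by
                      rw [Finset.sum_add_distrib, Finset.sum_const, Finset.card_univ, hcard,
                        smul_eq_mul]
                      omega
                  _ ≤ ∑ v : A, 2 * H.degree v :=
                      Finset.sum_le_sum (fun v _ => by have := hnb v; omega)
                  _ = 2 * ∑ v : A, H.degree v := by rw [Finset.mul_sum]
                  _ = 4 * H.edgeFinset.card := by
                      rw [H.sum_degrees_eq_twice_card_edges]; ring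
              omega
      exact hH5.mono hHle

end MaderAux

/-- Mader: every finite simple `K₅`-minor free graph on `n ≥ 3` vertices has at most
`3n - 6` edges. -/
theorem k5_minor_free_edge_bound [Fintype V] [DecidableEq V] (G : SimpleGraph V)
    [DecidableRel G.Adj] (hK5 : ¬ G.HasK5Minor) (hn : 3 ≤ Fintype.card V) :
    G.edgeFinset.card ≤ 3 * Fintype.card V - 6 := by
  by_contra hcon
  push_neg at hcon
  have h5 := auxK5 (Fintype.card V) V G rfl hn (by omega)
  obtain ⟨S, h1, h2, h3, h4⟩ := h5
  exact hK5 ⟨S, h1, h2, h3, h4⟩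
end
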